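/- arXiv:0809.4874 — 10 statements merged into one kernel-verified Lean document; each statement's English description precedes it below -/
import Mathlib

section
/- Let p, q be positive integers and let V, U be complex p×q matrices with ‖V‖ < 1 and ‖U‖ ≤ 1. Then the matrix I_q − V*U is invertible, so 𝓕_V(U) is defined, and ‖𝓕_V(U)‖ ≤ 1. -/
open scoped Matrix.Norms.L2Operator ComplexOrder
open Matrix

/-- The positive semidefinite square root of a positive semidefinite matrix,
extended by `0` to all matrices. -/
noncomputable def matSqrt {n : Type*} [Fintype n] [DecidableEq n] (M : Matrix n n ℂ) :
    Matrix n n ℂ :=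
  letI := Classical.dec M.PosSemidef
  if h : M.PosSemidef then
    (h.1.eigenvectorUnitary : Matrix n n ℂ) * diagonal ((↑) ∘ (√·) ∘ h.1.eigenvalues) *
      (star h.1.eigenvectorUnitary : Matrix n n ℂ)
  else 0

/-- The linear fractional transformation
`𝓕_V(U) = V − (I − V V*)^{1/2} U (I − V* U)⁻¹ (I − V* V)^{1/2}`. -/
noncomputable def lft {p q : ℕ} (V U : Matrix (Fin p) (Fin q) ℂ) : Matrix (Fin p) (Fin q) ℂ :=
  V - matSqrt (1 - V * Vᴴ) * U * (1 - Vᴴ * U)⁻¹ * matSqrt (1 - Vᴴ * V)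

open Polynomial

section helpers

variable {n : Type*} [Fintype n] [DecidableEq n]

private lemma matConj_pow (u D : Matrix n n ℂ) (h1 : u * star u = 1) (h2 : star u * u = 1) (k : ℕ) :
    (u * D * star u) ^ k = u * D ^ k * star u := by
  induction k with
  | zero => simp [h1]
  | succ k ih =>
      rw [pow_succ, pow_succ, ih]
      calc u * D ^ k * star u * (u * D * star u)
          = u * D ^ k * (star u * u) * D * star u := by noncomm_ring
        _ = u * (D ^ k * D) * star u := by rw [h2]; noncomm_ring

private lemma matAeval_conj (u D : Matrix n n ℂ) (h1 : u * star u = 1) (h2 : star u * u = 1)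
    (f : ℂ[X]) : aeval (u * D * star u) f = u * aeval D f * star u := by
  induction f using Polynomial.induction_on' with
  | add p q hp hq => rw [map_add, map_add, hp, hq]; noncomm_ring
  | monomial k a =>
      rw [aeval_monomial, aeval_monomial, matConj_pow u D h1 h2 k,
        Algebra.algebraMap_eq_smul_one]
      simp only [smul_mul_assoc, one_mul, Matrix.mul_smul, Matrix.smul_mul]

private lemma matAeval_diagonal (d : n → ℂ) (f : ℂ[X]) :
    aeval (diagonal d) f = diagonal (fun i => eval (d i) f) := by
  rw [show (diagonal d) = Matrix.diagonalAlgHom (n := n) (α := ℂ) ℂ d from rfl,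
    Polynomial.aeval_algHom_apply]
  show diagonal (aeval d f) = _
  rw [Matrix.diagonal_eq_diagonal_iff]
  intro i
  simp [Polynomial.aeval_fn_apply]

/-- The positive semidefinite square root (as in the older Mathlib). -/
noncomputable def Matrix.PosSemidef.sqrt {M : Matrix n n ℂ} (hM : M.PosSemidef) : Matrix n n ℂ :=
  (hM.1.eigenvectorUnitary : Matrix n n ℂ) * diagonal (RCLike.ofReal (K := ℂ) ∘ Real.sqrt ∘ hM.1.eigenvalues) *
    (star hM.1.eigenvectorUnitary : Matrix n n ℂ)

private lemma Matrix.PosSemidef.posSemidef_sqrt {M : Matrix n n ℂ} (hM : M.PosSemidef) :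
    hM.sqrt.PosSemidef := by
  have hD : (diagonal (RCLike.ofReal (K := ℂ) ∘ Real.sqrt ∘ hM.1.eigenvalues)).PosSemidef :=
    Matrix.PosSemidef.diagonal fun i => by
      simp only [Function.comp_apply, Pi.zero_apply]
      exact Complex.zero_le_real.mpr (Real.sqrt_nonneg _)
  have := hD.conjTranspose_mul_mul_same (star (hM.1.eigenvectorUnitary : Matrix n n ℂ))
  simpa [Matrix.PosSemidef.sqrt, Matrix.star_eq_conjTranspose] using this

private lemma Matrix.PosSemidef.sqrt_mul_self {M : Matrix n n ℂ} (hM : M.PosSemidef) :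
    hM.sqrt * hM.sqrt = M := by
  have h2 : star (hM.1.eigenvectorUnitary : Matrix n n ℂ) * (hM.1.eigenvectorUnitary : Matrix n n ℂ) = 1 :=
    Matrix.mem_unitaryGroup_iff'.mp hM.1.eigenvectorUnitary.2
  conv_rhs => rw [hM.1.spectral_theorem, Unitary.conjStarAlgAut_apply]
  have hd : diagonal (RCLike.ofReal (K := ℂ) ∘ Real.sqrt ∘ hM.1.eigenvalues) *
      diagonal (RCLike.ofReal (K := ℂ) ∘ Real.sqrt ∘ hM.1.eigenvalues)
      = diagonal (RCLike.ofReal (K := ℂ) ∘ hM.1.eigenvalues) := by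
    rw [diagonal_mul_diagonal]
    congr 1
    funext i
    simp only [Function.comp_apply]
    rw [← RCLike.ofReal_mul, Real.mul_self_sqrt (hM.eigenvalues_nonneg i)]
  simp only [Matrix.PosSemidef.sqrt, Unitary.coe_star]
  calc _ = (hM.1.eigenvectorUnitary : Matrix n n ℂ)
        * (diagonal (RCLike.ofReal (K := ℂ) ∘ Real.sqrt ∘ hM.1.eigenvalues)
          * (star (hM.1.eigenvectorUnitary : Matrix n n ℂ) * (hM.1.eigenvectorUnitary : Matrix n n ℂ))
          * diagonal (RCLike.ofReal (K := ℂ) ∘ Real.sqrt ∘ hM.1.eigenvalues))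
        * star (hM.1.eigenvectorUnitary : Matrix n n ℂ) := by simp only [Matrix.mul_assoc]
    _ = _ := by rw [h2, Matrix.mul_one, hd]

/-- A polynomial agreeing with `Real.sqrt` on the eigenvalues computes the PSD square root. -/
private lemma sqrt_eq_aeval {M : Matrix n n ℂ} (hM : M.PosSemidef) (g : Polynomial ℝ)
    (hg : ∀ i, g.eval (hM.1.eigenvalues i) = Real.sqrt (hM.1.eigenvalues i)) :
    aeval M (g.map (algebraMap ℝ ℂ)) = hM.sqrt := by
  have h1 : (hM.1.eigenvectorUnitary : Matrix n n ℂ) * star (hM.1.eigenvectorUnitary : Matrix n n ℂ) = 1 :=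
    Matrix.mem_unitaryGroup_iff.mp hM.1.eigenvectorUnitary.2
  have h2 : star (hM.1.eigenvectorUnitary : Matrix n n ℂ) * (hM.1.eigenvectorUnitary : Matrix n n ℂ) = 1 :=
    Matrix.mem_unitaryGroup_iff'.mp hM.1.eigenvectorUnitary.2
  conv_lhs => rw [hM.1.spectral_theorem, Unitary.conjStarAlgAut_apply]
  rw [matAeval_conj _ _ h1 h2, matAeval_diagonal]
  rw [Matrix.PosSemidef.sqrt]
  congr 2
  rw [Matrix.diagonal_eq_diagonal_iff]
  intro i
  simp only [Function.comp_apply]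
  rw [Polynomial.eval_map, ← Polynomial.aeval_def,
    show (RCLike.ofReal (K := ℂ) (hM.1.eigenvalues i)) = algebraMap ℝ ℂ (hM.1.eigenvalues i) from rfl,
    Polynomial.aeval_algebraMap_apply_eq_algebraMap_eval, hg]

end helpers

private lemma intertwine_pow {p q : ℕ} (V : Matrix (Fin p) (Fin q) ℂ)
    (A : Matrix (Fin q) (Fin q) ℂ) (B : Matrix (Fin p) (Fin p) ℂ)
    (h : V * A = B * V) (k : ℕ) : V * A ^ k = B ^ k * V := by
  induction k with
  | zero => simp
  | succ k ih =>
      rw [pow_succ, pow_succ, ← Matrix.mul_assoc, ih, Matrix.mul_assoc, h, ← Matrix.mul_assoc]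

private lemma intertwine_aeval {p q : ℕ} (V : Matrix (Fin p) (Fin q) ℂ)
    (A : Matrix (Fin q) (Fin q) ℂ) (B : Matrix (Fin p) (Fin p) ℂ)
    (h : V * A = B * V) (f : ℂ[X]) : V * aeval A f = aeval B f * V := by
  induction f using Polynomial.induction_on' with
  | add r s hr hs => rw [map_add, map_add, Matrix.mul_add, Matrix.add_mul, hr, hs]
  | monomial k a =>
      simp only [aeval_monomial, Algebra.algebraMap_eq_smul_one, smul_mul_assoc, one_mul,
        Matrix.mul_smul, Matrix.smul_mul, intertwine_pow V A B h k]

private lemma dot_eq_normsq {k : ℕ} (z : Fin k → ℂ) :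
    dotProduct (star z) z = ((‖(WithLp.equiv 2 (Fin k → ℂ)).symm z‖ ^ 2 : ℝ) : ℂ) := by
  rw [dotProduct_comm, ← EuclideanSpace.inner_toLp_toLp, inner_self_eq_norm_sq_to_K]
  norm_cast

private lemma dot_psd_expand {p q : ℕ} (V : Matrix (Fin p) (Fin q) ℂ) (x : Fin q → ℂ) :
    dotProduct (star x) ((1 - Vᴴ * V) *ᵥ x)
      = ((‖(WithLp.equiv 2 (Fin q → ℂ)).symm x‖ ^ 2
          - ‖(WithLp.equiv 2 (Fin p → ℂ)).symm (V *ᵥ x)‖ ^ 2 : ℝ) : ℂ) := by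
  rw [Matrix.sub_mulVec, Matrix.one_mulVec, dotProduct_sub, ← Matrix.mulVec_mulVec,
    Matrix.dotProduct_mulVec, ← Matrix.star_mulVec, dot_eq_normsq, dot_eq_normsq]
  push_cast
  ring

private lemma norm_mulVec_le {p q : ℕ} (V : Matrix (Fin p) (Fin q) ℂ) (x : Fin q → ℂ) :
    ‖(WithLp.equiv 2 (Fin p → ℂ)).symm (V *ᵥ x)‖
      ≤ ‖V‖ * ‖(WithLp.equiv 2 (Fin q → ℂ)).symm x‖ :=
  Matrix.l2_opNorm_mulVec V ((WithLp.equiv 2 (Fin q → ℂ)).symm x)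

private lemma psd_one_sub_conj {p q : ℕ} (V : Matrix (Fin p) (Fin q) ℂ) (h : ‖V‖ ≤ 1) :
    (1 - Vᴴ * V).PosSemidef := by
  refine Matrix.PosSemidef.of_dotProduct_mulVec_nonneg ?_ ?_
  · simp [Matrix.IsHermitian, Matrix.conjTranspose_sub, Matrix.conjTranspose_mul]
  · intro x
    rw [dot_psd_expand]
    rw [Complex.zero_le_real]
    rw [sub_nonneg]
    have h1 := norm_mulVec_le V x
    have h2 : ‖V‖ * ‖(WithLp.equiv 2 (Fin q → ℂ)).symm x‖ ≤ ‖(WithLp.equiv 2 (Fin q → ℂ)).symm x‖ := by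
      nlinarith [norm_nonneg ((WithLp.equiv 2 (Fin q → ℂ)).symm x)]
    exact pow_le_pow_left₀ (norm_nonneg _) (h1.trans h2) 2

private lemma norm_le_one_of_psd {p q : ℕ} (W : Matrix (Fin p) (Fin q) ℂ)
    (h : (1 - Wᴴ * W).PosSemidef) : ‖W‖ ≤ 1 := by
  rw [Matrix.l2_opNorm_def]
  refine ContinuousLinearMap.opNorm_le_bound _ zero_le_one fun x => ?_
  rw [one_mul]
  have happ : ((Matrix.toEuclideanLin.trans LinearMap.toContinuousLinearMap) W) x
      = (WithLp.equiv 2 (Fin p → ℂ)).symm (W *ᵥ (WithLp.equiv 2 (Fin q → ℂ) x)) := rfl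
  rw [happ]
  set x' : Fin q → ℂ := WithLp.equiv 2 (Fin q → ℂ) x with hx'
  have h2 := h.dotProduct_mulVec_nonneg x'
  rw [dot_psd_expand, Complex.zero_le_real, sub_nonneg] at h2
  have hxx : (WithLp.equiv 2 (Fin q → ℂ)).symm x' = x := rfl
  rw [hxx] at h2
  have := (pow_le_pow_iff_left₀ (norm_nonneg _) (norm_nonneg x) (two_ne_zero)).mp h2
  exact this

/-- If `‖V‖ < 1` and `‖U‖ ≤ 1`, then `I − V*U` is invertible and `‖𝓕_V(U)‖ ≤ 1`. -/
theorem lft_wellDefined_and_contractive {p q : ℕ} (hp : 0 < p) (hq : 0 < q)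
    (V U : Matrix (Fin p) (Fin q) ℂ) (hV : ‖V‖ < 1) (hU : ‖U‖ ≤ 1) :
    IsUnit (1 - Vᴴ * U) ∧ ‖lft V U‖ ≤ 1 := by
  classical
  have hV1 : ‖V‖ ≤ 1 := hV.le
  have hVH : ‖Vᴴ‖ = ‖V‖ := Matrix.l2_opNorm_conjTranspose V
  have hnorm : ‖Vᴴ * U‖ < 1 := by
    calc ‖Vᴴ * U‖ ≤ ‖Vᴴ‖ * ‖U‖ := Matrix.l2_opNorm_mul _ _
      _ ≤ ‖V‖ * 1 := by rw [hVH]; exact mul_le_mul_of_nonneg_left hU (norm_nonneg _)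
      _ < 1 := by simpa using hV
  have hQunit : IsUnit (1 - Vᴴ * U) := (Units.oneSub _ hnorm).isUnit
  refine ⟨hQunit, ?_⟩
  have hdet : IsUnit (1 - Vᴴ * U).det := (Matrix.isUnit_iff_isUnit_det _).mp hQunit
  set S := (1 - Vᴴ * U)⁻¹ with hSdef
  have hQS : (1 - Vᴴ * U) * S = 1 := Matrix.mul_nonsing_inv _ hdet
  have hQS' : Sᴴ * (1 - Uᴴ * V) = 1 := by
    have h := congrArg conjTranspose hQS
    simpa [Matrix.conjTranspose_mul, Matrix.conjTranspose_sub, Matrix.conjTranspose_one] using h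
  -- the two positive semidefinite Gram-type matrices
  have hA : (1 - Vᴴ * V).PosSemidef := psd_one_sub_conj V hV1
  have hB : (1 - V * Vᴴ).PosSemidef := by
    have h := psd_one_sub_conj Vᴴ (by rw [hVH]; exact hV1)
    simpa using h
  -- a single real polynomial computing both square roots
  set s : Finset ℝ :=
    (Finset.univ.image hA.1.eigenvalues) ∪ (Finset.univ.image hB.1.eigenvalues) with hs
  set g : Polynomial ℝ := Lagrange.interpolate s id Real.sqrt with hgdef
  have hinj : Set.InjOn id (s : Set ℝ) := Function.injective_id.injOn
  have hgA : ∀ i, g.eval (hA.1.eigenvalues i) = Real.sqrt (hA.1.eigenvalues i) := by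
    intro i
    have hmem : hA.1.eigenvalues i ∈ s := by
      refine Finset.mem_union_left _ (Finset.mem_image.mpr ⟨i, Finset.mem_univ i, rfl⟩)
    simpa [hgdef] using Lagrange.eval_interpolate_at_node (r := Real.sqrt) hinj hmem
  have hgB : ∀ i, g.eval (hB.1.eigenvalues i) = Real.sqrt (hB.1.eigenvalues i) := by
    intro i
    have hmem : hB.1.eigenvalues i ∈ s := by
      refine Finset.mem_union_right _ (Finset.mem_image.mpr ⟨i, Finset.mem_univ i, rfl⟩)
    simpa [hgdef] using Lagrange.eval_interpolate_at_node (r := Real.sqrt) hinj hmem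
  set f : Polynomial ℂ := g.map (algebraMap ℝ ℂ) with hfdef
  have hRpoly : aeval (1 - Vᴴ * V) f = hA.sqrt := sqrt_eq_aeval hA g hgA
  have hPpoly : aeval (1 - V * Vᴴ) f = hB.sqrt := sqrt_eq_aeval hB g hgB
  set R := hA.sqrt with hRdef
  set P := hB.sqrt with hPdef
  have hRH : Rᴴ = R := hA.posSemidef_sqrt.1
  have hPH : Pᴴ = P := hB.posSemidef_sqrt.1
  have hR2 : R * R = 1 - Vᴴ * V := hA.sqrt_mul_self
  have hP2 : P * P = 1 - V * Vᴴ := hB.sqrt_mul_self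
  -- the intertwining relation
  have hcomm : V * (1 - Vᴴ * V) = (1 - V * Vᴴ) * V := by
    rw [Matrix.mul_sub, Matrix.sub_mul, Matrix.mul_one, Matrix.one_mul, Matrix.mul_assoc]
  have hPV : P * V = V * R := by
    rw [← hPpoly, ← hRpoly]
    exact (intertwine_aeval V _ _ hcomm f).symm
  have hVP : Vᴴ * P = R * Vᴴ := by
    have h := congrArg conjTranspose hPV
    simpa [Matrix.conjTranspose_mul, hRH, hPH] using h
  -- basic consequences of invertibility
  have e1 : Vᴴ * U * S = S - 1 := by
    have h := hQS
    rw [Matrix.sub_mul, Matrix.one_mul] at h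
    rw [← h]
    abel
  have e2 : Sᴴ * Uᴴ * V = Sᴴ - 1 := by
    have h := hQS'
    rw [Matrix.mul_sub, Matrix.mul_one, ← Matrix.mul_assoc] at h
    rw [← h]
    abel
  -- monomial-level rewriting rules
  have a1 : Vᴴ * (P * (U * (S * R))) = R * (Vᴴ * (U * (S * R))) := by
    rw [← Matrix.mul_assoc, hVP, Matrix.mul_assoc]
  have a2 : Uᴴ * (P * V) = Uᴴ * (V * R) := by rw [hPV]
  have a3 : P * (P * (U * (S * R))) = U * (S * R) - V * (Vᴴ * (U * (S * R))) := by
    rw [← Matrix.mul_assoc, hP2, Matrix.sub_mul, Matrix.one_mul, Matrix.mul_assoc]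
  have a4 : Vᴴ * (U * (S * R)) = S * R - R := by
    rw [← Matrix.mul_assoc, ← Matrix.mul_assoc, e1, Matrix.sub_mul, Matrix.one_mul]
  have a5 : Sᴴ * (Uᴴ * (V * R)) = Sᴴ * R - R := by
    rw [← Matrix.mul_assoc, ← Matrix.mul_assoc, e2, Matrix.sub_mul, Matrix.one_mul]
  have a6 : Sᴴ * (Uᴴ * (V * (S * R))) = Sᴴ * (S * R) - S * R := by
    rw [← Matrix.mul_assoc, ← Matrix.mul_assoc, e2, Matrix.sub_mul, Matrix.one_mul]
  -- unfolding the transformation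
  have hms1 : matSqrt (1 - V * Vᴴ) = P := by
    rw [matSqrt]
    exact dif_pos hB
  have hms2 : matSqrt (1 - Vᴴ * V) = R := by
    rw [matSqrt]
    exact dif_pos hA
  have hlft : lft V U = V - P * U * S * R := by
    rw [lft, hms1, hms2, ← hSdef]
  -- the fundamental identity
  have key : 1 - (lft V U)ᴴ * lft V U = (S * R)ᴴ * ((1 - Uᴴ * U) * (S * R)) := by
    rw [hlft]
    simp only [Matrix.conjTranspose_sub, Matrix.conjTranspose_mul, hRH, hPH,
      Matrix.mul_sub, Matrix.sub_mul, Matrix.mul_assoc, Matrix.mul_one, Matrix.one_mul,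
      a1, a2, a3, a4, a5, a6, hR2]
    abel
  have hpsd : (1 - (lft V U)ᴴ * lft V U).PosSemidef := by
    rw [key, ← Matrix.mul_assoc]
    exact (psd_one_sub_conj U hU).conjTranspose_mul_mul_same (S * R)
  exact norm_le_one_of_psd _ hpsd
end

section
/- Let V, U be complex p×q matrices with ‖V‖ < 1 and ‖U‖ ≤ 1. Then I_q − V*𝓕_V(U) is invertible and 𝓕_V(𝓕_V(U)) = U; that is, 𝓕_V is an involution of the closed unit ball of p×q matrices. -/
open scoped Matrix.Norms.L2Operator ComplexOrder
open Matrix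
open scoped MatrixOrder

lemma matSqrt_eq {n : Type*} [Fintype n] [DecidableEq n] {M : Matrix n n ℂ}
    (h : M.PosSemidef) : matSqrt M = CFC.sqrt M := by
  have e : matSqrt M = (h.1.eigenvectorUnitary : Matrix n n ℂ) *
      diagonal ((↑) ∘ (√·) ∘ h.1.eigenvalues) * (star h.1.eigenvectorUnitary : Matrix n n ℂ) := by
    rw [matSqrt]; exact dif_pos h
  rw [e, CFC.sqrt_eq_cfc, cfc_nnreal_eq_real _ M, h.1.cfc_eq]
  simp [IsHermitian.cfc, Real.coe_sqrt, Real.coe_toNNReal']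
  rw [show (fun x : ℝ => √(max x 0)) ∘ h.1.eigenvalues = (fun x => √x) ∘ h.1.eigenvalues from
    funext fun i => by simp [max_eq_left (h.eigenvalues_nonneg i)]]

lemma matSqrt_mul_self {n : Type*} [Fintype n] [DecidableEq n] {M : Matrix n n ℂ}
    (h : M.PosSemidef) : matSqrt M * matSqrt M = M := by
  rw [matSqrt_eq h]; exact CFC.sqrt_mul_sqrt_self M (nonneg_iff_posSemidef.mpr h)

lemma matSqrt_herm {n : Type*} [Fintype n] [DecidableEq n] {M : Matrix n n ℂ}
    (h : M.PosSemidef) : (matSqrt M)ᴴ = matSqrt M := by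
  rw [matSqrt_eq h]; exact (nonneg_iff_posSemidef.mp (CFC.sqrt_nonneg M)).1

lemma diagonal_func_commute {n : Type*} [Fintype n] [DecidableEq n] (d : n → ℂ) (f : ℂ → ℂ)
    (Y : Matrix n n ℂ) (h : diagonal d * Y = Y * diagonal d) :
    diagonal (f ∘ d) * Y = Y * diagonal (f ∘ d) := by
  ext i j
  have h' : (diagonal d * Y) i j = (Y * diagonal d) i j := by rw [h]
  rw [diagonal_mul, mul_diagonal] at h'
  rw [diagonal_mul, mul_diagonal]
  show f (d i) * Y i j = Y i j * f (d j)
  rcases eq_or_ne (Y i j) 0 with hy | hy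
  · simp [hy]
  · have hd : d i = d j := by
      rw [mul_comm] at h'
      exact mul_left_cancel₀ hy h'
    rw [hd, mul_comm]

lemma sqrt_commute {n : Type*} [Fintype n] [DecidableEq n] {M X : Matrix n n ℂ}
    (hM : M.PosSemidef) (h : M * X = X * M) : matSqrt M * X = X * matSqrt M := by
  set U : Matrix n n ℂ := (hM.1.eigenvectorUnitary : Matrix n n ℂ) with hUdef
  have hU1 : U * star U = 1 := mem_unitaryGroup_iff.mp hM.1.eigenvectorUnitary.2
  have hU2 : star U * U = 1 := mem_unitaryGroup_iff'.mp hM.1.eigenvectorUnitary.2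
  set d : n → ℂ := RCLike.ofReal ∘ hM.1.eigenvalues with hddef
  set Y : Matrix n n ℂ := star U * X * U with hY
  have hDiag : diagonal d = star U * M * U := by
    rw [hM.1.spectral_theorem, Unitary.conjStarAlgAut_apply]
    simp only [Matrix.mul_assoc]
    rw [hU2, Matrix.mul_one, ← Matrix.mul_assoc, hU2, Matrix.one_mul]
  have hDY : diagonal d * Y = Y * diagonal d := by
    calc diagonal d * Y = (star U * M * U) * (star U * X * U) := by rw [hDiag, hY]
      _ = star U * (M * (U * star U) * X) * U := by simp only [Matrix.mul_assoc]
      _ = star U * (M * X) * U := by rw [hU1, Matrix.mul_one]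
      _ = star U * (X * M) * U := by rw [h]
      _ = star U * (X * (U * star U) * M) * U := by rw [hU1, Matrix.mul_one]
      _ = (star U * X * U) * (star U * M * U) := by simp only [Matrix.mul_assoc]
      _ = Y * diagonal d := by rw [hDiag, hY]
  set f : ℂ → ℂ := fun z => ((Real.sqrt z.re : ℝ) : ℂ) with hf
  have hfd : f ∘ d = (↑) ∘ Real.sqrt ∘ hM.1.eigenvalues := by
    funext i
    simp [hf, hddef, Function.comp]
  have hD'Y := diagonal_func_commute d f Y hDY
  rw [hfd] at hD'Y
  set D' : Matrix n n ℂ := diagonal ((↑) ∘ Real.sqrt ∘ hM.1.eigenvalues) with hD'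
  have hsq : matSqrt M = U * D' * star U := by rw [matSqrt]; exact dif_pos hM
  have e1 : U * (D' * Y) * star U = matSqrt M * X := by
    rw [hY, hsq]
    simp only [Matrix.mul_assoc]
    rw [hU1, Matrix.mul_one]
  have e2 : U * (Y * D') * star U = X * matSqrt M := by
    rw [hY, hsq]
    simp only [← Matrix.mul_assoc]
    rw [hU1, Matrix.one_mul]
  rw [← e1, ← e2, hD'Y]

lemma posSemidef_blockDiag {p q : ℕ} {M : Matrix (Fin p) (Fin p) ℂ} {N : Matrix (Fin q) (Fin q) ℂ}
    (hM : M.PosSemidef) (hN : N.PosSemidef) : (fromBlocks M 0 0 N).PosSemidef := by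
  rw [posSemidef_iff_dotProduct_mulVec]
  constructor
  · show _ᴴ = _
    rw [fromBlocks_conjTranspose, conjTranspose_zero, conjTranspose_zero, hM.1, hN.1]
  · intro x
    have hx : x = Sum.elim (x ∘ Sum.inl) (x ∘ Sum.inr) := (Sum.elim_comp_inl_inr x).symm
    rw [hx, fromBlocks_mulVec]
    have hstar : star (Sum.elim (x ∘ Sum.inl) (x ∘ Sum.inr))
        = Sum.elim (star (x ∘ Sum.inl)) (star (x ∘ Sum.inr)) := by
      funext i; cases i <;> rfl
    simp only [Sum.elim_comp_inl, Sum.elim_comp_inr, zero_mulVec, add_zero, zero_add, hstar,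
      sumElim_dotProduct_sumElim]
    exact add_nonneg (hM.dotProduct_mulVec_nonneg _) (hN.dotProduct_mulVec_nonneg _)

lemma matSqrt_intertwine {p q : ℕ} {M : Matrix (Fin p) (Fin p) ℂ} {N : Matrix (Fin q) (Fin q) ℂ}
    (hM : M.PosSemidef) (hN : N.PosSemidef) (V : Matrix (Fin p) (Fin q) ℂ)
    (h : M * V = V * N) : matSqrt M * V = V * matSqrt N := by
  set L : Matrix (Fin p ⊕ Fin q) (Fin p ⊕ Fin q) ℂ := fromBlocks (CFC.sqrt M) 0 0 (CFC.sqrt N) with hL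
  have hLpsd : L.PosSemidef := posSemidef_blockDiag (nonneg_iff_posSemidef.mp (CFC.sqrt_nonneg M))
    (nonneg_iff_posSemidef.mp (CFC.sqrt_nonneg N))
  have hbig : (fromBlocks M 0 0 N).PosSemidef := posSemidef_blockDiag hM hN
  have hL2 : L ^ 2 = fromBlocks M 0 0 N := by
    rw [pow_two, hL, fromBlocks_multiply]
    simp [CFC.sqrt_mul_sqrt_self M (nonneg_iff_posSemidef.mpr hM),
      CFC.sqrt_mul_sqrt_self N (nonneg_iff_posSemidef.mpr hN)]
  have hLs : L = CFC.sqrt (fromBlocks M 0 0 N) :=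
    (CFC.sqrt_unique (by rw [← pow_two]; exact hL2) (nonneg_iff_posSemidef.mpr hLpsd)).symm
  set T : Matrix (Fin p ⊕ Fin q) (Fin p ⊕ Fin q) ℂ := fromBlocks 0 V 0 0 with hT
  have hcomm : fromBlocks M 0 0 N * T = T * fromBlocks M 0 0 N := by
    rw [hT, fromBlocks_multiply, fromBlocks_multiply]
    simp [h]
  have hTL : CFC.sqrt (fromBlocks M 0 0 N) * T = T * CFC.sqrt (fromBlocks M 0 0 N) := by
    rw [← matSqrt_eq hbig]; exact sqrt_commute hbig hcomm
  rw [← hLs] at hTL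
  have e1 : L * T = fromBlocks 0 (CFC.sqrt M * V) 0 0 := by
    rw [hL, hT, fromBlocks_multiply]; simp
  have e2 : T * L = fromBlocks 0 (V * CFC.sqrt N) 0 0 := by
    rw [hL, hT, fromBlocks_multiply]; simp
  rw [e1, e2] at hTL
  have := congrArg Matrix.toBlocks₁₂ hTL
  rw [toBlocks_fromBlocks₁₂, toBlocks_fromBlocks₁₂] at this
  rw [matSqrt_eq hM, matSqrt_eq hN]
  exact this

lemma posDef_one_sub_conj {a b : ℕ} (W : Matrix (Fin a) (Fin b) ℂ) (hW : ‖W‖ < 1) :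
    (1 - Wᴴ * W).PosDef := by
  have key : ∀ {c : ℕ} (z : Fin c → ℂ),
      star z ⬝ᵥ z = ((‖(WithLp.equiv 2 (Fin c → ℂ)).symm z‖ : ℝ) : ℂ) ^ 2 := by
    intro c z
    rw [dotProduct_comm, ← EuclideanSpace.inner_toLp_toLp, inner_self_eq_norm_sq_to_K]
    rfl
  rw [posDef_iff_dotProduct_mulVec]
  constructor
  · show _ᴴ = _
    simp [conjTranspose_sub, conjTranspose_mul]
  · intro x hx
    have hre : star x ⬝ᵥ ((1 - Wᴴ * W) *ᵥ x)
        = ((‖(WithLp.equiv 2 (Fin b → ℂ)).symm x‖ : ℝ) : ℂ) ^ 2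
          - ((‖(WithLp.equiv 2 (Fin a → ℂ)).symm (W *ᵥ x)‖ : ℝ) : ℂ) ^ 2 := by
      rw [sub_mulVec, one_mulVec, dotProduct_sub]
      congr 1
      · exact key x
      · rw [← mulVec_mulVec, dotProduct_mulVec, ← star_mulVec]
        exact key _
    rw [hre]
    have hxn : (0 : ℝ) < ‖(WithLp.equiv 2 (Fin b → ℂ)).symm x‖ := by
      rw [norm_pos_iff]
      exact fun h0 => hx ((WithLp.equiv 2 (Fin b → ℂ)).symm.injective (by simpa using h0))
    have hb : ‖(WithLp.equiv 2 (Fin a → ℂ)).symm (W *ᵥ x)‖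
        ≤ ‖W‖ * ‖(WithLp.equiv 2 (Fin b → ℂ)).symm x‖ := W.l2_opNorm_mulVec _
    have hlt : ‖(WithLp.equiv 2 (Fin a → ℂ)).symm (W *ᵥ x)‖
        < ‖(WithLp.equiv 2 (Fin b → ℂ)).symm x‖ :=
      hb.trans_lt (by nlinarith)
    have : (0 : ℝ) < ‖(WithLp.equiv 2 (Fin b → ℂ)).symm x‖ ^ 2
        - ‖(WithLp.equiv 2 (Fin a → ℂ)).symm (W *ᵥ x)‖ ^ 2 := by
      have := sq_lt_sq' (by linarith [norm_nonneg ((WithLp.equiv 2 (Fin a → ℂ)).symm (W *ᵥ x))])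
        hlt
      linarith
    calc (0 : ℂ) = ((0 : ℝ) : ℂ) := by norm_num
      _ < _ := by
          rw [← Complex.ofReal_pow, ← Complex.ofReal_pow, ← Complex.ofReal_sub]
          exact_mod_cast this

/-- `𝓕_V` is an involution on the closed unit ball: `I − V*𝓕_V(U)` is invertible and
`𝓕_V(𝓕_V(U)) = U`. -/
theorem lft_involutive {p q : ℕ} (V U : Matrix (Fin p) (Fin q) ℂ)
    (hV : ‖V‖ < 1) (hU : ‖U‖ ≤ 1) :
    IsUnit (1 - Vᴴ * lft V U) ∧ lft V (lft V U) = U := by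
  have hVH : ‖Vᴴ‖ < 1 := by rwa [l2_opNorm_conjTranspose]
  have hB_pd : (1 - Vᴴ * V).PosDef := posDef_one_sub_conj V hV
  have hA_pd : (1 - V * Vᴴ).PosDef := by
    have := posDef_one_sub_conj Vᴴ hVH
    simpa using this
  set A : Matrix (Fin p) (Fin p) ℂ := matSqrt (1 - V * Vᴴ) with hAdef
  set B : Matrix (Fin q) (Fin q) ℂ := matSqrt (1 - Vᴴ * V) with hBdef
  set R : Matrix (Fin q) (Fin q) ℂ := 1 - Vᴴ * U with hRdef
  have hA2 : A * A = 1 - V * Vᴴ := matSqrt_mul_self hA_pd.posSemidef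
  have hB2 : B * B = 1 - Vᴴ * V := matSqrt_mul_self hB_pd.posSemidef
  have hint : A * V = V * B :=
    matSqrt_intertwine hA_pd.posSemidef hB_pd.posSemidef V
      (by rw [Matrix.sub_mul, Matrix.mul_sub, Matrix.one_mul, Matrix.mul_one, Matrix.mul_assoc])
  have hint' : Vᴴ * A = B * Vᴴ := by
    have := congrArg conjTranspose hint
    rwa [conjTranspose_mul, conjTranspose_mul, matSqrt_herm hA_pd.posSemidef,
      matSqrt_herm hB_pd.posSemidef] at this
  -- B is invertible
  have hBunit : IsUnit B := by
    rw [Matrix.isUnit_iff_isUnit_det]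
    have hd : IsUnit (B.det * B.det) := by
      rw [← Matrix.det_mul, hB2]
      exact (Matrix.isUnit_iff_isUnit_det _).mp hB_pd.isUnit
    exact isUnit_of_mul_isUnit_left hd
  have hBdet : IsUnit B.det := (Matrix.isUnit_iff_isUnit_det B).mp hBunit
  have hBB : B * B⁻¹ = 1 := Matrix.mul_nonsing_inv B hBdet
  have hBB' : B⁻¹ * B = 1 := Matrix.nonsing_inv_mul B hBdet
  -- R is invertible
  have hR : IsUnit R := by
    rw [hRdef]
    refine isUnit_one_sub_of_norm_lt_one ?_
    calc ‖Vᴴ * U‖ ≤ ‖Vᴴ‖ * ‖U‖ := l2_opNorm_mul Vᴴ U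
      _ ≤ ‖Vᴴ‖ := mul_le_of_le_one_right (norm_nonneg _) hU
      _ < 1 := hVH
  have hRdet : IsUnit R.det := (Matrix.isUnit_iff_isUnit_det R).mp hR
  have hRR : R * R⁻¹ = 1 := Matrix.mul_nonsing_inv R hRdet
  have hRR' : R⁻¹ * R = 1 := Matrix.nonsing_inv_mul R hRdet
  have hXR : 1 + Vᴴ * U * R⁻¹ = R⁻¹ := by
    have h' : R⁻¹ - Vᴴ * U * R⁻¹ = 1 := by
      have := hRR
      rw [hRdef] at this ⊢
      rw [Matrix.sub_mul, Matrix.one_mul] at this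
      exact this
    exact (sub_eq_iff_eq_add.mp h').symm
  have hlft : lft V U = V - A * U * R⁻¹ * B := rfl
  have hmove : Vᴴ * (A * U * R⁻¹ * B) = B * (Vᴴ * U * R⁻¹) * B := by
    simp only [← Matrix.mul_assoc]
    rw [hint']
  have key : 1 - Vᴴ * lft V U = B * (1 + Vᴴ * U * R⁻¹) * B := by
    rw [hlft, Matrix.mul_sub, Matrix.mul_add, Matrix.add_mul, Matrix.mul_one, hB2, ← hmove]
    abel
  have h1 : 1 - Vᴴ * lft V U = B * R⁻¹ * B := by rw [key, hXR]
  have hRinvUnit : IsUnit (R⁻¹ : Matrix (Fin q) (Fin q) ℂ) :=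
    Matrix.isUnit_nonsing_inv_iff.mpr hR
  refine ⟨h1 ▸ (hBunit.mul hRinvUnit).mul hBunit, ?_⟩
  -- compute the inverse
  have hInv3 : (B * R⁻¹ * B)⁻¹ = B⁻¹ * R * B⁻¹ := by
    rw [Matrix.mul_inv_rev, Matrix.mul_inv_rev, Matrix.nonsing_inv_nonsing_inv R hRdet]
    simp only [Matrix.mul_assoc]
  have hAFB : A * lft V U * B⁻¹ = V - (1 - V * Vᴴ) * U * R⁻¹ := by
    rw [hlft, Matrix.mul_sub, Matrix.sub_mul]
    congr 1
    · rw [hint, Matrix.mul_assoc, hBB, Matrix.mul_one]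
    · simp only [← Matrix.mul_assoc]
      rw [hA2, Matrix.mul_assoc _ B B⁻¹, hBB, Matrix.mul_one]
  have hfinal : A * lft V U * B⁻¹ * R = V - U := by
    rw [hAFB, Matrix.sub_mul, Matrix.mul_assoc _ R⁻¹ R, hRR', Matrix.mul_one, hRdef]
    simp only [Matrix.mul_sub, Matrix.sub_mul, Matrix.mul_one, Matrix.one_mul,
      ← Matrix.mul_assoc]
    abel
  have hstep : lft V (lft V U) = V - A * lft V U * (1 - Vᴴ * lft V U)⁻¹ * B := rfl
  rw [hstep, h1, hInv3]
  have hre : A * lft V U * (B⁻¹ * R * B⁻¹) * B = A * lft V U * B⁻¹ * R := by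
    simp only [Matrix.mul_assoc]
    rw [hBB', Matrix.mul_one]
  rw [hre, hfinal, sub_sub_cancel]
end

section
/- Let ψ: ℂ^{g'×g} → ℂ^{d'×d} be a completely contractive linear mapping, and set A_{jℓ} := ψ(E_{jℓ}) ∈ ℂ^{d'×d}. Then the formal block transpose of the array A = (A_{jℓ}), namely the g×g' block matrix in ℂ^{gd'×g'd} whose (ℓ,j) block equals A_{jℓ}, has operator norm at most 1. -/
open scoped Matrix.Norms.L2Operator Kronecker
open Matrix

/-- The identification of a `g'×g` array `X` of `n×n` matrices with the matrix
`Σ_{j,ℓ} X_{jℓ} ⊗ E_{jℓ} ∈ ℂ^{ng'×ng}`. -/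
noncomputable def arrayToMatrix {g' g n : ℕ} (X : Fin g' → Fin g → Matrix (Fin n) (Fin n) ℂ) :
    Matrix (Fin n × Fin g') (Fin n × Fin g) ℂ :=
  ∑ j, ∑ ℓ, X j ℓ ⊗ₖ Matrix.single j ℓ (1 : ℂ)

/-- The `n`-th ampliation `ψ_n(X) = Σ_{j,ℓ} X_{jℓ} ⊗ ψ(E_{jℓ})` of a linear map
`ψ : ℂ^{g'×g} → ℂ^{d'×d}`. -/
noncomputable def ampliation {g' g d' d : ℕ}
    (ψ : Matrix (Fin g') (Fin g) ℂ →ₗ[ℂ] Matrix (Fin d') (Fin d) ℂ) {n : ℕ}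
    (X : Fin g' → Fin g → Matrix (Fin n) (Fin n) ℂ) :
    Matrix (Fin n × Fin d') (Fin n × Fin d) ℂ :=
  ∑ j, ∑ ℓ, X j ℓ ⊗ₖ ψ (Matrix.single j ℓ (1 : ℂ))

/-- A linear map `ψ : ℂ^{g'×g} → ℂ^{d'×d}` is completely contractive if
`‖ψ_n(X)‖ ≤ ‖X‖` for all `n` and all arrays `X` of `n×n` matrices. -/
def CompletelyContractive {g' g d' d : ℕ}
    (ψ : Matrix (Fin g') (Fin g) ℂ →ₗ[ℂ] Matrix (Fin d') (Fin d) ℂ) : Prop :=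
  ∀ (n : ℕ) (X : Fin g' → Fin g → Matrix (Fin n) (Fin n) ℂ),
    ‖ampliation ψ X‖ ≤ ‖arrayToMatrix X‖

/-- A linear map `ψ : ℂ^{g'×g} → ℂ^{d'×d}` is completely isometric if
`‖ψ_n(X)‖ = ‖X‖` for all `n` and all arrays `X` of `n×n` matrices. -/
def CompletelyIsometric {g' g d' d : ℕ}
    (ψ : Matrix (Fin g') (Fin g) ℂ →ₗ[ℂ] Matrix (Fin d') (Fin d) ℂ) : Prop :=
  ∀ (n : ℕ) (X : Fin g' → Fin g → Matrix (Fin n) (Fin n) ℂ),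
    ‖ampliation ψ X‖ = ‖arrayToMatrix X‖

section Aux

variable {α β γ δ : Type*} [Fintype α] [Fintype β] [Fintype γ] [Fintype δ]
  [DecidableEq α] [DecidableEq β] [DecidableEq γ] [DecidableEq δ]

lemma aux_l2_norm_one_le : ‖(1 : Matrix α α ℂ)‖ ≤ 1 := by
  rcases isEmpty_or_nonempty α with h | h
  · have : (1 : Matrix α α ℂ) = 0 := Subsingleton.elim _ _
    rw [this, norm_zero]; exact zero_le_one
  · exact le_of_eq CStarRing.norm_one

lemma aux_embed_left (f : α → β) (hf : Function.Injective f) :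
    ‖(1 : Matrix β β ℂ).submatrix f id‖ ≤ 1 := by
  set P : Matrix α β ℂ := (1 : Matrix β β ℂ).submatrix f id with hP
  have hPP : P * Pᴴ = 1 := by
    ext a b
    simp [hP, Matrix.mul_apply, Matrix.one_apply, Matrix.conjTranspose_apply, hf.eq_iff,
      apply_ite (starRingEnd ℂ), eq_comm]
  have h2 : ‖Pᴴ‖ * ‖Pᴴ‖ ≤ 1 := by
    rw [← Matrix.l2_opNorm_conjTranspose_mul_self, Matrix.conjTranspose_conjTranspose, hPP]
    exact aux_l2_norm_one_le
  have h3 : ‖Pᴴ‖ = ‖P‖ := Matrix.l2_opNorm_conjTranspose P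
  rw [h3] at h2
  nlinarith [norm_nonneg P]

lemma aux_embed_right (f : α → β) (hf : Function.Injective f) :
    ‖(1 : Matrix β β ℂ).submatrix id f‖ ≤ 1 := by
  have h : (1 : Matrix β β ℂ).submatrix id f = ((1 : Matrix β β ℂ).submatrix f id)ᴴ := by
    ext a b
    simp [Matrix.conjTranspose_apply, Matrix.one_apply, eq_comm, apply_ite (starRingEnd ℂ)]
  rw [h, Matrix.l2_opNorm_conjTranspose]
  exact aux_embed_left f hf

lemma aux_submatrix_norm_le (M : Matrix β δ ℂ) (f : α → β) (g : γ → δ)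
    (hf : Function.Injective f) (hg : Function.Injective g) :
    ‖M.submatrix f g‖ ≤ ‖M‖ := by
  have key : M.submatrix f g =
      (1 : Matrix β β ℂ).submatrix f id * M * (1 : Matrix δ δ ℂ).submatrix id g := by
    ext a c
    simp [Matrix.mul_apply, Matrix.one_apply, ite_and]
  calc ‖M.submatrix f g‖ = ‖(1 : Matrix β β ℂ).submatrix f id * M *
        (1 : Matrix δ δ ℂ).submatrix id g‖ := by rw [key]
    _ ≤ ‖(1 : Matrix β β ℂ).submatrix f id * M‖ *
        ‖(1 : Matrix δ δ ℂ).submatrix id g‖ := Matrix.l2_opNorm_mul _ _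
    _ ≤ (‖(1 : Matrix β β ℂ).submatrix f id‖ * ‖M‖) *
        ‖(1 : Matrix δ δ ℂ).submatrix id g‖ :=
        mul_le_mul_of_nonneg_right (Matrix.l2_opNorm_mul _ _) (norm_nonneg _)
    _ ≤ (1 * ‖M‖) * 1 :=
        mul_le_mul (mul_le_mul (aux_embed_left f hf) le_rfl (norm_nonneg _) zero_le_one)
          (aux_embed_right g hg) (norm_nonneg _) (by positivity)
    _ = ‖M‖ := by ring

end Aux

/-- If `ψ : ℂ^{g'×g} → ℂ^{d'×d}` is completely contractive and `A_{jℓ} = ψ(E_{jℓ})`,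
then the formal block transpose of the array `A`, i.e. the `g×g'` block matrix whose
`(ℓ,j)` block is `A_{jℓ}`, is a contraction. -/
theorem blockTranspose_contraction_of_completelyContractive {g' g d' d : ℕ}
    (ψ : Matrix (Fin g') (Fin g) ℂ →ₗ[ℂ] Matrix (Fin d') (Fin d) ℂ)
    (hψ : CompletelyContractive ψ) :
    ‖(Matrix.of fun (p : Fin g × Fin d') (q : Fin g' × Fin d) =>
        ψ (Matrix.single q.1 p.1 (1 : ℂ)) p.2 q.2)‖ ≤ 1 := by
  classical
  set ι : Fin g → Fin (g + g') := Fin.castAdd g' with hιdef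
  set ι' : Fin g' → Fin (g + g') := Fin.natAdd g with hι'def
  have hι : Function.Injective ι := Fin.castAdd_injective g g'
  have hι' : Function.Injective ι' := fun a b h => by
    simpa [hι'def, Fin.ext_iff] using h
  set X : Fin g' → Fin g → Matrix (Fin (g + g')) (Fin (g + g')) ℂ :=
    fun j ℓ => Matrix.single (ι ℓ) (ι' j) (1 : ℂ) with hX
  -- the block transpose is a submatrix of the ampliation
  have hr : Function.Injective (fun p : Fin g × Fin d' => (ι p.1, p.2)) := by
    intro a b h
    simp only [Prod.mk.injEq] at h
    exact Prod.ext (hι h.1) h.2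
  have hc : Function.Injective (fun q : Fin g' × Fin d => (ι' q.1, q.2)) := by
    intro a b h
    simp only [Prod.mk.injEq] at h
    exact Prod.ext (hι' h.1) h.2
  have hB : (Matrix.of fun (p : Fin g × Fin d') (q : Fin g' × Fin d) =>
        ψ (Matrix.single q.1 p.1 (1 : ℂ)) p.2 q.2) =
      (ampliation ψ X).submatrix (fun p : Fin g × Fin d' => (ι p.1, p.2))
        (fun q : Fin g' × Fin d => (ι' q.1, q.2)) := by
    ext ⟨ℓ, p⟩ ⟨j, q⟩
    simp [ampliation, hX, Matrix.sum_apply, Matrix.single, hι.eq_iff, hι'.eq_iff,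
      ite_and, Finset.sum_ite_eq, Finset.sum_ite_eq']
  -- arrayToMatrix X is a product of two partial isometries
  set f1 : Fin g' × Fin g → Fin (g + g') × Fin g' := fun jl => (ι jl.2, jl.1) with hf1
  set f2 : Fin g' × Fin g → Fin (g + g') × Fin g := fun jl => (ι' jl.1, jl.2) with hf2
  have hf1i : Function.Injective f1 := by
    intro a b h
    simp only [hf1, Prod.mk.injEq] at h
    exact Prod.ext h.2 (hι h.1)
  have hf2i : Function.Injective f2 := by
    intro a b h
    simp only [hf2, Prod.mk.injEq] at h
    exact Prod.ext (hι' h.1) h.2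
  have hA : arrayToMatrix X =
      (1 : Matrix (Fin (g + g') × Fin g') (Fin (g + g') × Fin g') ℂ).submatrix id f1 *
      (1 : Matrix (Fin (g + g') × Fin g) (Fin (g + g') × Fin g) ℂ).submatrix f2 id := by
    ext ⟨a, j'⟩ ⟨b, ℓ'⟩
    simp [arrayToMatrix, hX, hf1, hf2, Matrix.sum_apply, Matrix.mul_apply,
      Matrix.single, Matrix.one_apply, Prod.ext_iff, ite_and,
      Finset.sum_ite_eq, Finset.sum_ite_eq', eq_comm]
    rw [Finset.sum_eq_single ((j', ℓ') : Fin g' × Fin g)]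
    · split_ifs <;> first | rfl | exact absurd rfl (by assumption)
    · rintro ⟨x1, x2⟩ - hx
      split_ifs with c1 c2 c3 c4
      · exact absurd (Prod.ext c4.symm c2.symm) hx
      all_goals rfl
    · intro h
      exact absurd (Finset.mem_univ _) h
  have hAle : ‖arrayToMatrix X‖ ≤ 1 := by
    rw [hA]
    calc ‖_ * _‖ ≤ ‖(1 : Matrix (Fin (g + g') × Fin g') (Fin (g + g') × Fin g') ℂ).submatrix
          id f1‖ * ‖(1 : Matrix (Fin (g + g') × Fin g) (Fin (g + g') × Fin g) ℂ).submatrix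
          f2 id‖ := Matrix.l2_opNorm_mul _ _
      _ ≤ 1 * 1 := mul_le_mul (aux_embed_right f1 hf1i) (aux_embed_left f2 hf2i)
          (norm_nonneg _) zero_le_one
      _ = 1 := by ring
  calc ‖(Matrix.of fun (p : Fin g × Fin d') (q : Fin g' × Fin d) =>
        ψ (Matrix.single q.1 p.1 (1 : ℂ)) p.2 q.2)‖
      = ‖(ampliation ψ X).submatrix (fun p : Fin g × Fin d' => (ι p.1, p.2))
        (fun q : Fin g' × Fin d => (ι' q.1, q.2))‖ := by rw [hB]
    _ ≤ ‖ampliation ψ X‖ := aux_submatrix_norm_le _ _ _ hr hc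
    _ ≤ ‖arrayToMatrix X‖ := hψ _ X
    _ ≤ 1 := hAle
end

section
/- Let d' ≥ g' and d ≥ g, and suppose the linear map Σ: ℂ^{g'×g} → ℂ^{d'×d} has the block form Σ(x) = [[x, σ₁(x)], [σ₂(x), σ₃(x)]], where the upper-left g'×g block of Σ(x) equals x itself and σ₁, σ₂, σ₃ are linear maps into ℂ^{g'×(d−g)}, ℂ^{(d'−g')×g}, ℂ^{(d'−g')×(d−g)} respectively. If Σ is completely contractive, then σ₁ = 0 and σ₂ = 0. -/
open scoped Matrix.Norms.L2Operator Kronecker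
open Matrix

variable {m n : Type*} [Fintype m] [Fintype n] [DecidableEq m] [DecidableEq n]

/-- squared Euclidean norm -/
lemma euclid_sq {ι : Type*} [Fintype ι] (v : EuclideanSpace ℂ ι) :
    ‖v‖ ^ 2 = ∑ i, ‖v i‖ ^ 2 := by
  rw [EuclideanSpace.norm_eq]
  exact Real.sq_sqrt (by positivity)

/-- norm is invariant under reindexing of coordinates -/
lemma euclid_norm_comp {γ δ : Type*} [Fintype γ] [Fintype δ] (e : δ ≃ γ) (y : γ → ℂ) :
    ‖(WithLp.equiv 2 (δ → ℂ)).symm (y ∘ e)‖ = ‖(WithLp.equiv 2 (γ → ℂ)).symm y‖ := by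
  rw [EuclideanSpace.norm_eq, EuclideanSpace.norm_eq]
  congr 1
  exact Fintype.sum_equiv e _ _ (fun i => rfl)

lemma euclid_sq_elim {α β : Type*} [Fintype α] [Fintype β] (y : α → ℂ) (z : β → ℂ) :
    ‖(WithLp.equiv 2 (α ⊕ β → ℂ)).symm (Sum.elim y z)‖ ^ 2 =
      ‖(WithLp.equiv 2 (α → ℂ)).symm y‖ ^ 2 + ‖(WithLp.equiv 2 (β → ℂ)).symm z‖ ^ 2 := by
  rw [euclid_sq, euclid_sq, euclid_sq, Fintype.sum_sum_type]
  rfl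

lemma my_l2_opNorm_le (A : Matrix m n ℂ) {c : ℝ} (hc : 0 ≤ c)
    (h : ∀ y : n → ℂ, ‖(WithLp.equiv 2 (m → ℂ)).symm (A *ᵥ y)‖ ≤
      c * ‖(WithLp.equiv 2 (n → ℂ)).symm y‖) : ‖A‖ ≤ c := by
  rw [Matrix.l2_opNorm_def]
  refine ContinuousLinearMap.opNorm_le_bound _ hc fun y => ?_
  exact h ((WithLp.equiv 2 (n → ℂ)) y)


lemma my_l2_opNorm_reindex_le {m' n' : Type*} [Fintype m'] [Fintype n'] [DecidableEq m'] [DecidableEq n']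
    (e : m ≃ m') (f : n ≃ n') (M : Matrix m n ℂ) : ‖reindex e f M‖ ≤ ‖M‖ := by
  refine my_l2_opNorm_le _ (norm_nonneg M) fun y => ?_
  rw [Matrix.reindex_apply, Matrix.submatrix_mulVec_equiv]
  rw [show f.symm.symm = f from rfl]
  rw [euclid_norm_comp e.symm (M *ᵥ (y ∘ f)), ← euclid_norm_comp f y]
  simpa using Matrix.l2_opNorm_mulVec M ((WithLp.equiv 2 (n → ℂ)).symm (y ∘ f))

lemma my_l2_opNorm_reindex {m' n' : Type*} [Fintype m'] [Fintype n'] [DecidableEq m'] [DecidableEq n']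
    (e : m ≃ m') (f : n ≃ n') (M : Matrix m n ℂ) : ‖reindex e f M‖ = ‖M‖ := by
  refine le_antisymm (my_l2_opNorm_reindex_le e f M) ?_
  simpa using my_l2_opNorm_reindex_le e.symm f.symm (reindex e f M)

lemma vecMulVec_mulVec' (u : m → ℂ) (v : n → ℂ) (y : n → ℂ) :
    vecMulVec u v *ᵥ y = (v ⬝ᵥ y) • u := by
  ext p
  simp [vecMulVec_apply, mulVec, dotProduct, Finset.sum_mul, Finset.mul_sum, mul_assoc,
    mul_comm, mul_left_comm]

lemma star_dot_eq_inner (w y : n → ℂ) :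
    star w ⬝ᵥ y = (inner ℂ ((WithLp.equiv 2 (n → ℂ)).symm w) ((WithLp.equiv 2 (n → ℂ)).symm y) : ℂ) := by
  simp [dotProduct, PiLp.inner_apply, RCLike.inner_apply, mul_comm]

lemma norm_vecMulVec_le (u : m → ℂ) (w : n → ℂ) :
    ‖vecMulVec u (star w)‖ ≤
      ‖(WithLp.equiv 2 (m → ℂ)).symm u‖ * ‖(WithLp.equiv 2 (n → ℂ)).symm w‖ := by
  refine my_l2_opNorm_le _ (by positivity) fun y => ?_
  rw [vecMulVec_mulVec']
  rw [show (WithLp.equiv 2 (m → ℂ)).symm ((star w ⬝ᵥ y) • u)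
      = (star w ⬝ᵥ y) • (WithLp.equiv 2 (m → ℂ)).symm u from rfl]
  rw [norm_smul, star_dot_eq_inner]
  calc ‖(inner ℂ ((WithLp.equiv 2 (n → ℂ)).symm w) ((WithLp.equiv 2 (n → ℂ)).symm y) : ℂ)‖
        * ‖(WithLp.equiv 2 (m → ℂ)).symm u‖
      ≤ (‖(WithLp.equiv 2 (n → ℂ)).symm w‖ * ‖(WithLp.equiv 2 (n → ℂ)).symm y‖)
        * ‖(WithLp.equiv 2 (m → ℂ)).symm u‖ := by
        gcongr; exact norm_inner_le_norm _ _
    _ = _ := by ring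

lemma my_l2_opNorm_mulVec (A : Matrix m n ℂ) (y : n → ℂ) :
    ‖(WithLp.equiv 2 (m → ℂ)).symm (A *ᵥ y)‖ ≤ ‖A‖ * ‖(WithLp.equiv 2 (n → ℂ)).symm y‖ := by
  simpa using Matrix.l2_opNorm_mulVec A ((WithLp.equiv 2 (n → ℂ)).symm y)

lemma key_aux {p q p' q' P Q : Type*} [Fintype p] [Fintype q] [Fintype p'] [Fintype q']
    [Fintype P] [Fintype Q] [DecidableEq p] [DecidableEq q] [DecidableEq p'] [DecidableEq q']
    [DecidableEq P] [DecidableEq Q]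
    (e₁ : p ⊕ p' ≃ P) (e₂ : q ⊕ q' ≃ Q)
    (B : Matrix p q' ℂ) (C : Matrix p' q ℂ) (D : Matrix p' q' ℂ) (u : p → ℂ) (w : q → ℂ)
    (hn : ‖reindex e₁ e₂ (fromBlocks (vecMulVec u (star w)) B C D)‖ ≤
      ‖(WithLp.equiv 2 (p → ℂ)).symm u‖ * ‖(WithLp.equiv 2 (q → ℂ)).symm w‖) :
    C *ᵥ w = 0 := by
  set A := vecMulVec u (star w) with hA
  set M := reindex e₁ e₂ (fromBlocks A B C D) with hM
  set nu := ‖(WithLp.equiv 2 (p → ℂ)).symm u‖ with hnu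
  set nw := ‖(WithLp.equiv 2 (q → ℂ)).symm w‖ with hnw
  have hcalc : M *ᵥ ((Sum.elim w 0) ∘ ⇑e₂.symm) = (Sum.elim (A *ᵥ w) (C *ᵥ w)) ∘ ⇑e₁.symm := by
    rw [hM, Matrix.reindex_apply, Matrix.submatrix_mulVec_equiv]
    congr 1
    rw [show e₂.symm.symm = e₂ from rfl, Function.comp_assoc, Equiv.symm_comp_self,
      Function.comp_id, Matrix.fromBlocks_mulVec]
    simp
  have hmv := my_l2_opNorm_mulVec M ((Sum.elim w 0) ∘ ⇑e₂.symm)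
  rw [hcalc] at hmv
  have hwnorm : ‖(WithLp.equiv 2 (Q → ℂ)).symm ((Sum.elim w 0) ∘ ⇑e₂.symm)‖ = nw := by
    rw [euclid_norm_comp e₂.symm (Sum.elim w 0)]
    have hsq := euclid_sq_elim w (0 : q' → ℂ)
    have h0 : (WithLp.equiv 2 (q' → ℂ)).symm 0 = 0 := rfl
    rw [h0, norm_zero] at hsq
    have h1 : (0:ℝ) ≤ ‖(WithLp.equiv 2 (q ⊕ q' → ℂ)).symm (Sum.elim w 0)‖ := norm_nonneg _
    nlinarith [norm_nonneg ((WithLp.equiv 2 (q → ℂ)).symm w)]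
  rw [hwnorm] at hmv
  have hMn : ‖M‖ ≤ nu * nw := hn
  have hbound : ‖(WithLp.equiv 2 (P → ℂ)).symm ((Sum.elim (A *ᵥ w) (C *ᵥ w)) ∘ ⇑e₁.symm)‖
      ≤ nu * nw * nw := by
    refine le_trans (by exact_mod_cast hmv) ?_
    have : (0:ℝ) ≤ nw := norm_nonneg _
    nlinarith [norm_nonneg M]
  rw [euclid_norm_comp e₁.symm] at hbound
  have hAw : A *ᵥ w = ((nw:ℂ)^2) • u := by
    rw [hA, vecMulVec_mulVec', star_dot_eq_inner]
    congr 1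
    exact inner_self_eq_norm_sq_to_K _
  have hAwn : ‖(WithLp.equiv 2 (p → ℂ)).symm (A *ᵥ w)‖ = nw^2 * nu := by
    rw [hAw, show (WithLp.equiv 2 (p → ℂ)).symm (((nw:ℂ)^2) • u)
        = ((nw:ℂ)^2) • (WithLp.equiv 2 (p → ℂ)).symm u from rfl, norm_smul]
    rw [norm_pow]
    have : ‖((nw:ℝ):ℂ)‖ = nw := by
      rw [Complex.norm_real]
      exact abs_of_nonneg (norm_nonneg _)
    rw [this]
  have hsq := euclid_sq_elim (A *ᵥ w) (C *ᵥ w)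
  have hCw : ‖(WithLp.equiv 2 (p' → ℂ)).symm (C *ᵥ w)‖ = 0 := by
    have h2 : ‖(WithLp.equiv 2 (p ⊕ p' → ℂ)).symm (Sum.elim (A *ᵥ w) (C *ᵥ w))‖^2
        ≤ (nu * nw * nw)^2 := by
      apply pow_le_pow_left₀ (norm_nonneg _) hbound
    rw [hsq, hAwn] at h2
    have he : (nu * nw * nw)^2 = (nw^2 * nu)^2 := by ring
    rw [he] at h2
    have h3 : ‖(WithLp.equiv 2 (p' → ℂ)).symm (C *ᵥ w)‖^2 = 0 :=
      le_antisymm (by linarith) (sq_nonneg _)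
    exact pow_eq_zero_iff two_ne_zero |>.mp h3
  have h0 := norm_eq_zero.mp hCw
  simpa using congrArg (WithLp.equiv 2 (p' → ℂ)) h0

lemma polarize {E α : Type*} [AddCommGroup E] [Module ℂ E] [NoZeroSMulDivisors ℂ E]
    [AddCommGroup α] [Module ℂ α] (B : α → α → E)
    (hal : ∀ v v' w, B (v + v') w = B v w + B v' w)
    (har : ∀ v w w', B v (w + w') = B v w + B v w')
    (hsl : ∀ (c : ℂ) (v w : α), B (c • v) w = (starRingEnd ℂ c) • B v w)
    (hsr : ∀ (c : ℂ) (v w : α), B v (c • w) = c • B v w)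
    (hdiag : ∀ v, B v v = 0) : ∀ v w, B v w = 0 := by
  intro v w
  have key : ∀ c : ℂ, c • B v w + (starRingEnd ℂ c) • B w v = 0 := by
    intro c
    have h := hdiag (v + c • w)
    rw [hal, har, har, hsr, hsl, hsl, hsr, hdiag, hdiag] at h
    simpa using h
  have k1 := key 1
  simp at k1
  have kI := key Complex.I
  rw [Complex.conj_I, neg_smul, ← sub_eq_add_neg, ← smul_sub] at kI
  have hsub : B v w - B w v = 0 := by
    rcases smul_eq_zero.mp kI with h | h
    · exact absurd h Complex.I_ne_zero
    · exact h
  have h2 : (2 : ℂ) • B v w = 0 := by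
    have : B v w + B w v + (B v w - B w v) = 0 := by rw [k1, hsub, add_zero]
    rw [two_smul]
    linear_combination (norm := abel_nf) this
  rcases smul_eq_zero.mp h2 with h | h
  · norm_num at h
  · exact h

lemma vecMulVec_conjT (u : m → ℂ) (w : n → ℂ) :
    (vecMulVec u (star w))ᴴ = vecMulVec w (star u) := by
  ext i j
  simp [vecMulVec_apply, conjTranspose_apply, mul_comm]

lemma star_single {k : ℕ} (ℓ : Fin k) : star (Pi.single ℓ (1:ℂ) : Fin k → ℂ) = Pi.single ℓ 1 := by
  ext i
  simp [Pi.single_apply, apply_ite]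

/-- If a linear map `Σ : ℂ^{g'×g} → ℂ^{d'×d}` has block form `[[x, σ₁(x)], [σ₂(x), σ₃(x)]]`
and is completely contractive, then `σ₁ = 0` and `σ₂ = 0`. -/
theorem offDiagonal_eq_zero_of_completelyContractive {g' g d' d : ℕ}
    (h1 : g' ≤ d') (h2 : g ≤ d)
    (Sig : Matrix (Fin g') (Fin g) ℂ →ₗ[ℂ] Matrix (Fin d') (Fin d) ℂ)
    (σ₁ : Matrix (Fin g') (Fin g) ℂ →ₗ[ℂ] Matrix (Fin g') (Fin (d - g)) ℂ)
    (σ₂ : Matrix (Fin g') (Fin g) ℂ →ₗ[ℂ] Matrix (Fin (d' - g')) (Fin g) ℂ)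
    (σ₃ : Matrix (Fin g') (Fin g) ℂ →ₗ[ℂ] Matrix (Fin (d' - g')) (Fin (d - g)) ℂ)
    (hblock : ∀ x : Matrix (Fin g') (Fin g) ℂ,
      Sig x = Matrix.reindex (finSumFinEquiv.trans (finCongr (Nat.add_sub_cancel' h1)))
        (finSumFinEquiv.trans (finCongr (Nat.add_sub_cancel' h2)))
        (Matrix.fromBlocks x (σ₁ x) (σ₂ x) (σ₃ x)))
    (hcc : CompletelyContractive Sig) :
    σ₁ = 0 ∧ σ₂ = 0 := by
  classical
  -- Step 1: level-1 contractivity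
  have hS : ∀ x : Matrix (Fin g') (Fin g) ℂ, ‖Sig x‖ ≤ ‖x‖ := by
    intro x
    have hcc1 := hcc 1 (fun j ℓ => Matrix.of fun _ _ => x j ℓ)
    have hX : arrayToMatrix (fun j ℓ => Matrix.of fun _ _ => x j ℓ)
        = reindex (Equiv.uniqueProd (Fin g') (Fin 1)).symm
            (Equiv.uniqueProd (Fin g) (Fin 1)).symm x := by
      ext ⟨a, j⟩ ⟨b, ℓ⟩
      simp [arrayToMatrix, Matrix.sum_apply, Matrix.kroneckerMap_apply,
        Matrix.single, ite_and, Equiv.uniqueProd_apply]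
    have hxsum : Sig x = ∑ j, ∑ ℓ, x j ℓ • Sig (single j ℓ 1) := by
      conv_lhs => rw [matrix_eq_sum_single x]
      rw [map_sum]
      refine Finset.sum_congr rfl fun j _ => ?_
      rw [map_sum]
      refine Finset.sum_congr rfl fun ℓ _ => ?_
      rw [show single j ℓ (x j ℓ) = x j ℓ • single j ℓ 1 by
        rw [smul_single, smul_eq_mul, mul_one], _root_.map_smul]
    have hamp : ampliation Sig (fun j ℓ => Matrix.of fun _ _ => x j ℓ)
        = reindex (Equiv.uniqueProd (Fin d') (Fin 1)).symm
            (Equiv.uniqueProd (Fin d) (Fin 1)).symm (Sig x) := by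
      ext ⟨a, p⟩ ⟨b, q⟩
      rw [hxsum]
      simp [ampliation, Matrix.sum_apply, Matrix.kroneckerMap_apply,
        Equiv.uniqueProd_apply, Matrix.smul_apply, smul_eq_mul]
    rw [hX, hamp, my_l2_opNorm_reindex, my_l2_opNorm_reindex] at hcc1
    exact hcc1
  have hx_bound : ∀ (u : Fin g' → ℂ) (w : Fin g → ℂ), ‖Sig (vecMulVec u (star w))‖ ≤
      ‖(WithLp.equiv 2 (Fin g' → ℂ)).symm u‖ * ‖(WithLp.equiv 2 (Fin g → ℂ)).symm w‖ :=
    fun u w => le_trans (hS _) (norm_vecMulVec_le u w)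
  -- Step 2: the two level-1 vanishing facts
  have h2' : ∀ (u : Fin g' → ℂ) (w : Fin g → ℂ), (σ₂ (vecMulVec u (star w))) *ᵥ w = 0 := by
    intro u w
    refine key_aux (finSumFinEquiv.trans (finCongr (Nat.add_sub_cancel' h1)))
      (finSumFinEquiv.trans (finCongr (Nat.add_sub_cancel' h2)))
      (σ₁ (vecMulVec u (star w))) _ (σ₃ (vecMulVec u (star w))) u w ?_
    rw [← hblock]
    exact hx_bound u w
  have h1' : ∀ (u : Fin g' → ℂ) (w : Fin g → ℂ), ((σ₁ (vecMulVec u (star w)))ᴴ) *ᵥ u = 0 := by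
    intro u w
    refine key_aux (finSumFinEquiv.trans (finCongr (Nat.add_sub_cancel' h2)))
      (finSumFinEquiv.trans (finCongr (Nat.add_sub_cancel' h1)))
      ((σ₂ (vecMulVec u (star w)))ᴴ) _ ((σ₃ (vecMulVec u (star w)))ᴴ) w u ?_
    have heq : reindex (finSumFinEquiv.trans (finCongr (Nat.add_sub_cancel' h2)))
        (finSumFinEquiv.trans (finCongr (Nat.add_sub_cancel' h1)))
        (fromBlocks (vecMulVec w (star u)) (σ₂ (vecMulVec u (star w)))ᴴ
          (σ₁ (vecMulVec u (star w)))ᴴ (σ₃ (vecMulVec u (star w)))ᴴ)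
        = (Sig (vecMulVec u (star w)))ᴴ := by
      rw [hblock, conjTranspose_reindex, fromBlocks_conjTranspose, vecMulVec_conjT]
    rw [heq, Matrix.l2_opNorm_conjTranspose, mul_comm]
    exact hx_bound u w
  constructor
  · -- σ₁ = 0
    have hE : ∀ (j : Fin g') (ℓ : Fin g), σ₁ (single j ℓ 1) = 0 := by
      intro j ℓ
      have hB := polarize
        (B := fun v w : Fin g' → ℂ =>
          ((σ₁ (vecMulVec v (star (Pi.single ℓ 1))))ᴴ) *ᵥ w)
        (by intro v v' w
            rw [show vecMulVec (v + v') (star (Pi.single ℓ (1:ℂ))) =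
              vecMulVec v (star (Pi.single ℓ 1)) + vecMulVec v' (star (Pi.single ℓ 1)) by
                ext i k; simp [vecMulVec_apply, add_mul], map_add, conjTranspose_add, add_mulVec])
        (by intro v w w'; rw [mulVec_add])
        (by intro c v w
            rw [show vecMulVec (c • v) (star (Pi.single ℓ (1:ℂ))) =
              c • vecMulVec v (star (Pi.single ℓ 1)) by
                ext i k; simp [vecMulVec_apply, smul_eq_mul]; ring, _root_.map_smul,
              conjTranspose_smul, smul_mulVec]
            rfl)
        (by intro c v w; rw [mulVec_smul])
        (fun v => h1' v (Pi.single ℓ 1))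
      rw [← conjTranspose_eq_zero]
      ext q r
      have h0 := hB (Pi.single j 1) (Pi.single r 1)
      rw [star_single] at h0
      rw [← single_eq_single_vecMulVec_single] at h0
      have := congrFun h0 q
      simpa using this
    apply LinearMap.ext; intro x
    have hz : ∀ (j : Fin g') (ℓ : Fin g), σ₁ (single j ℓ (x j ℓ)) = 0 := by
      intro j ℓ
      rw [show single j ℓ (x j ℓ) = x j ℓ • single j ℓ 1 by
        rw [smul_single, smul_eq_mul, mul_one], _root_.map_smul, hE, smul_zero]
    conv_lhs => rw [matrix_eq_sum_single x]
    simp [map_sum, hz]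
  · -- σ₂ = 0
    have hE : ∀ (j : Fin g') (ℓ : Fin g), σ₂ (single j ℓ 1) = 0 := by
      intro j ℓ
      have hB := polarize
        (B := fun v w : Fin g → ℂ =>
          (σ₂ (vecMulVec (Pi.single j 1) (star v))) *ᵥ w)
        (by intro v v' w
            rw [show vecMulVec (Pi.single j (1:ℂ)) (star (v + v')) =
              vecMulVec (Pi.single j 1) (star v) + vecMulVec (Pi.single j 1) (star v') by
                ext i k; simp [vecMulVec_apply, mul_add], map_add, add_mulVec])
        (by intro v w w'; rw [mulVec_add])
        (by intro c v w
            rw [show vecMulVec (Pi.single j (1:ℂ)) (star (c • v)) =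
              (starRingEnd ℂ c) • vecMulVec (Pi.single j 1) (star v) by
                ext i k; simp [vecMulVec_apply, smul_eq_mul]; ring, _root_.map_smul,
              smul_mulVec])
        (by intro c v w; rw [mulVec_smul])
        (fun v => h2' (Pi.single j 1) v)
      ext r m
      have h0 := hB (Pi.single ℓ 1) (Pi.single m 1)
      rw [star_single] at h0
      rw [← single_eq_single_vecMulVec_single] at h0
      have := congrFun h0 r
      simpa using this
    apply LinearMap.ext; intro x
    have hz : ∀ (j : Fin g') (ℓ : Fin g), σ₂ (single j ℓ (x j ℓ)) = 0 := by
      intro j ℓ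
      rw [show single j ℓ (x j ℓ) = x j ℓ • single j ℓ 1 by
        rw [smul_single, smul_eq_mul, mul_one], _root_.map_smul, hE, smul_zero]
    conv_lhs => rw [matrix_eq_sum_single x]
    simp [map_sum, hz]
end

section
/- Let B_{ij} ∈ ℂ^{d×d} for 1 ≤ i, j ≤ g. Then the matrix Σ_{i,j} B_{ij} ⊗ X_i* X_j ∈ ℂ^{dN×dN} is positive semidefinite for every N ∈ ℕ and every g-tuple X = (X_1, …, X_g) of N×N complex matrices if and only if the gd×gd block matrix G = [B_{ij}]_{i,j=1}^g (with (i,j) block equal to B_{ij}) is positive semidefinite. -/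
open scoped Matrix.Norms.L2Operator ComplexOrder Kronecker
open Matrix

private lemma kronecker_conjTranspose {l m n p : Type*}
    (A : Matrix l m ℂ) (B : Matrix n p ℂ) : (A ⊗ₖ B)ᴴ = Aᴴ ⊗ₖ Bᴴ := by
  ext ⟨a, b⟩ ⟨c, d⟩
  simp [Matrix.conjTranspose_apply, Matrix.kroneckerMap_apply]

/-- Gram representation criterion: `Σ_{i,j} B_{ij} ⊗ X_i* X_j` is positive semidefinite
for every `N` and every `g`-tuple of `N×N` matrices iff the block matrix
`G = [B_{ij}]` is positive semidefinite. -/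
theorem gram_posSemidef_iff {g d : ℕ} (B : Fin g → Fin g → Matrix (Fin d) (Fin d) ℂ) :
    (∀ (N : ℕ) (X : Fin g → Matrix (Fin N) (Fin N) ℂ),
        (∑ i, ∑ j, B i j ⊗ₖ ((X i)ᴴ * X j)).PosSemidef) ↔
      (Matrix.of fun (p q : Fin g × Fin d) => B p.1 q.1 p.2 q.2).PosSemidef := by
  constructor
  · intro h
    rcases Nat.eq_zero_or_pos g with hg | hg
    · subst hg
      refine ⟨?_, ?_⟩
      · ext ⟨i, _⟩ _
        exact i.elim0
      · intro x
        rw [Subsingleton.elim x 0]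
        simp [dotProduct]
    · set c : Fin g := ⟨0, hg⟩ with hc
      have hS := h g (fun i => single c i 1)
      have hE : ∀ i' j' : Fin g,
          ((single c i' (1 : ℂ))ᴴ * single c j' 1)
            = single i' j' 1 := by
        intro i' j'
        ext m n
        simp [Matrix.mul_apply, Matrix.single, Matrix.conjTranspose_apply,
          ite_and, apply_ite (star : ℂ → ℂ)]
        split_ifs <;> rfl
      have key : (Matrix.of fun (p q : Fin g × Fin d) => B p.1 q.1 p.2 q.2)
          = (∑ i, ∑ j, B i j ⊗ₖ ((single c i (1 : ℂ))ᴴ * single c j 1)).submatrix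
              Prod.swap Prod.swap := by
        ext ⟨i, a⟩ ⟨j, b⟩
        simp only [Matrix.submatrix_apply, Prod.swap_prod_mk, Matrix.sum_apply,
          Matrix.kroneckerMap_apply, hE, Matrix.of_apply]
        simp [Matrix.single, ite_and]
      rw [key]
      exact hS.submatrix _
  · intro hG N X
    obtain ⟨A, hA⟩ : ∃ A : Matrix (Fin g × Fin d) (Fin g × Fin d) ℂ,
        (Matrix.of fun (p q : Fin g × Fin d) => B p.1 q.1 p.2 q.2) = Aᴴ * A := by
      open scoped MatrixOrder in exact CStarAlgebra.nonneg_iff_eq_star_mul_self.mp hG.nonneg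
    -- block columns of A
    set P : Fin g → Matrix (Fin g × Fin d) (Fin d) ℂ :=
      fun i => Matrix.of fun r a => A r (i, a) with hP
    have hPB : ∀ i j, B i j = (P i)ᴴ * P j := by
      intro i j
      ext a b
      have := congrFun (congrFun hA (i, a)) (j, b)
      simpa [Matrix.mul_apply, Matrix.conjTranspose_apply, hP] using this
    have key : (∑ i, ∑ j, B i j ⊗ₖ ((X i)ᴴ * X j))
        = (∑ i, P i ⊗ₖ X i)ᴴ * (∑ j, P j ⊗ₖ X j) := by
      rw [Matrix.conjTranspose_sum, Matrix.sum_mul]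
      refine Finset.sum_congr rfl fun i _ => ?_
      rw [Matrix.mul_sum]
      refine Finset.sum_congr rfl fun j _ => ?_
      rw [hPB, Matrix.mul_kronecker_mul, kronecker_conjTranspose]
    rw [key]
    exact Matrix.posSemidef_conjTranspose_mul_self _
end

section
/- Let A = [[1,0,0],[0,√2/2,0],[0,0,0],[0,0,√2/2]] ∈ ℂ^{4×3} and B = [[0,0,0],[√2/2,0,0],[0,1,0],[0,0,√2/2]] ∈ ℂ^{4×3}, and define L(X,Y) := X ⊗ A + Y ⊗ B for pairs of n×n complex matrices. Then L is a distinguished isometry (‖L(X,Y)‖ = 1 whenever X*X + Y*Y = I_n), but L is not completely isometric: for X = [[1,0],[0,0]] and Y = [[0,0],[1,0]], the operator norm of the stacked column matrix [X; Y] equals √2 while ‖L(X,Y)‖ = √(3/2) < √2. -/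
open scoped Matrix.Norms.L2Operator ComplexOrder Kronecker
open Matrix

/-- Evaluation of the truly linear pencil `L(X) = Σ_i X_i ⊗ A_i` at a `g`-tuple of
`n×n` matrices. -/
noncomputable def pencilEval {g d' d n : ℕ} (A : Fin g → Matrix (Fin d') (Fin d) ℂ)
    (X : Fin g → Matrix (Fin n) (Fin n) ℂ) : Matrix (Fin n × Fin d') (Fin n × Fin d) ℂ :=
  ∑ i, X i ⊗ₖ A i

/-- `Δ_L(X) = (Σ_i X_i* X_i) ⊗ I_d − L(X)* L(X)`. -/
noncomputable def pencilDelta {g d' d n : ℕ} (A : Fin g → Matrix (Fin d') (Fin d) ℂ)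
    (X : Fin g → Matrix (Fin n) (Fin n) ℂ) : Matrix (Fin n × Fin d) (Fin n × Fin d) ℂ :=
  (∑ i, (X i)ᴴ * X i) ⊗ₖ (1 : Matrix (Fin d) (Fin d) ℂ) - (pencilEval A X)ᴴ * pencilEval A X

/-- `L` is a distinguished isometry if `‖L(X)‖ = 1` for every tuple `X` of `n×n`
matrices with `Σ_i X_i* X_i = I`. -/
def IsDistinguishedIsometry {g d' d : ℕ} (A : Fin g → Matrix (Fin d') (Fin d) ℂ) : Prop :=
  ∀ (n : ℕ), 0 < n → ∀ X : Fin g → Matrix (Fin n) (Fin n) ℂ,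
    (∑ i, (X i)ᴴ * X i) = 1 → ‖pencilEval A X‖ = 1

/-- The column matrix `[X_1; …; X_g]` obtained by stacking a `g`-tuple of `n×n` matrices. -/
def colStack {g n : ℕ} (X : Fin g → Matrix (Fin n) (Fin n) ℂ) :
    Matrix (Fin g × Fin n) (Fin n) ℂ :=
  Matrix.of fun p c => X p.1 p.2 c

/-! ### Auxiliary lemmas -/

section Aux

set_option linter.unnecessarySeqFocus false
set_option linter.unreachableTactic false
set_option linter.unusedTactic false

lemma kron_conjT {l m p q : Type*} [Fintype l] [Fintype m] [Fintype p] [Fintype q]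
    (M : Matrix l m ℂ) (N : Matrix p q ℂ) : (M ⊗ₖ N)ᴴ = Mᴴ ⊗ₖ Nᴴ := by
  ext ⟨i, j⟩ ⟨k, l⟩
  simp [conjTranspose_apply, kroneckerMap_apply]

lemma quad_expand {n d' d : ℕ} (X0 X1 : Matrix (Fin n) (Fin n) ℂ)
    (N1 N2 : Matrix (Fin d') (Fin d) ℂ) :
    (X0 ⊗ₖ N1 + X1 ⊗ₖ N2)ᴴ * (X0 ⊗ₖ N1 + X1 ⊗ₖ N2)
      = (X0ᴴ * X0) ⊗ₖ (N1ᴴ * N1) + (X0ᴴ * X1) ⊗ₖ (N1ᴴ * N2)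
        + (X1ᴴ * X0) ⊗ₖ (N2ᴴ * N1) + (X1ᴴ * X1) ⊗ₖ (N2ᴴ * N2) := by
  rw [conjTranspose_add, kron_conjT, kron_conjT, Matrix.add_mul, Matrix.mul_add,
    Matrix.mul_add, Matrix.mul_kronecker_mul, Matrix.mul_kronecker_mul,
    Matrix.mul_kronecker_mul, Matrix.mul_kronecker_mul]
  abel

lemma kron_mulVec {m n p q : Type*} [Fintype m] [Fintype n] [Fintype p] [Fintype q]
    (M : Matrix m n ℂ) (N : Matrix p q ℂ) (v : n → ℂ) (u : q → ℂ) :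
    (M ⊗ₖ N) *ᵥ (fun pr => v pr.1 * u pr.2)
      = fun pr => (M *ᵥ v) pr.1 * (N *ᵥ u) pr.2 := by
  funext ⟨r, i⟩
  simp only [mulVec, dotProduct, kroneckerMap_apply, Fintype.sum_prod_type]
  rw [Finset.sum_mul_sum]
  exact Finset.sum_congr rfl fun c _ => Finset.sum_congr rfl fun j _ => by ring

lemma re_dot {k : Type*} [Fintype k] (u : k → ℂ) :
    (star u ⬝ᵥ u).re = ∑ i, ‖u i‖ ^ 2 := by
  simp only [dotProduct, Pi.star_apply, Complex.re_sum]
  refine Finset.sum_congr rfl fun i _ => ?_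
  rw [Complex.star_def, mul_comm, Complex.mul_conj, Complex.normSq_eq_norm_sq]
  norm_num [Complex.ofReal_re, ← Complex.ofReal_pow]

lemma dot_self_mulVec {m n : Type*} [Fintype m] [Fintype n]
    (M : Matrix m n ℂ) (v : n → ℂ) :
    star (M *ᵥ v) ⬝ᵥ (M *ᵥ v) = star v ⬝ᵥ ((Mᴴ * M) *ᵥ v) := by
  rw [star_mulVec, ← dotProduct_mulVec, mulVec_mulVec]

/-- An operator (`L²`) norm computation: if the quadratic form of `M` is bounded by
`c` times the squared norm and this bound is attained at a nonzero vector, then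
`‖M‖ = √c`. -/
lemma l2_opNorm_eq_sqrt {m n : Type*} [Fintype m] [Fintype n] [DecidableEq m] [DecidableEq n]
    (M : Matrix m n ℂ) (c : ℝ)
    (hub : ∀ v : n → ℂ, ∑ i, ‖(M *ᵥ v) i‖ ^ 2 ≤ c * ∑ j, ‖v j‖ ^ 2)
    (w : n → ℂ) (hw : w ≠ 0)
    (hweq : ∑ i, ‖(M *ᵥ w) i‖ ^ 2 = c * ∑ j, ‖w j‖ ^ 2) :
    ‖M‖ = Real.sqrt c := by
  have hwpos : 0 < ∑ j, ‖w j‖ ^ 2 := by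
    obtain ⟨j, hj⟩ := Function.ne_iff.mp hw
    exact Finset.sum_pos' (fun i _ => by positivity)
      ⟨j, Finset.mem_univ j, pow_pos (norm_pos_iff.mpr hj) 2⟩
  have hc : 0 ≤ c := by
    nlinarith [Finset.sum_nonneg (fun i (_ : i ∈ (Finset.univ : Finset m)) =>
      sq_nonneg ‖(M *ᵥ w) i‖)]
  have happ : ∀ x : EuclideanSpace ℂ n,
      ‖((Matrix.toEuclideanLin (𝕜 := ℂ) (m := m) (n := n)).trans
          LinearMap.toContinuousLinearMap M) x‖
        = Real.sqrt (∑ i, ‖(M *ᵥ (WithLp.equiv 2 (n → ℂ) x)) i‖ ^ 2) := by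
    intro x
    rw [EuclideanSpace.norm_eq]
    congr 1
  have hxnorm : ∀ x : EuclideanSpace ℂ n,
      ‖x‖ = Real.sqrt (∑ j, ‖(WithLp.equiv 2 (n → ℂ) x) j‖ ^ 2) := by
    intro x; rw [EuclideanSpace.norm_eq]; rfl
  rw [Matrix.l2_opNorm_def]
  apply le_antisymm
  · refine ContinuousLinearMap.opNorm_le_bound _ (Real.sqrt_nonneg c) fun x => ?_
    rw [happ, hxnorm, ← Real.sqrt_mul hc]
    exact Real.sqrt_le_sqrt (hub _)
  · have h := ((Matrix.toEuclideanLin (𝕜 := ℂ) (m := m) (n := n)).trans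
        LinearMap.toContinuousLinearMap M).le_opNorm ((WithLp.equiv 2 (n → ℂ)).symm w)
    rw [happ, hxnorm] at h
    simp only [Equiv.apply_symm_apply] at h
    rw [hweq, Real.sqrt_mul hc] at h
    exact (mul_le_mul_iff_of_pos_right (Real.sqrt_pos.mpr hwpos)).mp h

noncomputable abbrev MA : Matrix (Fin 4) (Fin 3) ℂ :=
  !![(1 : ℂ), 0, 0; 0, (Real.sqrt 2 / 2 : ℂ), 0; 0, 0, 0; 0, 0, (Real.sqrt 2 / 2 : ℂ)]
noncomputable abbrev MB : Matrix (Fin 4) (Fin 3) ℂ :=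
  !![(0 : ℂ), 0, 0; (Real.sqrt 2 / 2 : ℂ), 0, 0; 0, 1, 0; 0, 0, (Real.sqrt 2 / 2 : ℂ)]
noncomputable abbrev MF : Matrix (Fin 3) (Fin 3) ℂ :=
  !![(Real.sqrt 2 / 2 : ℂ), 0, 0; 0, 0, -(Real.sqrt 2 / 2 : ℂ); 0, 0, 0]
noncomputable abbrev MG : Matrix (Fin 3) (Fin 3) ℂ :=
  !![0, -(Real.sqrt 2 / 2 : ℂ), 0; 0, 0, (Real.sqrt 2 / 2 : ℂ); 0, 0, 0]

lemma hs2 : ((Real.sqrt 2 : ℝ) : ℂ) * ((Real.sqrt 2 : ℝ) : ℂ) = 2 := by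
  norm_cast
  rw [Real.mul_self_sqrt] <;> norm_num

lemma hAG : MAᴴ * MA + MGᴴ * MG = 1 := by
  ext i j
  fin_cases i <;> fin_cases j <;>
    simp [Matrix.mul_apply, Fin.sum_univ_four, Fin.sum_univ_three, conjTranspose_apply,
      Matrix.one_apply, map_div₀, Complex.conj_ofReal, Matrix.vecHead, Matrix.vecTail,
      map_ofNat] <;>
    (first | ring1 | linear_combination hs2/4 | linear_combination -(hs2/4) |
      linear_combination hs2/2 | linear_combination -(hs2/2))

lemma hBF : MBᴴ * MB + MFᴴ * MF = 1 := by
  ext i j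
  fin_cases i <;> fin_cases j <;>
    simp [Matrix.mul_apply, Fin.sum_univ_four, Fin.sum_univ_three, conjTranspose_apply,
      Matrix.one_apply, map_div₀, Complex.conj_ofReal, Matrix.vecHead, Matrix.vecTail,
      map_ofNat] <;>
    (first | ring1 | linear_combination hs2/4 | linear_combination -(hs2/4) |
      linear_combination hs2/2 | linear_combination -(hs2/2))

lemma hABGF : MAᴴ * MB + MGᴴ * MF = 0 := by
  ext i j
  fin_cases i <;> fin_cases j <;>
    simp [Matrix.mul_apply, Fin.sum_univ_four, Fin.sum_univ_three, conjTranspose_apply,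
      Matrix.one_apply, map_div₀, Complex.conj_ofReal, Matrix.vecHead, Matrix.vecTail,
      map_ofNat] <;>
    (first | ring1 | linear_combination hs2/4 | linear_combination -(hs2/4) |
      linear_combination hs2/2 | linear_combination -(hs2/2))

lemma part1 : IsDistinguishedIsometry ![MA, MB] := by
  intro n hn X hX
  have hX' : (X 0)ᴴ * X 0 + (X 1)ᴴ * X 1 = 1 := by
    simpa [Fin.sum_univ_two] using hX
  have hL : pencilEval ![MA, MB] X = X 0 ⊗ₖ MA + X 1 ⊗ₖ MB := by
    simp [pencilEval, Fin.sum_univ_two]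
  have hBAFG : MBᴴ * MA + MFᴴ * MG = 0 := by
    have := congrArg conjTranspose hABGF
    simpa [conjTranspose_add, conjTranspose_mul] using this
  set L := X 0 ⊗ₖ MA + X 1 ⊗ₖ MB with hLdef
  set C := X 1 ⊗ₖ MF + X 0 ⊗ₖ MG with hCdef
  have key : Lᴴ * L + Cᴴ * C = 1 := by
    rw [hLdef, hCdef, quad_expand, quad_expand]
    have rearr : ∀ a b c d e f g h : Matrix (Fin n × Fin 3) (Fin n × Fin 3) ℂ,
        a + b + c + d + (e + f + g + h) = (a + h) + (d + e) + (b + g) + (c + f) := by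
      intros; abel
    rw [rearr, ← Matrix.kronecker_add, ← Matrix.kronecker_add, ← Matrix.kronecker_add,
      ← Matrix.kronecker_add, hAG, hBF, hABGF, hBAFG, Matrix.kronecker_zero,
      Matrix.kronecker_zero, add_zero, add_zero, ← Matrix.add_kronecker, hX',
      Matrix.one_kronecker_one]
  have quad : ∀ v : Fin n × Fin 3 → ℂ,
      (∑ i, ‖(L *ᵥ v) i‖ ^ 2) + (∑ i, ‖(C *ᵥ v) i‖ ^ 2) = ∑ j, ‖v j‖ ^ 2 := by
    intro v
    rw [← re_dot, ← re_dot, ← re_dot v, dot_self_mulVec, dot_self_mulVec,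
      ← Complex.add_re, ← dotProduct_add, ← add_mulVec, key, one_mulVec]
  obtain ⟨u, hu0, huk⟩ : ∃ u : (Fin n → ℂ) × (Fin n → ℂ), u ≠ 0 ∧ X 1 *ᵥ u.1 = X 0 *ᵥ u.2 := by
    let f : ((Fin n → ℂ) × (Fin n → ℂ)) →ₗ[ℂ] (Fin n → ℂ) :=
      { toFun := fun u => X 1 *ᵥ u.1 - X 0 *ᵥ u.2
        map_add' := fun a b => by simp [Matrix.mulVec_add]; abel
        map_smul' := fun c a => by simp [Matrix.mulVec_smul, smul_sub] }
    have hker : LinearMap.ker f ≠ ⊥ := by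
      apply LinearMap.ker_ne_bot_of_finrank_lt (K := ℂ)
      simp only [Module.finrank_pi, Module.finrank_prod, Fintype.card_fin]
      omega
    obtain ⟨u, huf, hu0⟩ := Submodule.exists_mem_ne_zero_of_ne_bot hker
    rw [LinearMap.mem_ker] at huf
    exact ⟨u, hu0, sub_eq_zero.mp huf⟩
  set e0 : Fin 3 → ℂ := ![1, 0, 0] with he0
  set e1 : Fin 3 → ℂ := ![0, 1, 0] with he1
  set wa : Fin n × Fin 3 → ℂ := fun p => u.1 p.1 * e0 p.2 with hwa
  set wb : Fin n × Fin 3 → ℂ := fun p => u.2 p.1 * e1 p.2 with hwb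
  have hf0 : MF *ᵥ e0 = ![(Real.sqrt 2 / 2 : ℂ), 0, 0] := by
    funext i; fin_cases i <;> simp [mulVec, dotProduct, Fin.sum_univ_three, he0]
  have hf1 : MF *ᵥ e1 = 0 := by
    funext i; fin_cases i <;> simp [mulVec, dotProduct, Fin.sum_univ_three, he1]
  have hg0 : MG *ᵥ e0 = 0 := by
    funext i; fin_cases i <;> simp [mulVec, dotProduct, Fin.sum_univ_three, he0]
  have hg1 : MG *ᵥ e1 = -(MF *ᵥ e0) := by
    funext i; fin_cases i <;> simp [mulVec, dotProduct, Fin.sum_univ_three, he0, he1]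
  have hCw : C *ᵥ (wa + wb) = 0 := by
    have hsplit : C *ᵥ (wa + wb) = ((X 1 ⊗ₖ MF) *ᵥ wa + (X 1 ⊗ₖ MF) *ᵥ wb)
        + ((X 0 ⊗ₖ MG) *ᵥ wa + (X 0 ⊗ₖ MG) *ᵥ wb) := by
      rw [hCdef, Matrix.add_mulVec, Matrix.mulVec_add, Matrix.mulVec_add]
    rw [hsplit, hwa, hwb, kron_mulVec, kron_mulVec, kron_mulVec, kron_mulVec,
      hf1, hg0, hg1, huk]
    funext p
    simp
  have hwne : wa + wb ≠ 0 := by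
    intro h
    apply hu0
    have h1 : ∀ r, u.1 r = 0 := fun r => by
      have := congrFun h (r, 0); simpa [hwa, hwb, he0, he1] using this
    have h2 : ∀ r, u.2 r = 0 := fun r => by
      have := congrFun h (r, 1); simpa [hwa, hwb, he0, he1] using this
    have : u = (0, 0) := by
      refine Prod.ext ?_ ?_ <;> funext r
      · exact h1 r
      · exact h2 r
    exact this
  have hub : ∀ v : Fin n × Fin 3 → ℂ,
      ∑ i, ‖(L *ᵥ v) i‖ ^ 2 ≤ 1 * ∑ j, ‖v j‖ ^ 2 := by
    intro v
    have h := quad v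
    have h2 : 0 ≤ ∑ i, ‖(C *ᵥ v) i‖ ^ 2 :=
      Finset.sum_nonneg fun i _ => sq_nonneg _
    rw [one_mul]; linarith
  have hweq : ∑ i, ‖(L *ᵥ (wa + wb)) i‖ ^ 2 = 1 * ∑ j, ‖(wa + wb) j‖ ^ 2 := by
    have h := quad (wa + wb)
    rw [hCw] at h
    simp only [Pi.zero_apply, norm_zero] at h
    rw [one_mul]
    simpa using h
  rw [hL]
  rw [l2_opNorm_eq_sqrt L 1 hub (wa + wb) hwne hweq, Real.sqrt_one]

lemma part2 : ‖colStack ![!![(1 : ℂ), 0; 0, 0], !![(0 : ℂ), 0; 1, 0]]‖ = Real.sqrt 2 := by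
  apply l2_opNorm_eq_sqrt _ 2 ?_ ![1, 0] ?_ ?_
  · intro v
    simp [colStack, mulVec, dotProduct, Fintype.sum_prod_type, Fin.sum_univ_two]
    nlinarith [sq_nonneg ‖v 1‖, sq_nonneg ‖v 0‖]
  · intro h
    have := congrFun h 0
    simp at this
  · simp [colStack, mulVec, dotProduct, Fintype.sum_prod_type, Fin.sum_univ_two]
    norm_num

lemma part3 : ‖pencilEval
    (![!![(1 : ℂ), 0, 0; 0, (Real.sqrt 2 / 2 : ℂ), 0; 0, 0, 0; 0, 0, (Real.sqrt 2 / 2 : ℂ)],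
       !![(0 : ℂ), 0, 0; (Real.sqrt 2 / 2 : ℂ), 0, 0; 0, 1, 0; 0, 0, (Real.sqrt 2 / 2 : ℂ)]])
    (![!![(1 : ℂ), 0; 0, 0], !![(0 : ℂ), 0; 1, 0]])‖ = Real.sqrt (3 / 2) := by
  have hs : ‖((Real.sqrt 2 : ℝ) : ℂ)‖ ^ 2 = 2 := by
    rw [Complex.norm_real, Real.norm_eq_abs, sq_abs, Real.sq_sqrt] <;> norm_num
  apply l2_opNorm_eq_sqrt _ (3 / 2) ?_ (fun p => if p = (0, 0) then 1 else 0) ?_ ?_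
  · intro v
    simp only [pencilEval, Fin.sum_univ_two, Matrix.cons_val_zero, Matrix.cons_val_one,
      Matrix.head_cons]
    simp [mulVec, dotProduct, Fintype.sum_prod_type, Fin.sum_univ_two, Fin.sum_univ_three,
      Fin.sum_univ_four, kroneckerMap_apply, Matrix.add_apply, norm_mul, norm_div,
      mul_pow, div_pow, Matrix.vecHead, Matrix.vecTail]
    nlinarith [sq_nonneg ‖v (0,0)‖, sq_nonneg ‖v (0,1)‖, sq_nonneg ‖v (0,2)‖,
      sq_nonneg ‖v (1,0)‖, sq_nonneg ‖v (1,1)‖, sq_nonneg ‖v (1,2)‖, hs]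
  · intro h
    have := congrFun h (0, 0)
    simp at this
  · simp only [pencilEval, Fin.sum_univ_two, Matrix.cons_val_zero, Matrix.cons_val_one,
      Matrix.head_cons]
    simp [mulVec, dotProduct, Fintype.sum_prod_type, Fin.sum_univ_two, Fin.sum_univ_three,
      Fin.sum_univ_four, kroneckerMap_apply, Matrix.add_apply, norm_mul, norm_div,
      mul_pow, div_pow, Matrix.vecHead, Matrix.vecTail, Prod.ext_iff]
    nlinarith [hs]

end Aux

/-- The explicit pencil `L(X,Y) = X ⊗ A + Y ⊗ B` with
`A = [[1,0,0],[0,√2/2,0],[0,0,0],[0,0,√2/2]]`, `B = [[0,0,0],[√2/2,0,0],[0,1,0],[0,0,√2/2]]`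
is a distinguished isometry but not completely isometric: at
`X = [[1,0],[0,0]]`, `Y = [[0,0],[1,0]]` the stacked column has norm `√2` while
`‖L(X,Y)‖ = √(3/2) < √2`. -/
theorem distinguishedIsometry_not_completelyIsometric_example :
    IsDistinguishedIsometry
        (![!![(1 : ℂ), 0, 0; 0, (Real.sqrt 2 / 2 : ℂ), 0; 0, 0, 0; 0, 0, (Real.sqrt 2 / 2 : ℂ)],
           !![(0 : ℂ), 0, 0; (Real.sqrt 2 / 2 : ℂ), 0, 0; 0, 1, 0; 0, 0, (Real.sqrt 2 / 2 : ℂ)]]) ∧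
      ‖colStack ![!![(1 : ℂ), 0; 0, 0], !![(0 : ℂ), 0; 1, 0]]‖ = Real.sqrt 2 ∧
      ‖pencilEval
          (![!![(1 : ℂ), 0, 0; 0, (Real.sqrt 2 / 2 : ℂ), 0; 0, 0, 0; 0, 0, (Real.sqrt 2 / 2 : ℂ)],
             !![(0 : ℂ), 0, 0; (Real.sqrt 2 / 2 : ℂ), 0, 0; 0, 1, 0; 0, 0, (Real.sqrt 2 / 2 : ℂ)]])
          (![!![(1 : ℂ), 0; 0, 0], !![(0 : ℂ), 0; 1, 0]])‖ = Real.sqrt (3 / 2) ∧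
      Real.sqrt (3 / 2) < Real.sqrt 2 := by
  refine ⟨part1, part2, part3, ?_⟩
  exact Real.sqrt_lt_sqrt (by norm_num) (by norm_num)
end

section
/- (Matrix Linksnullstellensatz) Let F be the free associative ℂ-algebra on g generators x_1, …, x_g. Let P be an m×d matrix and Q an n×d matrix with entries in F. Suppose that for every k ∈ ℕ, every g-tuple X = (X_1, …, X_g) of k×k complex matrices, and every vector v ∈ ℂ^{dk}, P(X)v = 0 implies Q(X)v = 0, where P(X) ∈ ℂ^{mk×dk} denotes the block matrix obtained by applying to each entry of P the unique ℂ-algebra homomorphism F → ℂ^{k×k} sending x_i to X_i. Then there exists an n×m matrix G with entries in F such that Q = G·P (matrix product over F). -/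
open Matrix

/-- Evaluation of a matrix of noncommutative polynomials at a `g`-tuple of `k×k`
complex matrices, as a complex block matrix. -/
noncomputable def ncMatrixEval {g m d k : ℕ}
    (P : Matrix (Fin m) (Fin d) (FreeAlgebra ℂ (Fin g)))
    (X : Fin g → Matrix (Fin k) (Fin k) ℂ) :
    Matrix (Fin m × Fin k) (Fin d × Fin k) ℂ :=
  Matrix.of fun p q => (FreeAlgebra.lift ℂ X (P p.1 q.1)) p.2 q.2

namespace MLN

/-- The free algebra on `g` generators over `ℂ`. -/
abbrev FA (g : ℕ) := FreeAlgebra ℂ (Fin g)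

/-- The span of `1` together with the generators. -/
noncomputable def S (g : ℕ) : Submodule ℂ (FA g) :=
  Submodule.span ℂ (insert 1 (Set.range (FreeAlgebra.ι ℂ (X := Fin g))))

lemma one_mem_S {g : ℕ} : (1 : FA g) ∈ S g :=
  Submodule.subset_span (Set.mem_insert _ _)

lemma iota_mem_S {g : ℕ} (i : Fin g) : FreeAlgebra.ι ℂ i ∈ S g :=
  Submodule.subset_span (Set.mem_insert_of_mem _ ⟨i, rfl⟩)

lemma one_le_S {g : ℕ} : (1 : Submodule ℂ (FA g)) ≤ S g := by
  rw [Submodule.one_eq_span]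
  exact Submodule.span_le.2 (by simpa using one_mem_S)

lemma S_pow_succ_le {g : ℕ} (t : ℕ) : S g ^ t ≤ S g ^ (t + 1) := by
  rw [pow_succ]
  conv_lhs => rw [← mul_one (S g ^ t)]
  exact mul_le_mul_right one_le_S _

lemma S_pow_mono {g : ℕ} {s t : ℕ} (h : s ≤ t) : S g ^ s ≤ S g ^ t := by
  induction t with
  | zero => rw [Nat.le_zero.mp h]
  | succ t ih =>
    rcases Nat.lt_or_ge s (t+1) with hlt | hge
    · exact le_trans (ih (Nat.lt_succ_iff.mp hlt)) (S_pow_succ_le t)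
    · rw [le_antisymm h hge]

lemma exists_mem_pow {g : ℕ} (a : FA g) : ∃ t, a ∈ S g ^ t := by
  induction a using FreeAlgebra.induction with
  | grade0 r => exact ⟨0, by simpa [pow_zero] using Submodule.algebraMap_mem r⟩
  | grade1 x => exact ⟨1, by simpa [pow_one] using iota_mem_S x⟩
  | mul a b ha hb =>
    obtain ⟨t, ht⟩ := ha; obtain ⟨u, hu⟩ := hb
    exact ⟨t + u, by rw [pow_add]; exact Submodule.mul_mem_mul ht hu⟩
  | add a b ha hb =>
    obtain ⟨t, ht⟩ := ha; obtain ⟨u, hu⟩ := hb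
    exact ⟨max t u, add_mem (S_pow_mono (le_max_left _ _) ht)
      (S_pow_mono (le_max_right _ _) hu)⟩

lemma exists_uniform {g : ℕ} {ι : Type*} [Fintype ι] (f : ι → FA g) :
    ∃ t, ∀ i, f i ∈ S g ^ t := by
  choose t ht using fun i => exists_mem_pow (f i)
  classical
  exact ⟨Finset.univ.sup t, fun i =>
    S_pow_mono (Finset.le_sup (Finset.mem_univ i)) (ht i)⟩

lemma S_fg {g : ℕ} : (S g).FG := by
  rw [Submodule.fg_def]
  exact ⟨_, (Set.finite_range _).insert 1, rfl⟩

instance S_pow_findim {g t : ℕ} : FiniteDimensional ℂ (S g ^ t : Submodule ℂ (FA g)) :=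
  Module.Finite.iff_fg.mpr (S_fg.pow t)

variable {g d : ℕ}

/-- The finite-dimensional space of tuples with entries of "degree" at most `N+1`. -/
noncomputable def Wmod (g d N : ℕ) : Submodule ℂ (Fin d → FA g) :=
  Submodule.pi Set.univ fun _ : Fin d => S g ^ (N + 1)

lemma Wmod_findim (g d N : ℕ) : FiniteDimensional ℂ (Wmod g d N) := by
  classical
  obtain ⟨T, hT⟩ := (S_fg (g := g)).pow (N + 1)
  have hle : Wmod g d N ≤ Submodule.span ℂ
      (⋃ j : Fin d, (LinearMap.single ℂ (fun _ : Fin d => FA g) j) '' T) := by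
    intro w hw
    have hw' : ∀ j, w j ∈ S g ^ (N+1) := fun j => hw j (Set.mem_univ j)
    have : w = ∑ j, Pi.single j (w j) := (Finset.univ_sum_single w).symm
    rw [this]
    refine Submodule.sum_mem _ fun j _ => ?_
    have h1 : Pi.single j (w j) = LinearMap.single ℂ (fun _ : Fin d => FA g) j (w j) := rfl
    rw [h1]
    have h2 : w j ∈ Submodule.span ℂ (T : Set (FA g)) := by rw [hT]; exact hw' j
    have h3 : LinearMap.single ℂ (fun _ : Fin d => FA g) j (w j) ∈
        Submodule.map (LinearMap.single ℂ (fun _ : Fin d => FA g) j)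
          (Submodule.span ℂ (T : Set (FA g))) := Submodule.mem_map_of_mem h2
    rw [Submodule.map_span] at h3
    exact Submodule.span_mono (Set.subset_iUnion
      (fun j : Fin d => (LinearMap.single ℂ (fun _ : Fin d => FA g) j) '' (T : Set (FA g))) j) h3
  have : FiniteDimensional ℂ (Submodule.span ℂ
      (⋃ j : Fin d, (LinearMap.single ℂ (fun _ : Fin d => FA g) j) '' T)) :=
    FiniteDimensional.span_of_finite ℂ
      (Set.finite_iUnion fun j => T.finite_toSet.image _)
  exact Submodule.finiteDimensional_of_le hle

/-- Inclusion into `Wmod` from a membership certificate. -/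
noncomputable def toW {N : ℕ} (u : Fin d → FA g) (hu : ∀ j, u j ∈ S g ^ (N + 1)) :
    Wmod g d N := ⟨u, fun j _ => hu j⟩

lemma mem_of_le {N s : ℕ} (hs : s ≤ N + 1) {u : Fin d → FA g}
    (hu : ∀ j, u j ∈ S g ^ s) : ∀ j, u j ∈ S g ^ (N + 1) :=
  fun j => S_pow_mono hs (hu j)

lemma smul_mem_pow {t s : ℕ} {p : FA g} (hp : p ∈ S g ^ t) {u : Fin d → FA g}
    (hu : ∀ j, u j ∈ S g ^ s) : ∀ j, (p • u) j ∈ S g ^ (t + s) := by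
  intro j
  have : (p • u) j = p * u j := rfl
  rw [this, pow_add]
  exact Submodule.mul_mem_mul hp (hu j)

lemma smul_memW {N t s : ℕ} (hts : t + s ≤ N + 1) {p : FA g} (hp : p ∈ S g ^ t)
    {u : Fin d → FA g} (hu : ∀ j, u j ∈ S g ^ s) :
    ∀ j, (p • u) j ∈ S g ^ (N + 1) :=
  mem_of_le hts (smul_mem_pow hp hu)

/-- Key compatibility: the lifted action of low-degree polynomials on classes of
low-degree tuples is given by module multiplication. -/
lemma key_compat {V : Type} [AddCommGroup V] [Module ℂ V] (N : ℕ)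
    (σ : Fin g → Module.End ℂ V) (q : Wmod g d N →ₗ[ℂ] V)
    (hσ : ∀ (i : Fin g) (u : Fin d → FA g) (hu : ∀ j, u j ∈ S g ^ N),
      σ i (q (toW u (mem_of_le (Nat.le_succ N) hu))) =
        q (toW (FreeAlgebra.ι ℂ i • u)
          (smul_memW (t := 1) (s := N) (by omega)
            (by simpa [pow_one] using iota_mem_S i) hu))) :
    ∀ (t : ℕ) (p : FA g) (hp : p ∈ S g ^ t) (s : ℕ) (hts : t + s ≤ N + 1)
      (u : Fin d → FA g) (hu : ∀ j, u j ∈ S g ^ s),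
      FreeAlgebra.lift ℂ σ p
          (q (toW u (mem_of_le (le_trans (Nat.le_add_left s t) hts) hu))) =
        q (toW (p • u) (smul_memW hts hp hu)) := by
  intro t p hp
  induction hp using Submodule.pow_induction_on_left' with
  | algebraMap r =>
    intro s hs u hu
    have h1 : (FreeAlgebra.lift ℂ σ) (algebraMap ℂ (FA g) r) = algebraMap ℂ _ r :=
      AlgHom.commutes _ r
    have h2 : (algebraMap ℂ (FA g) r) • u = r • u := algebraMap_smul (FA g) r u
    have h3 : toW ((algebraMap ℂ (FA g) r) • u)
        (smul_memW hs (Submodule.algebraMap_mem r) hu) =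
        r • toW u (mem_of_le (le_trans (Nat.le_add_left s 0) hs) hu) := by
      apply Subtype.ext
      show (algebraMap ℂ (FA g) r) • u = r • u
      exact h2
    rw [h1, h3, _root_.map_smul]
    rfl
  | add x y i hx hy ihx ihy =>
    intro s hs u hu
    have h3 : toW ((x + y) • u) (smul_memW hs (add_mem hx hy) hu) =
        toW (x • u) (smul_memW hs hx hu) + toW (y • u) (smul_memW hs hy hu) :=
      Subtype.ext (add_smul x y u)
    rw [_root_.map_add, LinearMap.add_apply, ihx s hs u hu, ihy s hs u hu, h3,
      _root_.map_add]
  | mem_mul m hm i x hx ih =>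
    intro s hs u hu
    have hxs : i + s ≤ N + 1 := by omega
    have hxu : ∀ j, (x • u) j ∈ S g ^ (i + s) := smul_mem_pow hx hu
    have hmul : (FreeAlgebra.lift ℂ σ) (m * x) =
        (FreeAlgebra.lift ℂ σ) m * (FreeAlgebra.lift ℂ σ) x := map_mul _ _ _
    have step1 : (FreeAlgebra.lift ℂ σ) x (q (toW u (mem_of_le (by omega) hu))) =
        q (toW (x • u) (mem_of_le hxs hxu)) := ih s (by omega) u hu
    -- now handle multiplication by `m ∈ S g`
    have his : i + s ≤ N := by omega
    have key : ∀ (m' : FA g) (hm' : m' ∈ S g),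
        ∀ (w : Fin d → FA g) (hw : ∀ j, w j ∈ S g ^ (i + s)),
        (FreeAlgebra.lift ℂ σ) m' (q (toW w (mem_of_le hxs hw))) =
          q (toW (m' • w) (smul_memW (N := N) (t := 1) (s := i + s) (by omega)
            (by simpa [pow_one] using hm') hw)) := by
      intro m' hm'
      induction hm' using Submodule.span_induction with
      | mem z hz =>
        rcases hz with hz1 | hz2
        · subst hz1
          intro w hw
          have h4 : toW ((1 : FA g) • w) (smul_memW (N := N) (t := 1) (s := i + s) (by omega)
              (by simpa [pow_one] using one_mem_S) hw) = toW w (mem_of_le hxs hw) :=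
            Subtype.ext (one_smul _ w)
          rw [_root_.map_one, h4]
          rfl
        · obtain ⟨i', rfl⟩ := hz2
          intro w hw
          have hwN : ∀ j, w j ∈ S g ^ N := fun j => S_pow_mono his (hw j)
          have h5 := hσ i' w hwN
          rw [FreeAlgebra.lift_ι_apply]
          exact h5
      | zero =>
        intro w hw
        have h4 : toW ((0 : FA g) • w) (smul_memW (N := N) (t := 1) (s := i + s) (by omega)
            (by simpa [pow_one] using zero_mem (S g)) hw) = 0 :=
          Subtype.ext (zero_smul _ w)
        rw [_root_.map_zero, h4, _root_.map_zero]
        rfl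
      | add a b ha hb iha ihb =>
        intro w hw
        have h4 : toW ((a + b) • w) (smul_memW (N := N) (t := 1) (s := i + s) (by omega)
            (by simpa [pow_one] using (add_mem ha hb : a + b ∈ S g)) hw) =
            toW (a • w) (smul_memW (N := N) (t := 1) (s := i + s) (by omega)
              (by rw [pow_one]; exact ha) hw) +
            toW (b • w) (smul_memW (N := N) (t := 1) (s := i + s) (by omega)
              (by rw [pow_one]; exact hb) hw) :=
          Subtype.ext (add_smul a b w)
        rw [_root_.map_add, LinearMap.add_apply, iha w hw, ihb w hw, h4,
          _root_.map_add]
      | smul c a ha iha =>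
        intro w hw
        have h4 : toW ((c • a) • w) (smul_memW (N := N) (t := 1) (s := i + s) (by omega)
            (by simpa [pow_one] using (Submodule.smul_mem _ c ha : c • a ∈ S g)) hw) =
            c • toW (a • w) (smul_memW (N := N) (t := 1) (s := i + s) (by omega)
              (by rw [pow_one]; exact ha) hw) :=
          Subtype.ext (smul_assoc c a w)
        rw [_root_.map_smul, LinearMap.smul_apply, iha w hw, h4, _root_.map_smul]
    have step2 := key m hm (x • u) hxu
    rw [hmul]
    have h6 : ((FreeAlgebra.lift ℂ σ) m * (FreeAlgebra.lift ℂ σ) x)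
        (q (toW u (mem_of_le (by omega) hu))) =
        (FreeAlgebra.lift ℂ σ) m ((FreeAlgebra.lift ℂ σ) x
          (q (toW u (mem_of_le (by omega) hu)))) := rfl
    rw [h6, step1, step2]
    congr 1
    exact Subtype.ext (mul_smul m x u).symm

end MLN

open MLN in
/-- Existence of a good finite-dimensional representation truncated at level `N`. -/
lemma exists_good_rep {g d : ℕ} (N : ℕ) (I : Submodule (FA g) (Fin d → FA g)) :
    ∃ (k : ℕ) (X : Fin g → Matrix (Fin k) (Fin k) ℂ)
      (L : (Fin d → FA g) →ₗ[ℂ] (Fin k → ℂ)),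
      (∀ (t s : ℕ), t + s ≤ N + 1 → ∀ p ∈ S g ^ t, ∀ u : Fin d → FA g,
        (∀ j, u j ∈ S g ^ s) → (FreeAlgebra.lift ℂ X p) *ᵥ L u = L (p • u)) ∧
      (∀ u ∈ I, (∀ j, u j ∈ S g ^ (N + 1)) → L u = 0) ∧
      (∀ u : Fin d → FA g, (∀ j, u j ∈ S g ^ (N + 1)) → L u = 0 → u ∈ I) := by
  classical
  haveI := Wmod_findim g d N
  set W : Submodule ℂ (Fin d → FA g) := Wmod g d N with hW
  set K : Submodule ℂ W := (I.restrictScalars ℂ).comap W.subtype with hK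
  let V := W ⧸ K
  let q : W →ₗ[ℂ] V := K.mkQ
  -- the auxiliary space of degree ≤ N tuples
  let W' : Submodule ℂ (Fin d → FA g) := Submodule.pi Set.univ fun _ : Fin d => S g ^ N
  have hW'le : W' ≤ W := by
    intro u hu j hj
    exact S_pow_mono (Nat.le_succ N) (hu j hj)
  let incl : W' →ₗ[ℂ] W := Submodule.inclusion hW'le
  let e : W' →ₗ[ℂ] V := q.comp incl
  -- the multiplication-by-generator maps
  let smulMap : FA g → (Fin d → FA g) →ₗ[ℂ] (Fin d → FA g) := fun a =>
    DistribMulAction.toLinearMap ℂ _ a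
  have hsmulMap : ∀ (a : FA g) (u : Fin d → FA g), smulMap a u = a • u := fun a u => rfl
  have hmem : ∀ (i : Fin g) (u : W'), ∀ j, (FreeAlgebra.ι ℂ i • (u : Fin d → FA g)) j
      ∈ S g ^ (N + 1) := by
    intro i u j
    have := smul_mem_pow (t := 1) (s := N)
      (by simpa [pow_one] using iota_mem_S i) (fun j => u.2 j (Set.mem_univ j)) j
    simpa [add_comm] using this
  let μ : Fin g → W' →ₗ[ℂ] V := fun i => q.comp
    (LinearMap.codRestrict W ((smulMap (FreeAlgebra.ι ℂ i)).comp W'.subtype)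
      (fun u => by
        rw [LinearMap.comp_apply, hsmulMap]
        exact fun j _ => hmem i u j))
  -- build σ i : V →ₗ V extending μ i through e
  have hσexists : ∀ i : Fin g, ∃ σi : Module.End ℂ V, ∀ u : W', σi (e u) = μ i u := by
    intro i
    let V' := LinearMap.range e
    haveI hfree : Module.Free ℂ V' := Module.Free.of_divisionRing ℂ V'
    haveI : Module.Projective ℂ V' := Module.Projective.of_free
    obtain ⟨s', hs'⟩ := (e.rangeRestrict).exists_rightInverse_of_surjective
      (LinearMap.range_eq_top.2 e.surjective_rangeRestrict)
    obtain ⟨C, hC⟩ := Submodule.exists_isCompl V'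
    let π' := V'.linearProjOfIsCompl C hC
    refine ⟨(μ i).comp (s'.comp π'), ?_⟩
    intro u
    have h1 : π' (e u) = ⟨e u, LinearMap.mem_range_self e u⟩ :=
      Submodule.linearProjOfIsCompl_apply_left hC ⟨e u, LinearMap.mem_range_self e u⟩
    have h2 : e.rangeRestrict (s' ⟨e u, LinearMap.mem_range_self e u⟩) =
        ⟨e u, LinearMap.mem_range_self e u⟩ := by
      have := LinearMap.congr_fun hs' ⟨e u, LinearMap.mem_range_self e u⟩
      exact this
    set w : W' := s' ⟨e u, LinearMap.mem_range_self e u⟩ with hw'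
    have h3 : e w = e u := by
      have := congrArg (Subtype.val) h2
      simpa [LinearMap.rangeRestrict] using this
    -- hence w - u maps into I, so μ i w = μ i u
    have hq_eq : ∀ a b : W, ((a : Fin d → FA g) - (b : Fin d → FA g)) ∈ I →
        q a = q b := by
      intro a b hab
      have hmem' : a - b ∈ K := by
        simp only [hK, Submodule.mem_comap, Submodule.coe_subtype,
          Submodule.restrictScalars_mem]
        simpa using hab
      exact (Submodule.Quotient.eq K).mpr hmem'
    have h4 : ((incl w : W) : Fin d → FA g) - ((incl u : W) : Fin d → FA g) ∈ I := by
      have h3' : Submodule.Quotient.mk (p := K) (incl w) =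
          Submodule.Quotient.mk (p := K) (incl u) := h3
      have h6 : incl w - incl u ∈ K := (Submodule.Quotient.eq K).mp h3'
      simp only [hK, Submodule.mem_comap, Submodule.coe_subtype,
        Submodule.restrictScalars_mem] at h6
      simpa using h6
    have h7 : μ i w = μ i u := by
      have h8 : FreeAlgebra.ι ℂ i • (((incl w : W) : Fin d → FA g)
          - ((incl u : W) : Fin d → FA g)) ∈ I := Submodule.smul_mem I _ h4
      simp only [μ, LinearMap.comp_apply]
      apply hq_eq
      have hval : ∀ (z : W'), ((LinearMap.codRestrict W
          ((smulMap (FreeAlgebra.ι ℂ i)).comp W'.subtype) (fun u => by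
            rw [LinearMap.comp_apply, hsmulMap]
            exact fun j _ => hmem i u j) z : W) : Fin d → FA g)
          = FreeAlgebra.ι ℂ i • (z : Fin d → FA g) := fun z => rfl
      rw [hval w, hval u]
      rw [← smul_sub]
      exact h8
    simp only [LinearMap.comp_apply]
    rw [h1, ← hw', h7]
  choose σ hσ using hσexists
  -- basis and matrices
  haveI : FiniteDimensional ℂ V := inferInstance
  let b : Module.Basis (Fin (Module.finrank ℂ V)) ℂ V := Module.finBasis ℂ V
  -- the σ property in `key_compat` form
  have hσ' : ∀ (i : Fin g) (u : Fin d → FA g) (hu : ∀ j, u j ∈ S g ^ N),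
      σ i (q (toW u (mem_of_le (Nat.le_succ N) hu))) =
        q (toW (FreeAlgebra.ι ℂ i • u)
          (smul_memW (N := N) (t := 1) (s := N) (by omega)
            (by simpa [pow_one] using iota_mem_S i) hu)) := by
    intro i u hu
    have hu' : u ∈ W' := fun j _ => hu j
    have h1 : e ⟨u, hu'⟩ = q (toW u (mem_of_le (Nat.le_succ N) hu)) := rfl
    have h2 : μ i ⟨u, hu'⟩ = q (toW (FreeAlgebra.ι ℂ i • u)
        (smul_memW (N := N) (t := 1) (s := N) (by omega)
          (by simpa [pow_one] using iota_mem_S i) hu)) := by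
      simp only [μ, LinearMap.comp_apply]
      congr 1
    rw [← h1, hσ i ⟨u, hu'⟩, h2]
  have Akey := key_compat N σ q hσ'
  -- the global linear map L
  obtain ⟨C₂, hC₂⟩ := Submodule.exists_isCompl W
  let πW : (Fin d → FA g) →ₗ[ℂ] W := W.projectionOnto C₂ hC₂
  let L : (Fin d → FA g) →ₗ[ℂ] (Fin (Module.finrank ℂ V) → ℂ) :=
    (b.equivFun.toLinearMap.comp q).comp πW
  have hLu : ∀ (u : Fin d → FA g) (hm : ∀ j, u j ∈ S g ^ (N+1)),
      L u = ⇑(b.repr (q (toW u hm))) := by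
    intro u hm
    have h1 : πW u = toW u hm :=
      Submodule.projectionOnto_apply_left hC₂ (toW u hm)
    simp only [L, LinearMap.comp_apply, h1, LinearEquiv.coe_coe]
    exact b.equivFun_apply _
  have hXA : ∀ p : FA g, FreeAlgebra.lift ℂ (fun i => LinearMap.toMatrix b b (σ i)) p
      = LinearMap.toMatrix b b (FreeAlgebra.lift ℂ σ p) := by
    have heq : FreeAlgebra.lift ℂ (fun i => LinearMap.toMatrix b b (σ i))
        = ((LinearMap.toMatrixAlgEquiv b).toAlgHom.comp (FreeAlgebra.lift ℂ σ)) := by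
      apply FreeAlgebra.hom_ext
      funext i
      simp only [Function.comp_apply, FreeAlgebra.lift_ι_apply, AlgHom.coe_comp,
        AlgEquiv.toAlgHom_eq_coe, AlgHom.coe_coe]
      rfl
    intro p
    rw [heq]
    rfl
  refine ⟨Module.finrank ℂ V, fun i => LinearMap.toMatrix b b (σ i), L, ?_, ?_, ?_⟩
  · -- compatibility
    intro t s hts p hp u hu
    rw [hLu u (mem_of_le (by omega) hu), hLu (p • u) (smul_memW hts hp hu), hXA p,
      LinearMap.toMatrix_mulVec_repr b b]
    exact congrArg (fun z => ⇑(b.repr z)) (Akey t p hp s hts u hu)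
  · -- vanishing on I
    intro u huI hm
    rw [hLu u hm]
    have h0 : q (toW u hm) = 0 := by
      rw [Submodule.mkQ_apply, Submodule.Quotient.mk_eq_zero]
      exact huI
    rw [h0]
    simp
  · -- kernel detection
    intro u hm hL0
    rw [hLu u hm] at hL0
    have h0 : b.repr (q (toW u hm)) = 0 := DFunLike.coe_injective hL0
    have h1 : q (toW u hm) = 0 := by
      have := b.repr.map_eq_zero_iff.mp h0
      exact this
    rw [Submodule.mkQ_apply, Submodule.Quotient.mk_eq_zero] at h1
    exact h1

open MLN in
/-- Matrix Linksnullstellensatz: if `P(X)v = 0` implies `Q(X)v = 0` for all matrix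
tuples `X` and vectors `v`, then `Q = G·P` for some matrix `G` of noncommutative
polynomials. -/
theorem matrix_linksnullstellensatz {g m n d : ℕ}
    (P : Matrix (Fin m) (Fin d) (FreeAlgebra ℂ (Fin g)))
    (Q : Matrix (Fin n) (Fin d) (FreeAlgebra ℂ (Fin g)))
    (h : ∀ (k : ℕ) (X : Fin g → Matrix (Fin k) (Fin k) ℂ) (v : Fin d × Fin k → ℂ),
      ncMatrixEval P X *ᵥ v = 0 → ncMatrixEval Q X *ᵥ v = 0) :
    ∃ G : Matrix (Fin n) (Fin m) (FreeAlgebra ℂ (Fin g)), Q = G * P := by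
  classical
  set I : Submodule (FA g) (Fin d → FA g) :=
    Submodule.span (FA g) (Set.range fun i : Fin m => P i) with hI
  obtain ⟨N, hN⟩ := MLN.exists_uniform (g := g)
    (fun z : (Fin m ⊕ Fin n) × Fin d => Sum.elim (fun i => P i z.2) (fun r => Q r z.2) z.1)
  have hP : ∀ i j, P i j ∈ S g ^ N := fun i j => hN (Sum.inl i, j)
  have hQ : ∀ r j, Q r j ∈ S g ^ N := fun r j => hN (Sum.inr r, j)
  obtain ⟨k, X, L, hcomp, hI0, hIk⟩ := exists_good_rep N I
  have hsingle : ∀ (j j' : Fin d), (Pi.single j (1 : FA g) : Fin d → FA g) j' ∈ S g ^ 0 := by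
    intro j j'
    rw [pow_zero]
    rcases eq_or_ne j' j with rfl | hne
    · rw [Pi.single_eq_same]
      exact Submodule.one_le.mp le_rfl
    · rw [Pi.single_eq_of_ne hne]
      exact zero_mem _
  set v : Fin d × Fin k → ℂ := fun z => L (Pi.single z.1 (1 : FA g)) z.2 with hv
  have hEval : ∀ {a : ℕ} (R : Matrix (Fin a) (Fin d) (FA g)), (∀ i j, R i j ∈ S g ^ N) →
      ∀ (i : Fin a) (l : Fin k), (ncMatrixEval R X *ᵥ v) (i, l) = L (R i) l := by
    intro a R hR i l
    have h1 : (ncMatrixEval R X *ᵥ v) (i, l)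
        = ∑ j : Fin d, ((FreeAlgebra.lift ℂ X (R i j)) *ᵥ (L (Pi.single j (1 : FA g)))) l := by
      simp only [Matrix.mulVec, dotProduct, ncMatrixEval, Matrix.of_apply]
      rw [Fintype.sum_prod_type]
    rw [h1]
    have h2 : ∀ j : Fin d, (FreeAlgebra.lift ℂ X (R i j)) *ᵥ
          (L (Pi.single j (1 : FA g))) =
          L (R i j • (Pi.single j (1 : FA g) : Fin d → FA g)) := fun j =>
      hcomp N 0 (by omega) (R i j) (hR i j) (Pi.single j (1 : FA g))
        (fun j' => hsingle j j')
    simp only [h2]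
    have h3 : ∑ j : Fin d, (R i j • (Pi.single j (1 : FA g) : Fin d → FA g)) = R i := by
      funext j'
      rw [Finset.sum_apply]
      have : ∀ j : Fin d, (R i j • (Pi.single j (1 : FA g) : Fin d → FA g)) j'
          = if j' = j then R i j else 0 := by
        intro j
        rcases eq_or_ne j' j with rfl | hne
        · simp [Pi.smul_apply, Pi.single_eq_same, smul_eq_mul]
        · simp [Pi.smul_apply, Pi.single_eq_of_ne hne, hne, smul_eq_mul]
      simp only [this, Finset.sum_ite_eq, Finset.mem_univ, if_true]
    calc ∑ j : Fin d, L (R i j • (Pi.single j (1 : FA g) : Fin d → FA g)) l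
        = (∑ j : Fin d, L (R i j • (Pi.single j (1 : FA g) : Fin d → FA g))) l := by
            rw [Finset.sum_apply]
      _ = L (∑ j : Fin d, R i j • (Pi.single j (1 : FA g) : Fin d → FA g)) l := by
            rw [_root_.map_sum]
      _ = L (R i) l := by rw [h3]
  have hPv : ncMatrixEval P X *ᵥ v = 0 := by
    funext z
    obtain ⟨i, l⟩ := z
    rw [hEval P hP i l]
    have hPI : (P i : Fin d → FA g) ∈ I := by
      rw [hI]
      exact Submodule.subset_span ⟨i, rfl⟩
    have := hI0 (P i) hPI (fun j => S_pow_mono (Nat.le_succ N) (hP i j))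
    rw [this]
    rfl
  have hQv := h k X v hPv
  have hQI : ∀ r, (Q r : Fin d → FA g) ∈ I := by
    intro r
    refine hIk (Q r) (fun j => S_pow_mono (Nat.le_succ N) (hQ r j)) ?_
    funext l
    have := congrFun hQv (r, l)
    rw [hEval Q hQ r l] at this
    simpa using this
  have hG : ∀ r, ∃ c : Fin m → FA g, ∑ i, c i • (P i : Fin d → FA g) = Q r := by
    intro r
    have := hQI r
    rw [hI, Submodule.mem_span_range_iff_exists_fun] at this
    exact this
  choose G hG using hG
  refine ⟨Matrix.of G, ?_⟩
  ext r j
  have := congrFun (hG r) j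
  rw [Finset.sum_apply] at this
  simp only [Pi.smul_apply, smul_eq_mul] at this
  rw [Matrix.mul_apply]
  exact this.symm
end

section
/- Let A_1, A_2 ∈ ℂ^{d'×d}, and for pairs of n×n complex matrices define L(X_1, X_2) := X_1 ⊗ A_1 + X_2 ⊗ A_2 and Δ_L(X_1, X_2) := (X_1*X_1 + X_2*X_2) ⊗ I_d − L(X_1,X_2)* L(X_1,X_2). Suppose: (i) L is orthotropic; (ii) Δ_L(X_1, X_2) is positive semidefinite for every n and all n×n matrices X_1, X_2; and (iii) for all scalars x_1, x_2 ∈ ℂ, the d×d matrix Δ_L(x_1, x_2) = (|x_1|² + |x_2|²)I_d − L(x_1,x_2)*L(x_1,x_2) is singular (has a nonzero kernel vector). Then for every n and all n×n matrices X_1, X_2, the matrix Δ_L(X_1, X_2) has a nonzero kernel vector (Δ_L clings for all matrix pairs). -/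
open scoped Matrix.Norms.L2Operator ComplexOrder Kronecker
open Matrix

/-- Evaluation of the two-variable pencil `L(X₁,X₂) = X₁ ⊗ A₁ + X₂ ⊗ A₂`. -/
noncomputable def pencil2Eval {d' d n : ℕ} (A₁ A₂ : Matrix (Fin d') (Fin d) ℂ)
    (X₁ X₂ : Matrix (Fin n) (Fin n) ℂ) : Matrix (Fin n × Fin d') (Fin n × Fin d) ℂ :=
  X₁ ⊗ₖ A₁ + X₂ ⊗ₖ A₂

/-- `Δ_L(X₁,X₂) = (X₁*X₁ + X₂*X₂) ⊗ I_d − L(X₁,X₂)* L(X₁,X₂)`. -/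
noncomputable def pencil2Delta {d' d n : ℕ} (A₁ A₂ : Matrix (Fin d') (Fin d) ℂ)
    (X₁ X₂ : Matrix (Fin n) (Fin n) ℂ) : Matrix (Fin n × Fin d) (Fin n × Fin d) ℂ :=
  (X₁ᴴ * X₁ + X₂ᴴ * X₂) ⊗ₖ (1 : Matrix (Fin d) (Fin d) ℂ) -
    (pencil2Eval A₁ A₂ X₁ X₂)ᴴ * pencil2Eval A₁ A₂ X₁ X₂

/-- Scalar evaluation `L(x₁,x₂) = x₁ A₁ + x₂ A₂`. -/
noncomputable def pencil2Scalar {d' d : ℕ} (A₁ A₂ : Matrix (Fin d') (Fin d) ℂ)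
    (x₁ x₂ : ℂ) : Matrix (Fin d') (Fin d) ℂ :=
  x₁ • A₁ + x₂ • A₂

/-- Scalar `Δ_L(x₁,x₂) = (|x₁|² + |x₂|²) I_d − L(x₁,x₂)* L(x₁,x₂)`. -/
noncomputable def pencil2ScalarDelta {d' d : ℕ} (A₁ A₂ : Matrix (Fin d') (Fin d) ℂ)
    (x₁ x₂ : ℂ) : Matrix (Fin d) (Fin d) ℂ :=
  (star x₁ * x₁ + star x₂ * x₂) • (1 : Matrix (Fin d) (Fin d) ℂ) -
    (pencil2Scalar A₁ A₂ x₁ x₂)ᴴ * pencil2Scalar A₁ A₂ x₁ x₂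

private lemma kron_mulVec_prod {m n p q : ℕ} (A : Matrix (Fin m) (Fin n) ℂ)
    (B : Matrix (Fin p) (Fin q) ℂ) (ξ : Fin n → ℂ) (w : Fin q → ℂ) :
    (A ⊗ₖ B) *ᵥ (fun r => ξ r.1 * w r.2) =
      fun r => (A *ᵥ ξ) r.1 * (B *ᵥ w) r.2 := by
  funext r
  simp only [mulVec, dotProduct, kroneckerMap_apply, Fintype.sum_prod_type,
    Finset.sum_mul, Finset.mul_sum]
  rw [Finset.sum_comm]
  refine Finset.sum_congr rfl fun k _ => Finset.sum_congr rfl fun l _ => by ring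

private lemma dot_prod_split {n q : ℕ} (a c : Fin n → ℂ) (b e : Fin q → ℂ) :
    star (fun r : Fin n × Fin q => a r.1 * b r.2) ⬝ᵥ (fun r => c r.1 * e r.2) =
      (star a ⬝ᵥ c) * (star b ⬝ᵥ e) := by
  simp only [dotProduct, Pi.star_apply, star_mul', Fintype.sum_prod_type,
    Finset.sum_mul, Finset.mul_sum]
  rw [Finset.sum_comm]
  refine Finset.sum_congr rfl fun k _ => Finset.sum_congr rfl fun l _ => by ring

private lemma conj_dot {m n : Type*} [Fintype m] [Fintype n] (M : Matrix m n ℂ) (a : n → ℂ)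
    (b : m → ℂ) : star a ⬝ᵥ (Mᴴ *ᵥ b) = star (M *ᵥ a) ⬝ᵥ b := by
  rw [star_mulVec, dotProduct_mulVec]

/-- In two variables: if `L` is orthotropic, `Δ_L` is matrix positive semidefinite, and
`Δ_L` clings at all scalar points, then `Δ_L` clings at all matrix pairs. -/
theorem two_variable_clinging {d' d : ℕ} (A₁ A₂ : Matrix (Fin d') (Fin d) ℂ)
    (horthotropic : ∀ (x₁ x₂ : ℂ) (w : Fin d → ℂ),
      star (pencil2Scalar A₁ A₂ x₁ x₂ *ᵥ w) ⬝ᵥ (pencil2Scalar A₁ A₂ x₁ x₂ *ᵥ w) =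
          star w ⬝ᵥ w →
      ∀ y₁ y₂ : ℂ, star x₁ * y₁ + star x₂ * y₂ = 0 →
      ∀ u : Fin d → ℂ,
        star (pencil2Scalar A₁ A₂ x₁ x₂ *ᵥ w) ⬝ᵥ (pencil2Scalar A₁ A₂ y₁ y₂ *ᵥ u) = 0)
    (hpsd : ∀ (n : ℕ) (X₁ X₂ : Matrix (Fin n) (Fin n) ℂ),
      (pencil2Delta A₁ A₂ X₁ X₂).PosSemidef)
    (hscalar : ∀ x₁ x₂ : ℂ,
      ∃ v : Fin d → ℂ, v ≠ 0 ∧ pencil2ScalarDelta A₁ A₂ x₁ x₂ *ᵥ v = 0) :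
    ∀ (n : ℕ), 0 < n → ∀ X₁ X₂ : Matrix (Fin n) (Fin n) ℂ,
      ∃ v : Fin n × Fin d → ℂ, v ≠ 0 ∧ pencil2Delta A₁ A₂ X₁ X₂ *ᵥ v = 0 := by
  intro n hn X₁ X₂
  -- Step 1: find ξ ≠ 0 and x₁, x₂, η with Xᵢ ξ = xᵢ • η.
  obtain ⟨ξ, hξ, x₁, x₂, η, h1, h2⟩ :
      ∃ ξ : Fin n → ℂ, ξ ≠ 0 ∧ ∃ (x₁ x₂ : ℂ) (η : Fin n → ℂ),
        X₁ *ᵥ ξ = x₁ • η ∧ X₂ *ᵥ ξ = x₂ • η := by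
    by_cases hdet : IsUnit X₁.det
    · haveI : Nonempty (Fin n) := ⟨⟨0, hn⟩⟩
      set M := X₁⁻¹ * X₂ with hM
      obtain ⟨μ, hμ⟩ := Module.End.exists_eigenvalue (Matrix.toLin' M)
      obtain ⟨ξ, hξv⟩ := hμ.exists_hasEigenvector
      have hMe : M *ᵥ ξ = μ • ξ := by
        have := hξv.apply_eq_smul
        rwa [Matrix.toLin'_apply] at this
      refine ⟨ξ, hξv.right, 1, μ, X₁ *ᵥ ξ, (one_smul _ _).symm, ?_⟩
      have : X₂ = X₁ * M := (Matrix.mul_nonsing_inv_cancel_left X₁ X₂ hdet).symm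
      rw [this, ← Matrix.mulVec_mulVec, hMe, Matrix.mulVec_smul]
    · have hdet0 : X₁.det = 0 := by
        simpa [isUnit_iff_ne_zero] using hdet
      obtain ⟨ξ, hξ, hker⟩ := (Matrix.exists_mulVec_eq_zero_iff).mpr hdet0
      exact ⟨ξ, hξ, 0, 1, X₂ *ᵥ ξ, by simp [hker], (one_smul _ _).symm⟩
  obtain ⟨w, hw, hwker⟩ := hscalar x₁ x₂
  set c : ℂ := star x₁ * x₁ + star x₂ * x₂ with hc
  set Lx := pencil2Scalar A₁ A₂ x₁ x₂ with hLx
  -- scalar kernel relation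
  have hLw : (Lxᴴ * Lx) *ᵥ w = c • w := by
    have h := hwker
    unfold pencil2ScalarDelta at h
    rw [sub_mulVec, sub_eq_zero] at h
    rw [← h, Matrix.smul_mulVec, Matrix.one_mulVec]
  set v : Fin n × Fin d → ℂ := fun r => ξ r.1 * w r.2 with hv
  refine ⟨v, ?_, ?_⟩
  · obtain ⟨i, hi⟩ := Function.ne_iff.mp hξ
    obtain ⟨j, hj⟩ := Function.ne_iff.mp hw
    intro h0
    have := congrFun h0 (i, j)
    simp only [hv, Pi.zero_apply] at this
    exact mul_ne_zero (by simpa using hi) (by simpa using hj) this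
  · rw [← (hpsd n X₁ X₂).dotProduct_mulVec_zero_iff]
    -- compute L(X) v
    have hLv : pencil2Eval A₁ A₂ X₁ X₂ *ᵥ v = fun r => η r.1 * (Lx *ᵥ w) r.2 := by
      unfold pencil2Eval
      rw [add_mulVec, hv, kron_mulVec_prod, kron_mulVec_prod, h1, h2, hLx]
      funext r
      unfold pencil2Scalar
      rw [add_mulVec, Matrix.smul_mulVec, Matrix.smul_mulVec]
      simp only [Pi.add_apply, Pi.smul_apply, smul_eq_mul]
      ring
    unfold pencil2Delta
    rw [sub_mulVec, dotProduct_sub]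
    -- first term
    have hT1 : star v ⬝ᵥ ((X₁ᴴ * X₁ + X₂ᴴ * X₂) ⊗ₖ (1 : Matrix (Fin d) (Fin d) ℂ)) *ᵥ v
        = c * (star η ⬝ᵥ η) * (star w ⬝ᵥ w) := by
      rw [hv, kron_mulVec_prod, Matrix.one_mulVec]
      rw [dot_prod_split]
      have : star ξ ⬝ᵥ (X₁ᴴ * X₁ + X₂ᴴ * X₂) *ᵥ ξ = c * (star η ⬝ᵥ η) := by
        rw [add_mulVec, dotProduct_add, ← Matrix.mulVec_mulVec, ← Matrix.mulVec_mulVec,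
          conj_dot, conj_dot, h1, h2]
        simp only [star_smul, smul_dotProduct, dotProduct_smul, smul_eq_mul, star_smul,
          Pi.star_apply, RCLike.star_def]
        rw [hc]
        simp only [RCLike.star_def]
        ring
      rw [this]
    have hT2 : star v ⬝ᵥ ((pencil2Eval A₁ A₂ X₁ X₂)ᴴ * pencil2Eval A₁ A₂ X₁ X₂) *ᵥ v
        = (star η ⬝ᵥ η) * (c * (star w ⬝ᵥ w)) := by
      rw [← Matrix.mulVec_mulVec, conj_dot, hLv, dot_prod_split]
      congr 1
      rw [← conj_dot, Matrix.mulVec_mulVec, hLw]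
      simp only [dotProduct_smul, smul_eq_mul]
    rw [hT1, hT2]
    ring
end

section
/- Fix N, g', g, d', d ∈ ℕ and let B denote the closed unit ball {X ∈ ℂ^{Ng'×Ng} : ‖X‖ ≤ 1} in the operator norm. Let f: B → ℂ^{d'×d} be continuous on B and holomorphic (complex differentiable) on the open ball {‖X‖ < 1}. Then for every k with 0 < k ≤ min(g', g) and every X ∈ B, ‖f(X)‖ ≤ sup{‖f(U)‖ : U ∈ B and U is isometric on a subspace of ℂ^{Ng} of dimension at least Nk}. -/
open scoped Matrix.Norms.L2Operator
open Matrix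

/-- `U` is isometric on a subspace of `ℂ^{Ng}` of dimension at least `m`. -/
def IsometricOnDimGE {p q : ℕ} (U : Matrix (Fin p) (Fin q) ℂ) (m : ℕ) : Prop :=
  ∃ S : Submodule ℂ (Fin q → ℂ), m ≤ Module.finrank ℂ S ∧
    ∀ y ∈ S, star (U *ᵥ y) ⬝ᵥ (U *ᵥ y) = star y ⬝ᵥ y

namespace MMP

variable {m n p : ℕ}

lemma inner_piLp_equiv_symm' (x y : Fin m → ℂ) :
    inner ℂ ((WithLp.equiv 2 (Fin m → ℂ)).symm x) ((WithLp.equiv 2 (Fin m → ℂ)).symm y)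
      = star x ⬝ᵥ y :=
  (EuclideanSpace.inner_toLp_toLp x y).trans (dotProduct_comm _ _)

lemma sq_norm_eq (v : Fin m → ℂ) :
    ‖(WithLp.equiv 2 (Fin m → ℂ)).symm v‖ ^ 2 = (star v ⬝ᵥ v).re := by
  have h := inner_piLp_equiv_symm' v v
  have h2 : RCLike.re (inner (𝕜 := ℂ) ((WithLp.equiv 2 (Fin m → ℂ)).symm v)
      ((WithLp.equiv 2 (Fin m → ℂ)).symm v))
      = ‖(WithLp.equiv 2 (Fin m → ℂ)).symm v‖ ^ 2 := inner_self_eq_norm_sq _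
  rw [h] at h2
  exact h2.symm

lemma re_star_dot_nonneg (v : Fin m → ℂ) : 0 ≤ (star v ⬝ᵥ v).re := by
  rw [← sq_norm_eq]; positivity

lemma star_mulVec_dot (P : Matrix (Fin m) (Fin n) ℂ) (Q : Matrix (Fin m) (Fin p) ℂ)
    (u : Fin n → ℂ) (v : Fin p → ℂ) :
    star (P *ᵥ u) ⬝ᵥ (Q *ᵥ v) = star u ⬝ᵥ ((Pᴴ * Q) *ᵥ v) := by
  rw [star_mulVec, ← mulVec_mulVec, dotProduct_mulVec (star u)]

lemma norm_le_sqrt_of_forall (M : Matrix (Fin m) (Fin n) ℂ) (c : ℝ) (hc : 0 ≤ c)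
    (h : ∀ y, (star (M *ᵥ y) ⬝ᵥ (M *ᵥ y)).re ≤ c * (star y ⬝ᵥ y).re) :
    ‖M‖ ≤ Real.sqrt c := by
  rw [Matrix.l2_opNorm_def]
  refine ContinuousLinearMap.opNorm_le_bound _ (Real.sqrt_nonneg c) (fun x => ?_)
  set y : Fin n → ℂ := WithLp.equiv 2 (Fin n → ℂ) x with hy
  have hx : x = (WithLp.equiv 2 (Fin n → ℂ)).symm y := rfl
  have happ : (Matrix.toEuclideanLin.trans LinearMap.toContinuousLinearMap M) x
      = (WithLp.equiv 2 (Fin m → ℂ)).symm (M *ᵥ y) := rfl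
  rw [happ, hx]
  have h1 : ‖(WithLp.equiv 2 (Fin m → ℂ)).symm (M *ᵥ y)‖ ^ 2
      ≤ (Real.sqrt c * ‖(WithLp.equiv 2 (Fin n → ℂ)).symm y‖) ^ 2 := by
    rw [sq_norm_eq, mul_pow, Real.sq_sqrt hc, sq_norm_eq]
    exact h y
  have h2 : (0:ℝ) ≤ Real.sqrt c * ‖(WithLp.equiv 2 (Fin n → ℂ)).symm y‖ := by positivity
  nlinarith [norm_nonneg ((WithLp.equiv 2 (Fin m → ℂ)).symm (M *ᵥ y))]

lemma re_mulVec_le_of_norm_le {M : Matrix (Fin m) (Fin n) ℂ} {c : ℝ} (h : ‖M‖ ≤ c) (y : Fin n → ℂ) :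
    (star (M *ᵥ y) ⬝ᵥ (M *ᵥ y)).re ≤ c ^ 2 * (star y ⬝ᵥ y).re := by
  have h1 := Matrix.l2_opNorm_mulVec M ((WithLp.equiv 2 (Fin n → ℂ)).symm y)
  have h2 : ‖(EuclideanSpace.equiv (Fin m) ℂ).symm (M *ᵥ (WithLp.equiv 2 (Fin n → ℂ)).symm y)‖ = ‖(WithLp.equiv 2 (Fin m → ℂ)).symm (M *ᵥ y)‖ := rfl
  rw [h2] at h1
  have hc : 0 ≤ c := le_trans (norm_nonneg M) h
  have := sq_norm_eq (M *ᵥ y)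
  have := sq_norm_eq y
  have ha : ‖(WithLp.equiv 2 (Fin m → ℂ)).symm (M *ᵥ y)‖ ≤ c * ‖(WithLp.equiv 2 (Fin n → ℂ)).symm y‖ :=
    h1.trans (mul_le_mul_of_nonneg_right h (norm_nonneg _))
  nlinarith [mul_self_le_mul_self (norm_nonneg ((WithLp.equiv 2 (Fin m → ℂ)).symm (M *ᵥ y))) ha,
    norm_nonneg ((WithLp.equiv 2 (Fin n → ℂ)).symm y)]

lemma star_mulVec_dot' (P : Matrix (Fin m) (Fin n) ℂ) (u : Fin n → ℂ) (v : Fin m → ℂ) :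
    star (P *ᵥ u) ⬝ᵥ v = star u ⬝ᵥ (Pᴴ *ᵥ v) := by
  rw [star_mulVec, ← dotProduct_mulVec]

lemma key_identity {X W : Matrix (Fin m) (Fin n) ℂ} {A : Matrix (Fin n) (Fin n) ℂ}
    (hAh : Aᴴ = A) (hXX : Xᴴ * X = A * A) (hWX : Wᴴ * X = A) (z : ℂ) (u : Fin n → ℂ) :
    star ((X + z • W) *ᵥ u) ⬝ᵥ ((X + z • W) *ᵥ u) + star u ⬝ᵥ u
      + (starRingEnd ℂ z * z) * (star (A *ᵥ u) ⬝ᵥ (A *ᵥ u))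
    = star ((1 + z • A) *ᵥ u) ⬝ᵥ ((1 + z • A) *ᵥ u) + star (A *ᵥ u) ⬝ᵥ (A *ᵥ u)
      + (starRingEnd ℂ z * z) * (star (W *ᵥ u) ⬝ᵥ (W *ᵥ u)) := by
  have hXW : Xᴴ * W = A := by
    have := congrArg conjTranspose hWX
    rwa [conjTranspose_mul, conjTranspose_conjTranspose, hAh] at this
  simp only [add_mulVec, smul_mulVec, one_mulVec, star_add, star_smul,
    add_dotProduct, smul_dotProduct, dotProduct_add, dotProduct_smul,
    star_mulVec_dot, star_mulVec_dot', mulVec_mulVec, hAh, hXX, hWX, hXW,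
    RCLike.star_def, smul_eq_mul]
  ring

section construction
open scoped ComplexOrder

lemma exists_partial_isometry (X : Matrix (Fin m) (Fin n) ℂ) :
    ∃ (A : Matrix (Fin n) (Fin n) ℂ) (W : Matrix (Fin m) (Fin n) ℂ)
      (S : Submodule ℂ (Fin n → ℂ)),
      Aᴴ = A ∧ Xᴴ * X = A * A ∧ Wᴴ * X = A ∧ ‖A‖ = ‖X‖ ∧
      (∀ u : Fin n → ℂ, (star (W *ᵥ u) ⬝ᵥ (W *ᵥ u)).re ≤ (star u ⬝ᵥ u).re) ∧
      min m n ≤ Module.finrank ℂ S ∧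
      (∀ u ∈ S, star (W *ᵥ u) ⬝ᵥ (W *ᵥ u) = star u ⬝ᵥ u) := by
  classical
  have hH : (Xᴴ * X).PosSemidef := posSemidef_conjTranspose_mul_self X
  have hHh : (Xᴴ * X).IsHermitian := hH.1
  set b := hHh.eigenvectorBasis with hbdef
  set ev := hHh.eigenvalues with hevdef
  have hev : ∀ i, 0 ≤ ev i := fun i => hH.eigenvalues_nonneg i
  set V : Matrix (Fin n) (Fin n) ℂ := (hHh.eigenvectorUnitary : Matrix (Fin n) (Fin n) ℂ)
    with hVdef
  set bv : Fin n → (Fin n → ℂ) := fun i => ⇑(b i) with hbvdef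
  set A : Matrix (Fin n) (Fin n) ℂ := V * diagonal (fun i => (Real.sqrt (ev i) : ℂ)) * star V
    with hAdef
  have hVcol : ∀ j, V *ᵥ Pi.single j 1 = bv j := fun j => hHh.eigenvectorUnitary_mulVec j
  have hVstarcol : ∀ j, star V *ᵥ bv j = Pi.single j 1 := fun j =>
    hHh.star_eigenvectorUnitary_mulVec j
  have hVmul : V * star V = 1 := Matrix.mem_unitaryGroup_iff.mp hHh.eigenvectorUnitary.2
  have hVentry : ∀ i j, V i j = bv j i := fun i j => rfl
  -- matrices agreeing on the basis columns are equal
  have matEq : ∀ {q : ℕ} (M N : Matrix (Fin q) (Fin n) ℂ),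
      (∀ j, M *ᵥ bv j = N *ᵥ bv j) → M = N := by
    intro q M N h
    have h2 : M * V = N * V := by
      ext i j
      have hM : (M * V) i j = (M *ᵥ bv j) i := by
        simp [Matrix.mul_apply, Matrix.mulVec, dotProduct, hVentry]
      have hN : (N * V) i j = (N *ᵥ bv j) i := by
        simp [Matrix.mul_apply, Matrix.mulVec, dotProduct, hVentry]
      rw [hM, hN, h j]
    calc M = M * (V * star V) := by rw [hVmul, Matrix.mul_one]
    _ = M * V * star V := by rw [Matrix.mul_assoc]
    _ = N * V * star V := by rw [h2]
    _ = N * (V * star V) := by rw [Matrix.mul_assoc]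
    _ = N := by rw [hVmul, Matrix.mul_one]
  have e1 : ∀ i j, star (bv i) ⬝ᵥ bv j = if i = j then 1 else 0 := by
    intro i j
    have := orthonormal_iff_ite.mp b.orthonormal i j
    rwa [EuclideanSpace.inner_eq_star_dotProduct, dotProduct_comm] at this
  have e2 : ∀ j, (Xᴴ * X) *ᵥ bv j = (ev j : ℂ) • bv j := by
    intro j
    have := hHh.mulVec_eigenvectorBasis j
    rwa [RCLike.real_smul_eq_coe_smul (K := ℂ)] at this
  have singleSmul : ∀ (j : Fin n) (c : ℂ),
      (Pi.single j c : Fin n → ℂ) = c • (Pi.single j 1 : Fin n → ℂ) := by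
    intro j c
    funext i
    rcases eq_or_ne i j with rfl | hij
    · simp
    · simp [Pi.single_eq_of_ne hij]
  have e3 : ∀ j, A *ᵥ bv j = (Real.sqrt (ev j) : ℂ) • bv j := by
    intro j
    rw [hAdef, ← mulVec_mulVec, ← mulVec_mulVec, hVstarcol, diagonal_mulVec_single,
      mul_one, singleSmul, mulVec_smul, hVcol]
  have hAh : Aᴴ = A := by
    have hd : star (fun i => ((Real.sqrt (ev i) : ℝ) : ℂ)) = fun i => ((Real.sqrt (ev i):ℝ):ℂ) := by
      funext i
      simp [Pi.star_apply, Complex.star_def, Complex.conj_ofReal]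
    rw [hAdef, star_eq_conjTranspose, conjTranspose_mul, conjTranspose_mul,
      conjTranspose_conjTranspose, diagonal_conjTranspose, hd, Matrix.mul_assoc]
  have hXX : Xᴴ * X = A * A := by
    refine matEq _ _ (fun j => ?_)
    rw [e2, ← mulVec_mulVec, e3, mulVec_smul, e3, smul_smul]
    congr 1
    rw [← Complex.ofReal_mul, Real.mul_self_sqrt (hev j)]
  have hnA : ‖A‖ = ‖X‖ := by
    have h1 : ‖A‖ * ‖A‖ = ‖X‖ * ‖X‖ := by
      rw [← Matrix.l2_opNorm_conjTranspose_mul_self A, hAh, ← hXX,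
        Matrix.l2_opNorm_conjTranspose_mul_self X]
    nlinarith [norm_nonneg A, norm_nonneg X]
  have e4 : ∀ i j, star (X *ᵥ bv i) ⬝ᵥ (X *ᵥ bv j) = if i = j then (ev j : ℂ) else 0 := by
    intro i j
    rw [star_mulVec_dot, e2, dotProduct_smul, e1]
    by_cases h : i = j <;> simp [h]
  have e5 : ∀ j, ev j = 0 → X *ᵥ bv j = 0 := by
    intro j hj
    have := e4 j j
    simp only [if_pos rfl, hj, Complex.ofReal_zero] at this
    exact dotProduct_star_self_eq_zero.mp this
  -- the orthonormal columns
  set pos : Finset (Fin n) := Finset.univ.filter (fun i => ev i ≠ 0) with hposdef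
  set w : Fin n → EuclideanSpace ℂ (Fin m) := fun i =>
    ((Real.sqrt (ev i) : ℂ))⁻¹ • ((WithLp.equiv 2 (Fin m → ℂ)).symm (X *ᵥ bv i)) with hwdef
  have hsqrt_ne : ∀ i ∈ pos, (Real.sqrt (ev i) : ℂ) ≠ 0 := by
    intro i hi
    have : ev i ≠ 0 := (Finset.mem_filter.mp hi).2
    have h2 : 0 < ev i := lt_of_le_of_ne (hev i) (Ne.symm this)
    simp only [ne_eq, Complex.ofReal_eq_zero]
    positivity
  have worth : ∀ i ∈ pos, ∀ j ∈ pos,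
      inner (𝕜 := ℂ) (w i) (w j) = if i = j then (1:ℂ) else 0 := by
    intro i hi j hj
    rw [hwdef]
    simp only [inner_smul_left, inner_smul_right, inner_piLp_equiv_symm', e4]
    rw [map_inv₀, Complex.conj_ofReal]
    by_cases h : i = j
    · subst h
      rw [if_pos rfl]
      have hne := hsqrt_ne i hi
      field_simp
      rw [if_pos trivial, mul_one, ← Complex.ofReal_pow, Real.sq_sqrt (hev i)]
    · simp [h]
  have horth : Orthonormal ℂ (fun t : {x // x ∈ pos} => w t) := by
    rw [orthonormal_iff_ite]
    intro t t'
    rw [worth t t.2 t' t'.2]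
    by_cases h : t = t'
    · simp [h]
    · have : (t : Fin n) ≠ (t' : Fin n) := fun hc => h (Subtype.ext hc)
      simp [h, this]
  have hrm : pos.card ≤ m := by
    have hli := horth.linearIndependent
    have hcard := hli.fintype_card_le_finrank
    rwa [Fintype.card_coe, finrank_euclideanSpace_fin] at hcard
  obtain ⟨T, hposT, hTcard⟩ : ∃ T : Finset (Fin n), pos ⊆ T ∧ T.card = min m n := by
    refine Finset.exists_superset_card_eq (le_min hrm ?_) ?_
    · exact le_trans (Finset.card_le_univ pos) (by simp)
    · simp [min_le_right]
  obtain ⟨emb⟩ : Nonempty ({x // x ∈ T} ↪ Fin m) := by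
    refine Function.Embedding.nonempty_of_card_le ?_
    rw [Fintype.card_coe, hTcard, Fintype.card_fin]
    exact min_le_left _ _
  set vfam : Fin m → EuclideanSpace ℂ (Fin m) :=
    Function.extend emb (fun t => if ((t : Fin n) ∈ pos) then w t else 0) 0 with hvfamdef
  set s : Set (Fin m) := emb '' {t | (t : Fin n) ∈ pos} with hsdef
  have hvfam : ∀ t : {x // x ∈ T}, (t : Fin n) ∈ pos → vfam (emb t) = w t := by
    intro t ht
    rw [hvfamdef, Function.Injective.extend_apply emb.injective]
    simp [ht]
  have hons : Orthonormal ℂ (s.restrict vfam) := by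
    rw [orthonormal_iff_ite]
    rintro ⟨i, hi⟩ ⟨j, hj⟩
    obtain ⟨t, ht, rfl⟩ := hi
    obtain ⟨t', ht', rfl⟩ := hj
    change inner ℂ (vfam (emb t)) (vfam (emb t')) = _
    rw [hvfam t ht, hvfam t' ht', worth t ht t' ht']
    by_cases h : (t : Fin n) = (t' : Fin n)
    · have : t = t' := Subtype.ext h
      simp [h, this]
    · have hne : emb t ≠ emb t' := fun hc => h (congrArg _ (emb.injective hc))
      have : (⟨emb t, ⟨t, ht, rfl⟩⟩ : s) ≠ ⟨emb t', ⟨t', ht', rfl⟩⟩ := by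
        intro hc
        exact hne (congrArg Subtype.val hc)
      simp [h, this]
  obtain ⟨bb, hbb⟩ := hons.exists_orthonormalBasis_extension_of_card_eq
    (by rw [finrank_euclideanSpace_fin, Fintype.card_fin])
  set ucol : Fin n → (Fin m → ℂ) := fun i =>
    if hi : i ∈ T then WithLp.equiv 2 (Fin m → ℂ) (bb (emb ⟨i, hi⟩)) else 0 with hucoldef
  have u2 : ∀ j (hj : j ∈ pos), ucol j = WithLp.equiv 2 (Fin m → ℂ) (w j) := by
    intro j hj
    have hjT : j ∈ T := hposT hj
    rw [hucoldef]
    simp only [dif_pos hjT]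
    congr 1
    have hmem : emb ⟨j, hjT⟩ ∈ s := ⟨⟨j, hjT⟩, hj, rfl⟩
    rw [hbb _ hmem, hvfam ⟨j, hjT⟩ hj]
  have u1 : ∀ i j, star (ucol i) ⬝ᵥ ucol j = if i = j ∧ i ∈ T then 1 else 0 := by
    intro i j
    by_cases hi : i ∈ T
    · by_cases hj : j ∈ T
      · have hinner : star (ucol i) ⬝ᵥ ucol j
            = inner (𝕜 := ℂ) (bb (emb ⟨i, hi⟩)) (bb (emb ⟨j, hj⟩)) := by
          rw [hucoldef]
          simp only [dif_pos hi, dif_pos hj]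
          rw [EuclideanSpace.inner_eq_star_dotProduct, dotProduct_comm]
          rfl
        rw [hinner, orthonormal_iff_ite.mp bb.orthonormal]
        by_cases h : i = j
        · subst h; simp [hi]
        · have : emb ⟨i, hi⟩ ≠ emb ⟨j, hj⟩ := by
            intro hc
            exact h (congrArg Subtype.val (emb.injective hc))
          simp [h, this]
      · have : ucol j = 0 := by rw [hucoldef]; simp [hj]
        rw [this, dotProduct_zero]
        have : ¬(i = j ∧ i ∈ T) := by rintro ⟨rfl, h⟩; exact hj h
        simp [this]
    · have : ucol i = 0 := by rw [hucoldef]; simp [hi]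
      rw [this, star_zero, zero_dotProduct]
      have : ¬(i = j ∧ i ∈ T) := by rintro ⟨rfl, h⟩; exact hi h
      simp [this]
  -- the matrix W
  set W' : Matrix (Fin m) (Fin n) ℂ := Matrix.of (fun (a : Fin m) (i : Fin n) => ucol i a)
    with hW'def
  set W : Matrix (Fin m) (Fin n) ℂ := W' * star V with hWdef
  have hW'single : ∀ j, W' *ᵥ Pi.single j 1 = ucol j := by
    intro j
    rw [mulVec_single]
    funext a
    simp [hW'def]
  have hWbv : ∀ j, W *ᵥ bv j = ucol j := by
    intro j
    rw [hWdef, ← mulVec_mulVec, hVstarcol, hW'single]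
  have hWH : Wᴴ = V * W'ᴴ := by
    rw [hWdef, conjTranspose_mul, star_eq_conjTranspose, conjTranspose_conjTranspose]
  have hW'Hu : ∀ j, W'ᴴ *ᵥ ucol j = fun i => if i = j ∧ i ∈ T then 1 else 0 := by
    intro j
    funext i
    have : (W'ᴴ *ᵥ ucol j) i = star (ucol i) ⬝ᵥ ucol j := by
      simp [Matrix.mulVec, dotProduct, conjTranspose_apply, hW'def, mul_comm]
    rw [this, u1]
  have hX2u : ∀ j, j ∈ pos → X *ᵥ bv j = (Real.sqrt (ev j) : ℂ) • ucol j := by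
    intro j hj
    rw [u2 j hj, hwdef]
    simp only [WithLp.equiv_apply, WithLp.ofLp_smul, WithLp.equiv_symm_apply, WithLp.ofLp_toLp]
    rw [smul_smul, mul_inv_cancel₀ (hsqrt_ne j hj), one_smul]
  have hWX : Wᴴ * X = A := by
    refine matEq _ _ (fun j => ?_)
    rw [← mulVec_mulVec, e3]
    by_cases hj : j ∈ pos
    · rw [hX2u j hj, mulVec_smul, hWH, ← mulVec_mulVec, hW'Hu]
      congr 1
      have hjT : j ∈ T := hposT hj
      have : (fun i => if i = j ∧ i ∈ T then (1:ℂ) else 0) = Pi.single j 1 := by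
        funext i
        rcases eq_or_ne i j with rfl | h
        · simp [hjT]
        · simp [h, Pi.single_eq_of_ne h]
      rw [this, hVcol]
    · have hj0 : ev j = 0 := by
        by_contra hne
        exact hj (Finset.mem_filter.mpr ⟨Finset.mem_univ j, hne⟩)
      rw [e5 j hj0, mulVec_zero, hj0]
      simp
  -- diagonal fact
  set dT : Fin n → ℂ := fun i => if i ∈ T then 1 else 0 with hdTdef
  have hdiagfact : W'ᴴ * W' = diagonal dT := by
    ext i j
    have h1 : (W'ᴴ * W') i j = star (ucol i) ⬝ᵥ ucol j := by
      simp [Matrix.mul_apply, dotProduct, conjTranspose_apply, hW'def]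
    rw [h1, u1, diagonal_apply, hdTdef]
    by_cases h : i = j
    · subst h; simp
    · simp [h]
  have hWdot : ∀ y : Fin n → ℂ, star (W *ᵥ y) ⬝ᵥ (W *ᵥ y)
      = star (star V *ᵥ y) ⬝ᵥ (diagonal dT *ᵥ (star V *ᵥ y)) := by
    intro y
    rw [hWdef, ← mulVec_mulVec, star_mulVec_dot, hdiagfact, mulVec_mulVec]
  have hVdot : ∀ y : Fin n → ℂ, star (star V *ᵥ y) ⬝ᵥ (star V *ᵥ y) = star y ⬝ᵥ y := by
    intro y
    rw [star_mulVec_dot]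
    have hsv : (star V)ᴴ * star V = 1 := by
      rw [star_eq_conjTranspose, conjTranspose_conjTranspose, ← star_eq_conjTranspose, hVmul]
    rw [hsv, one_mulVec]
  have hdiagdot : ∀ c : Fin n → ℂ, star c ⬝ᵥ (diagonal dT *ᵥ c)
      = ∑ i, dT i * (Complex.normSq (c i) : ℂ) := by
    intro c
    simp only [dotProduct, Matrix.mulVec_diagonal, Pi.star_apply, RCLike.star_def]
    refine Finset.sum_congr rfl (fun i _ => ?_)
    rw [Complex.normSq_eq_conj_mul_self]
    ring
  have hdot2 : ∀ c : Fin n → ℂ, star c ⬝ᵥ c = ∑ i, (Complex.normSq (c i) : ℂ) := by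
    intro c
    simp only [dotProduct, Pi.star_apply, RCLike.star_def]
    refine Finset.sum_congr rfl (fun i _ => ?_)
    rw [Complex.normSq_eq_conj_mul_self]
  -- contraction
  have hWcontr : ∀ u : Fin n → ℂ, (star (W *ᵥ u) ⬝ᵥ (W *ᵥ u)).re ≤ (star u ⬝ᵥ u).re := by
    intro u
    rw [hWdot, hdiagdot, ← hVdot u, hdot2]
    rw [Complex.re_sum, Complex.re_sum]
    refine Finset.sum_le_sum (fun i _ => ?_)
    rw [hdTdef]
    by_cases h : i ∈ T
    · simp [h]
    · simp only [if_neg h, zero_mul, Complex.zero_re]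
      rw [Complex.ofReal_re]
      exact Complex.normSq_nonneg _
  -- the submodule
  set S : Submodule ℂ (Fin n → ℂ) :=
    Submodule.span ℂ (Set.range (bv ∘ (Subtype.val : {x // x ∈ T} → Fin n))) with hSdef
  have hbvli : LinearIndependent ℂ bv := by
    have h1 : LinearIndependent ℂ (⇑b) := by
      have := b.toBasis.linearIndependent
      rwa [OrthonormalBasis.coe_toBasis] at this
    have h2 := h1.map' (WithLp.linearEquiv 2 ℂ (Fin n → ℂ)).toLinearMap
      (LinearEquiv.ker _)
    exact h2
  have hrank : min m n ≤ Module.finrank ℂ S := by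
    rw [hSdef, finrank_span_eq_card (hbvli.comp _ Subtype.val_injective),
      Fintype.card_coe, hTcard]
  have hsupp : ∀ u ∈ S, ∀ i, i ∉ T → (star V *ᵥ u) i = 0 := by
    intro u hu
    refine Submodule.span_induction ?_ ?_ ?_ ?_ hu
    · rintro x ⟨t, rfl⟩ i hi
      simp only [Function.comp_apply]
      rw [hVstarcol]
      exact Pi.single_eq_of_ne (fun hc => hi (by rw [hc]; exact t.2)) 1
    · intro i _
      rw [mulVec_zero]
      rfl
    · intro x y _ _ hx hy i hi
      rw [mulVec_add]
      simp [hx i hi, hy i hi]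
    · intro a x _ hx i hi
      rw [mulVec_smul]
      simp [hx i hi]
  have hiso : ∀ u ∈ S, star (W *ᵥ u) ⬝ᵥ (W *ᵥ u) = star u ⬝ᵥ u := by
    intro u hu
    rw [hWdot, hdiagdot, ← hVdot u, hdot2]
    refine Finset.sum_congr rfl (fun i _ => ?_)
    rw [hdTdef]
    by_cases h : i ∈ T
    · simp [h]
    · rw [hsupp u hu i h]
      simp
  exact ⟨A, W, S, hAh, hXX, hWX, hnA, hWcontr, hrank, hiso⟩

end construction

lemma normSq_eq_norm_sq (z : ℂ) : Complex.normSq z = ‖z‖ ^ 2 := by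
  rw [Complex.normSq_eq_norm_sq]

lemma bddAbove_image {d' d : ℕ} (f : Matrix (Fin m) (Fin n) ℂ → Matrix (Fin d') (Fin d) ℂ)
    (hc : ContinuousOn f {X | ‖X‖ ≤ 1}) (q : ℕ) :
    BddAbove ((fun U => ‖f U‖) '' {U | ‖U‖ ≤ 1 ∧ IsometricOnDimGE U q}) := by
  have hset : {X : Matrix (Fin m) (Fin n) ℂ | ‖X‖ ≤ 1} = Metric.closedBall 0 1 :=
    Set.ext fun Y => (mem_closedBall_zero_iff).symm
  have hcomp : IsCompact {X : Matrix (Fin m) (Fin n) ℂ | ‖X‖ ≤ 1} := by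
    rw [hset]
    exact isCompact_closedBall _ _
  have himg : IsCompact ((fun U => ‖f U‖) '' {X | ‖X‖ ≤ 1}) :=
    hcomp.image_of_continuousOn hc.norm
  exact himg.bddAbove.mono (Set.image_mono (fun U hU => hU.1))

set_option maxHeartbeats 2000000 in
lemma main_lt {N g' g d' d : ℕ}
    (f : Matrix (Fin (N * g')) (Fin (N * g)) ℂ → Matrix (Fin d') (Fin d) ℂ)
    (hc : ContinuousOn f {X | ‖X‖ ≤ 1})
    (hdiff : DifferentiableOn ℂ f {X | ‖X‖ < 1})
    (k : ℕ) (hk : k ≤ min g' g)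
    (X : Matrix (Fin (N * g')) (Fin (N * g)) ℂ) (hX : ‖X‖ < 1) :
    ‖f X‖ ≤ sSup ((fun U => ‖f U‖) '' {U | ‖U‖ ≤ 1 ∧ IsometricOnDimGE U (N * k)}) := by
  classical
  obtain ⟨A, W, S, hAh, hXX, hWX, hnA, hWc, hSrank, hSiso⟩ := exists_partial_isometry X
  have hX0 : 0 ≤ ‖X‖ := norm_nonneg X
  -- units
  have hunit : ∀ z : ℂ, ‖z‖ ≤ 1 → IsUnit ((1 : Matrix (Fin (N*g)) (Fin (N*g)) ℂ) + z • A) := by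
    intro z hz
    have hnorm : ‖-(z • A)‖ < 1 := by
      rw [norm_neg, norm_smul]
      nlinarith [norm_nonneg A, norm_nonneg z, hnA, hX]
    have hu := (Units.oneSub (-(z • A)) hnorm).isUnit
    rwa [Units.val_oneSub, sub_neg_eq_add] at hu
  set φ : ℂ → Matrix (Fin (N*g')) (Fin (N*g)) ℂ := fun z =>
      X * Ring.inverse (1 + z • A) + z • (W * Ring.inverse (1 + z • A)) with hφdef
  have hφeq : ∀ z, φ z = (X + z • W) * Ring.inverse (1 + z • A) := by
    intro z
    rw [hφdef, Matrix.add_mul, Matrix.smul_mul]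
  have hφ0 : φ 0 = X := by
    simp [hφdef, Ring.inverse_one]
  -- vector decomposition
  have hvec : ∀ z : ℂ, ‖z‖ ≤ 1 → ∀ y : Fin (N*g) → ℂ,
      ∃ u, (1 + z • A) *ᵥ u = y ∧ φ z *ᵥ y = (X + z • W) *ᵥ u := by
    intro z hz y
    refine ⟨Ring.inverse (1 + z • A) *ᵥ y, ?_, ?_⟩
    · rw [mulVec_mulVec, Ring.mul_inverse_cancel _ (hunit z hz), one_mulVec]
    · rw [hφeq, ← mulVec_mulVec]
  -- re version of the key identity
  have hre : ∀ (z : ℂ) (u : Fin (N*g) → ℂ),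
      (star ((X + z • W) *ᵥ u) ⬝ᵥ ((X + z • W) *ᵥ u)).re
      = (star ((1 + z • A) *ᵥ u) ⬝ᵥ ((1 + z • A) *ᵥ u)).re
        - ((star u ⬝ᵥ u).re - (star (A *ᵥ u) ⬝ᵥ (A *ᵥ u)).re)
        + Complex.normSq z * ((star (W *ᵥ u) ⬝ᵥ (W *ᵥ u)).re
            - (star (A *ᵥ u) ⬝ᵥ (A *ᵥ u)).re) := by
    intro z u
    have h := key_identity hAh hXX hWX z u
    have hz : starRingEnd ℂ z * z = (Complex.normSq z : ℂ) := by
      rw [mul_comm, Complex.mul_conj]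
    rw [hz] at h
    have h2 := congrArg Complex.re h
    simp only [Complex.add_re, Complex.re_ofReal_mul] at h2
    linarith
  -- contraction on the closed disc
  have hφle : ∀ z : ℂ, ‖z‖ ≤ 1 → ∀ y : Fin (N*g) → ℂ,
      (star (φ z *ᵥ y) ⬝ᵥ (φ z *ᵥ y)).re ≤ (star y ⬝ᵥ y).re := by
    intro z hz y
    obtain ⟨u, hu1, hu2⟩ := hvec z hz y
    rw [hu2, ← hu1, hre z u]
    have hAu := re_mulVec_le_of_norm_le (le_of_eq hnA) u
    have hWu := hWc u
    have hu0 := re_star_dot_nonneg u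
    have ht0 := Complex.normSq_nonneg z
    have ht1 : Complex.normSq z ≤ 1 := by
      rw [normSq_eq_norm_sq]
      nlinarith [norm_nonneg z]
    have hAuU : (star (A *ᵥ u) ⬝ᵥ (A *ᵥ u)).re ≤ (star u ⬝ᵥ u).re := by
      nlinarith [mul_nonneg (by nlinarith : (0:ℝ) ≤ 1 - ‖X‖ ^ 2) hu0]
    nlinarith [mul_nonneg (by linarith : (0:ℝ) ≤ 1 - Complex.normSq z)
        (by linarith : (0:ℝ) ≤ (star u ⬝ᵥ u).re - (star (A *ᵥ u) ⬝ᵥ (A *ᵥ u)).re),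
      mul_nonneg ht0
        (by linarith : (0:ℝ) ≤ (star u ⬝ᵥ u).re - (star (W *ᵥ u) ⬝ᵥ (W *ᵥ u)).re)]
  have hφnorm : ∀ z : ℂ, ‖z‖ ≤ 1 → ‖φ z‖ ≤ 1 := by
    intro z hz
    have := norm_le_sqrt_of_forall (φ z) 1 zero_le_one (fun y => by
      simpa using hφle z hz y)
    rwa [Real.sqrt_one] at this
  -- strict contraction on the open disc
  have hφlt : ∀ z : ℂ, ‖z‖ < 1 → ‖φ z‖ < 1 := by
    intro z hz
    set μ : ℝ := ‖(1 : Matrix (Fin (N*g)) (Fin (N*g)) ℂ) + z • A‖ with hμdef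
    set t : ℝ := Complex.normSq z with htdef
    have ht0 : 0 ≤ t := Complex.normSq_nonneg z
    have ht1 : t < 1 := by
      rw [htdef, normSq_eq_norm_sq]
      nlinarith [norm_nonneg z]
    set q : ℝ := (1 - t) * (1 - ‖X‖ ^ 2) with hqdef
    have hq0 : 0 < q := by
      have : ‖X‖ ^ 2 < 1 := by nlinarith
      rw [hqdef]
      nlinarith
    have hD0 : (0:ℝ) < μ ^ 2 + 1 := by positivity
    set c : ℝ := 1 - q / (μ ^ 2 + 1) with hcdef
    have hc1 : c < 1 := by
      rw [hcdef]
      have : 0 < q / (μ ^ 2 + 1) := div_pos hq0 hD0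
      linarith
    have hbound : ∀ y : Fin (N*g) → ℂ,
        (star (φ z *ᵥ y) ⬝ᵥ (φ z *ᵥ y)).re ≤ max c 0 * (star y ⬝ᵥ y).re := by
      intro y
      obtain ⟨u, hu1, hu2⟩ := hvec z hz.le y
      rw [hu2, ← hu1, hre z u]
      have hAu := re_mulVec_le_of_norm_le (le_of_eq hnA) u
      have hWu := hWc u
      have hu0 := re_star_dot_nonneg u
      have hY0 := re_star_dot_nonneg ((1 + z • A) *ᵥ u)
      have hYU : (star ((1 + z • A) *ᵥ u) ⬝ᵥ ((1 + z • A) *ᵥ u)).re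
          ≤ μ ^ 2 * (star u ⬝ᵥ u).re := re_mulVec_le_of_norm_le (le_refl μ) u
      set Y := (star ((1 + z • A) *ᵥ u) ⬝ᵥ ((1 + z • A) *ᵥ u)).re
      set U0 := (star u ⬝ᵥ u).re
      set AU := (star (A *ᵥ u) ⬝ᵥ (A *ᵥ u)).re
      set WU := (star (W *ᵥ u) ⬝ᵥ (W *ᵥ u)).re
      have hAU0 := re_star_dot_nonneg (A *ᵥ u)
      have hWU0 := re_star_dot_nonneg (W *ᵥ u)
      -- key inequality chain
      have h1 : q * U0 ≤ (U0 - AU) - t * (WU - AU) := by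
        rw [hqdef]
        nlinarith
      have h2 : Y ≤ (μ ^ 2 + 1) * U0 := by nlinarith
      have h3 : q / (μ ^ 2 + 1) * Y ≤ q * U0 := by
        rw [div_mul_eq_mul_div, div_le_iff₀ hD0]
        calc q * Y ≤ q * ((μ ^ 2 + 1) * U0) := by
              exact mul_le_mul_of_nonneg_left h2 hq0.le
        _ = q * U0 * (μ ^ 2 + 1) := by ring
      have hcY : Y - ((U0 - AU) - t * (WU - AU)) ≤ c * Y := by
        rw [hcdef]
        have := le_trans h3 h1
        nlinarith
      calc Y - (U0 - AU) + t * (WU - AU) ≤ c * Y := by linarith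
      _ ≤ max c 0 * Y := mul_le_mul_of_nonneg_right (le_max_left c 0) hY0
    have hnorm := norm_le_sqrt_of_forall (φ z) (max c 0) (le_max_right c 0) hbound
    have hlt : Real.sqrt (max c 0) < 1 := by
      have h := Real.sqrt_lt_sqrt (le_max_right c 0) (by rw [max_lt_iff]; exact ⟨hc1, one_pos⟩)
      rwa [Real.sqrt_one] at h
    exact lt_of_le_of_lt hnorm hlt
  -- isometry on the boundary
  have hφiso : ∀ z : ℂ, ‖z‖ = 1 → IsometricOnDimGE (φ z) (N * k) := by
    intro z hz
    have hz1 : ‖z‖ ≤ 1 := le_of_eq hz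
    set e : (Fin (N*g) → ℂ) ≃ₗ[ℂ] (Fin (N*g) → ℂ) :=
      LinearEquiv.ofLinear ((1 + z • A).mulVecLin) ((Ring.inverse (1 + z • A)).mulVecLin)
        (by rw [← Matrix.mulVecLin_mul, Ring.mul_inverse_cancel _ (hunit z hz1),
              Matrix.mulVecLin_one])
        (by rw [← Matrix.mulVecLin_mul, Ring.inverse_mul_cancel _ (hunit z hz1),
              Matrix.mulVecLin_one]) with hedef
    refine ⟨S.map (e : (Fin (N*g) → ℂ) →ₗ[ℂ] (Fin (N*g) → ℂ)), ?_, ?_⟩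
    · rw [LinearEquiv.finrank_map_eq]
      refine le_trans ?_ hSrank
      have hk1 : k ≤ g' := le_trans hk (min_le_left _ _)
      have hk2 : k ≤ g := le_trans hk (min_le_right _ _)
      exact le_min (Nat.mul_le_mul_left N hk1) (Nat.mul_le_mul_left N hk2)
    · rintro y ⟨u, hu, rfl⟩
      have hy : (e : (Fin (N*g) → ℂ) →ₗ[ℂ] (Fin (N*g) → ℂ)) u = (1 + z • A) *ᵥ u := rfl
      rw [hy]
      obtain ⟨u', hu1, hu2⟩ := hvec z hz1 ((1 + z • A) *ᵥ u)
      have huu : u' = u := by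
        have hinj : Function.Injective (fun v => (1 + z • A) *ᵥ v) := by
          intro a b hab
          have := congrArg (fun v => Ring.inverse (1 + z • A) *ᵥ v) hab
          simpa [mulVec_mulVec, Ring.inverse_mul_cancel _ (hunit z hz1), one_mulVec] using this
        exact hinj hu1
      rw [hu2, huu]
      have h := key_identity hAh hXX hWX z u
      have hz2 : starRingEnd ℂ z * z = 1 := by
        rw [mul_comm, Complex.mul_conj, normSq_eq_norm_sq, hz]
        simp
      rw [hz2, one_mul, one_mul, hSiso u hu] at h
      linear_combination h
  -- apply the maximum modulus principle
  have hopen : IsOpen {Y : Matrix (Fin (N*g')) (Fin (N*g)) ℂ | ‖Y‖ < 1} := by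
    have : {Y : Matrix (Fin (N*g')) (Fin (N*g)) ℂ | ‖Y‖ < 1} = Metric.ball 0 1 :=
      Set.ext fun Y => (mem_ball_zero_iff).symm
    rw [this]
    exact Metric.isOpen_ball
  set LX : Matrix (Fin (N*g)) (Fin (N*g)) ℂ →ₗ[ℂ] Matrix (Fin (N*g')) (Fin (N*g)) ℂ :=
    { toFun := fun Q => X * Q
      map_add' := fun a b => Matrix.mul_add X a b
      map_smul' := fun c a => Matrix.mul_smul X c a } with hLXdef
  set LW : Matrix (Fin (N*g)) (Fin (N*g)) ℂ →ₗ[ℂ] Matrix (Fin (N*g')) (Fin (N*g)) ℂ :=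
    { toFun := fun Q => W * Q
      map_add' := fun a b => Matrix.mul_add W a b
      map_smul' := fun c a => Matrix.mul_smul W c a } with hLWdef
  have hdOn : DifferentiableOn ℂ (f ∘ φ) (Metric.ball (0:ℂ) 1) := by
    intro z hz
    have hzlt : ‖z‖ < 1 := mem_ball_zero_iff.mp hz
    have hinv : DifferentiableAt ℂ (fun w : ℂ => Ring.inverse (1 + w • A)) z := by
      refine DifferentiableAt.inverse ?_ (hunit z hzlt.le)
      exact (differentiableAt_const _).add (differentiableAt_id.smul_const A)
    have hφdiff : DifferentiableAt ℂ φ z := by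
      have h1 : DifferentiableAt ℂ
          (fun w : ℂ => (LinearMap.toContinuousLinearMap LX) (Ring.inverse (1 + w • A))) z :=
        ((LinearMap.toContinuousLinearMap LX).differentiableAt).comp z hinv
      have h2 : DifferentiableAt ℂ
          (fun w : ℂ => (LinearMap.toContinuousLinearMap LW) (Ring.inverse (1 + w • A))) z :=
        ((LinearMap.toContinuousLinearMap LW).differentiableAt).comp z hinv
      exact h1.add (differentiableAt_id.smul h2)
    have hfd : DifferentiableAt ℂ f (φ z) :=
      (hdiff (φ z) (hφlt z hzlt)).differentiableAt (hopen.mem_nhds (hφlt z hzlt))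
    exact (hfd.comp z hφdiff).differentiableWithinAt
  have hφcont : ContinuousOn φ (Metric.closedBall (0:ℂ) 1) := by
    intro z hz
    have hzle : ‖z‖ ≤ 1 := mem_closedBall_zero_iff.mp hz
    have hgc : ContinuousAt (fun w : ℂ => (1 : Matrix (Fin (N*g)) (Fin (N*g)) ℂ) + w • A) z :=
      (continuous_const.add (continuous_id.smul continuous_const)).continuousAt
    have hinvc : ContinuousAt (fun w : ℂ => Ring.inverse (1 + w • A)) z := by
      have h := NormedRing.inverse_continuousAt (hunit z hzle).unit
      rw [IsUnit.unit_spec] at h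
      have h2 : ContinuousAt (Ring.inverse ∘ (fun w : ℂ => (1 : Matrix (Fin (N*g)) (Fin (N*g)) ℂ) + w • A)) z :=
        ContinuousAt.comp h hgc
      exact h2
    refine ContinuousAt.continuousWithinAt ?_
    refine ContinuousAt.add ?_ ?_
    · exact ((LinearMap.toContinuousLinearMap LX).continuous.continuousAt).comp hinvc
    · exact continuousAt_id.smul
        (((LinearMap.toContinuousLinearMap LW).continuous.continuousAt).comp hinvc)
  have hcOn : ContinuousOn (f ∘ φ) (closure (Metric.ball (0:ℂ) 1)) := by
    rw [closure_ball (0:ℂ) one_ne_zero]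
    refine hc.comp hφcont ?_
    intro z hz
    exact hφnorm z (mem_closedBall_zero_iff.mp hz)
  obtain ⟨z₀, hz₀front, hmax⟩ := Complex.exists_mem_frontier_isMaxOn_norm
    Metric.isBounded_ball ⟨0, Metric.mem_ball_self one_pos⟩ ⟨hdOn, hcOn⟩
  have hz₀ : ‖z₀‖ = 1 := by
    rw [frontier_ball (0:ℂ) one_ne_zero] at hz₀front
    exact mem_sphere_zero_iff_norm.mp hz₀front
  have h0mem : (0:ℂ) ∈ closure (Metric.ball (0:ℂ) 1) :=
    subset_closure (Metric.mem_ball_self one_pos)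
  have hle1 : ‖f X‖ ≤ ‖f (φ z₀)‖ := by
    have := hmax h0mem
    simpa [hφ0] using this
  refine le_trans hle1 (le_csSup (bddAbove_image f hc (N * k)) ?_)
  exact ⟨φ z₀, ⟨hφnorm z₀ hz₀.le, hφiso z₀ hz₀⟩, rfl⟩

end MMP

/-- The maximum modulus principle over the sets `𝒰_k`: for `f` continuous on the closed
unit ball of `ℂ^{Ng'×Ng}` and holomorphic on its interior, and `0 < k ≤ min g' g`,
`‖f(X)‖` is bounded by the supremum of `‖f‖` over contractions isometric on a subspace
of dimension at least `Nk`. -/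
theorem norm_le_sup_over_partial_isometries (N g' g d' d : ℕ)
    (f : Matrix (Fin (N * g')) (Fin (N * g)) ℂ → Matrix (Fin d') (Fin d) ℂ)
    (hc : ContinuousOn f {X | ‖X‖ ≤ 1})
    (hdiff : DifferentiableOn ℂ f {X | ‖X‖ < 1}) :
    ∀ k : ℕ, 0 < k → k ≤ min g' g →
    ∀ X : Matrix (Fin (N * g')) (Fin (N * g)) ℂ, ‖X‖ ≤ 1 →
      ‖f X‖ ≤ sSup ((fun U => ‖f U‖) '' {U | ‖U‖ ≤ 1 ∧ IsometricOnDimGE U (N * k)}) := by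
  intro k _ hk X hX
  by_cases hX1 : ‖X‖ < 1
  · exact MMP.main_lt f hc hdiff k hk X hX1
  · have hmain : ∀ r : ℝ, r ∈ Set.Ico (0:ℝ) 1 →
        ‖f ((r:ℂ) • X)‖ ≤ sSup ((fun U => ‖f U‖) '' {U | ‖U‖ ≤ 1 ∧ IsometricOnDimGE U (N * k)}) := by
      intro r hr
      refine MMP.main_lt f hc hdiff k hk _ ?_
      rw [norm_smul, Complex.norm_real, Real.norm_eq_abs, abs_of_nonneg hr.1]
      nlinarith [hr.1, hr.2, norm_nonneg X]
    have hmem : ∀ r : ℝ, r ∈ Set.Ico (0:ℝ) 1 →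
        ((r:ℂ) • X) ∈ {Y : Matrix (Fin (N * g')) (Fin (N * g)) ℂ | ‖Y‖ ≤ 1} := by
      intro r hr
      have : ‖(r:ℂ) • X‖ < 1 := by
        rw [norm_smul, Complex.norm_real, Real.norm_eq_abs, abs_of_nonneg hr.1]
        nlinarith [hr.1, hr.2, norm_nonneg X]
      exact le_of_lt this
    haveI hNB : (nhdsWithin (1:ℝ) (Set.Ico 0 1)).NeBot := by
      apply mem_closure_iff_nhdsWithin_neBot.mp
      rw [closure_Ico (by norm_num : (0:ℝ) ≠ 1)]
      exact ⟨zero_le_one, le_refl 1⟩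
    have hgcont : Continuous (fun r : ℝ => (r:ℂ) • X) :=
      Complex.continuous_ofReal.smul continuous_const
    have hg : Filter.Tendsto (fun r : ℝ => (r:ℂ) • X)
        (nhdsWithin (1:ℝ) (Set.Ico 0 1)) (nhds X) := by
      have h1 := (hgcont.tendsto 1).mono_left (nhdsWithin_le_nhds (s := Set.Ico (0:ℝ) 1))
      simpa using h1
    have hg2 : Filter.Tendsto (fun r : ℝ => (r:ℂ) • X)
        (nhdsWithin (1:ℝ) (Set.Ico 0 1))
        (nhdsWithin X {Y : Matrix (Fin (N * g')) (Fin (N * g)) ℂ | ‖Y‖ ≤ 1}) := by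
      rw [tendsto_nhdsWithin_iff]
      exact ⟨hg, eventually_nhdsWithin_of_forall hmem⟩
    have hfX : Filter.Tendsto (fun r : ℝ => f ((r:ℂ) • X))
        (nhdsWithin (1:ℝ) (Set.Ico 0 1)) (nhds (f X)) :=
      (hc X hX).tendsto.comp hg2
    exact le_of_tendsto hfX.norm (eventually_nhdsWithin_of_forall hmain)
end

section
/- Fix N, g', g, d', d ∈ ℕ with g' ≥ g, and let B denote the closed unit ball {X ∈ ℂ^{Ng'×Ng} : ‖X‖ ≤ 1} in the operator norm. Let f: B → ℂ^{d'×d} be continuous on B and holomorphic (complex differentiable) on the open ball {‖X‖ < 1}. If f(X) = 0 for every X ∈ B with X*X = I_{Ng} (i.e., f vanishes on all isometries in B), then f vanishes identically on B. -/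
open scoped Matrix.Norms.L2Operator
open Matrix

/-! ### Scalar Blaschke factors -/

noncomputable def blas (s : ℝ) (z : ℂ) : ℂ := (z + s) / (1 + s * z)

lemma blas_den_ne (s : ℝ) (hs0 : 0 ≤ s) (hs1 : s < 1) {z : ℂ} (hz : ‖z‖ ≤ 1) :
    (1 : ℂ) + s * z ≠ 0 := by
  intro h
  have h1 : (s : ℂ) * z = -1 := by linear_combination h
  have h2 : ‖(s : ℂ) * z‖ = 1 := by rw [h1]; simp
  rw [norm_mul, Complex.norm_real, Real.norm_eq_abs, abs_of_nonneg hs0] at h2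
  nlinarith [norm_nonneg z]

lemma blas_norm_sq (s : ℝ) (z : ℂ) :
    Complex.normSq (1 + s * z) - Complex.normSq (z + s) = (1 - s ^ 2) * (1 - Complex.normSq z) := by
  simp only [Complex.normSq_apply, Complex.add_re, Complex.add_im, Complex.mul_re, Complex.mul_im,
    Complex.ofReal_re, Complex.ofReal_im, Complex.one_re, Complex.one_im]
  ring

lemma norm_lt_of_normSq (w u : ℂ) (h : Complex.normSq w < Complex.normSq u) : ‖w‖ < ‖u‖ := by
  rw [Complex.norm_def, Complex.norm_def]
  exact Real.sqrt_lt_sqrt (Complex.normSq_nonneg _) h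

lemma norm_le_of_normSq (w u : ℂ) (h : Complex.normSq w ≤ Complex.normSq u) : ‖w‖ ≤ ‖u‖ := by
  rw [Complex.norm_def, Complex.norm_def]
  exact Real.sqrt_le_sqrt h

lemma normSq_eq_norm_sq (z : ℂ) : Complex.normSq z = ‖z‖ ^ 2 := by
  rw [Complex.sq_norm]

lemma blas_norm_lt (s : ℝ) (hs0 : 0 ≤ s) (hs1 : s < 1) {z : ℂ} (hz : ‖z‖ < 1) :
    ‖blas s z‖ < 1 := by
  have hden := blas_den_ne s hs0 hs1 hz.le
  have hpos : 0 < ‖(1 : ℂ) + s * z‖ := norm_pos_iff.mpr hden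
  rw [blas, norm_div, div_lt_one hpos]
  apply norm_lt_of_normSq
  have := blas_norm_sq s z
  have h2 : Complex.normSq z < 1 := by
    rw [normSq_eq_norm_sq]; nlinarith [norm_nonneg z]
  nlinarith [mul_pos (by nlinarith : (0:ℝ) < 1 - s ^ 2)
    (by linarith : (0:ℝ) < 1 - Complex.normSq z)]

lemma blas_norm_le (s : ℝ) (hs0 : 0 ≤ s) (hs1 : s < 1) {z : ℂ} (hz : ‖z‖ ≤ 1) :
    ‖blas s z‖ ≤ 1 := by
  have hden := blas_den_ne s hs0 hs1 hz
  have hpos : 0 < ‖(1 : ℂ) + s * z‖ := norm_pos_iff.mpr hden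
  rw [blas, norm_div, div_le_one hpos]
  apply norm_le_of_normSq
  have := blas_norm_sq s z
  have h2 : Complex.normSq z ≤ 1 := by
    rw [normSq_eq_norm_sq]; nlinarith [norm_nonneg z]
  nlinarith [mul_nonneg (by nlinarith : (0:ℝ) ≤ 1 - s ^ 2)
    (by linarith : (0:ℝ) ≤ 1 - Complex.normSq z)]

lemma blas_conj_mul (s : ℝ) (hs0 : 0 ≤ s) (hs1 : s < 1) {z : ℂ} (hz : ‖z‖ = 1) :
    (starRingEnd ℂ) (blas s z) * blas s z = 1 := by
  have hden := blas_den_ne s hs0 hs1 hz.le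
  have key : Complex.normSq (z + s) = Complex.normSq (1 + s * z) := by
    have := blas_norm_sq s z
    have h2 : Complex.normSq z = 1 := by rw [normSq_eq_norm_sq, hz]; norm_num
    nlinarith
  have hpos : 0 < ‖(1 : ℂ) + s * z‖ := norm_pos_iff.mpr hden
  have hnorm : ‖z + (s:ℂ)‖ = ‖(1:ℂ) + s * z‖ := by
    rw [Complex.norm_def, Complex.norm_def, key]
  rw [Complex.conj_mul', blas, norm_div, hnorm, div_self (ne_of_gt hpos)]
  norm_num

lemma blas_zero (s : ℝ) : blas s 0 = s := by simp [blas]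

lemma blas_diff (s : ℝ) {z : ℂ} (h : (1:ℂ) + s * z ≠ 0) : DifferentiableAt ℂ (blas s) z := by
  unfold blas
  exact DifferentiableAt.div (by fun_prop) (by fun_prop) h

/-! ### Operator norm helpers -/

lemma l2_opNorm_le_bound {m n : Type*} [Fintype m] [Fintype n] [DecidableEq n]
    (A : Matrix m n ℂ) {C : ℝ} (hC : 0 ≤ C)
    (h : ∀ x : EuclideanSpace ℂ n, ‖(EuclideanSpace.equiv m ℂ).symm (A *ᵥ x)‖ ≤ C * ‖x‖) :
    ‖A‖ ≤ C := by
  rw [Matrix.l2_opNorm_def]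
  exact ContinuousLinearMap.opNorm_le_bound _ hC h

lemma l2_opNorm_diagonal_le {n : Type*} [Fintype n] [DecidableEq n]
    (v : n → ℂ) {C : ℝ} (hC : 0 ≤ C) (h : ∀ i, ‖v i‖ ≤ C) :
    ‖Matrix.diagonal v‖ ≤ C := by
  refine l2_opNorm_le_bound _ hC fun x => ?_
  rw [EuclideanSpace.norm_eq, EuclideanSpace.norm_eq]
  have hx : ∀ i, ((EuclideanSpace.equiv n ℂ).symm ((Matrix.diagonal v) *ᵥ x)) i = v i * x i := by
    intro i; simp [Matrix.mulVec_diagonal]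
  rw [← Real.sqrt_sq hC, ← Real.sqrt_mul (sq_nonneg C)]
  apply Real.sqrt_le_sqrt
  rw [Finset.mul_sum]
  refine Finset.sum_le_sum fun i _ => ?_
  rw [hx i, norm_mul]
  calc (‖v i‖ * ‖x i‖) ^ 2 = ‖v i‖ ^ 2 * ‖x i‖ ^ 2 := by ring
    _ ≤ C ^ 2 * ‖x i‖ ^ 2 :=
      mul_le_mul_of_nonneg_right (pow_le_pow_left₀ (norm_nonneg _) (h i) 2) (sq_nonneg _)

lemma l2_opNorm_one {n : Type*} [Fintype n] [DecidableEq n] [Nonempty n] :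
    ‖(1 : Matrix n n ℂ)‖ = 1 := by
  have : Nontrivial (EuclideanSpace ℂ n) := (EuclideanSpace.equiv n ℂ).toEquiv.nontrivial
  rw [Matrix.cstar_norm_def, _root_.map_one]
  exact ContinuousLinearMap.norm_id

lemma l2_opNorm_eq_one_of_isometry {m n : Type*} [Fintype m] [Fintype n] [DecidableEq m]
    [DecidableEq n] [Nonempty n] (M : Matrix m n ℂ) (h : Mᴴ * M = 1) : ‖M‖ = 1 := by
  have h2 := Matrix.l2_opNorm_conjTranspose_mul_self M
  rw [h, l2_opNorm_one] at h2
  nlinarith [norm_nonneg M]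

/-! ### Eigenvalue bounds -/

lemma star_dot_self_eq (m : Type*) [Fintype m] (w : m → ℂ) :
    star w ⬝ᵥ w = ((‖(EuclideanSpace.equiv m ℂ).symm w‖ ^ 2 : ℝ) : ℂ) := by
  rw [EuclideanSpace.norm_eq, Real.sq_sqrt (by positivity)]
  push_cast
  simp [dotProduct, Complex.conj_mul']

lemma eig_bounds {m n : Type*} [Fintype m] [Fintype n] [DecidableEq m] [DecidableEq n]
    (X : Matrix m n ℂ) (hX : ‖X‖ < 1) (hinj : Function.Injective X.mulVec)
    (hH : (Xᴴ * X).IsHermitian) (i : n) :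
    0 < hH.eigenvalues i ∧ hH.eigenvalues i < 1 := by
  set v : n → ℂ := ⇑(hH.eigenvectorBasis i) with hv
  have hnorm1 : ‖hH.eigenvectorBasis i‖ = 1 := hH.eigenvectorBasis.orthonormal.1 i
  have hkey : (((hH.eigenvalues i : ℝ)) : ℂ) =
      ((‖(EuclideanSpace.equiv m ℂ).symm (X *ᵥ v)‖ ^ 2 : ℝ) : ℂ) := by
    have h1 := hH.eigenvalues_eq i
    have h2 : star v ⬝ᵥ ((Xᴴ * X) *ᵥ v) = star (X *ᵥ v) ⬝ᵥ (X *ᵥ v) := by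
      rw [← Matrix.mulVec_mulVec, Matrix.dotProduct_mulVec, ← Matrix.star_mulVec]
    rw [star_dot_self_eq] at h2
    rw [h1, ← hv, h2]
    rw [RCLike.re_to_complex, Complex.ofReal_re]
  have hkeyR : hH.eigenvalues i = ‖(EuclideanSpace.equiv m ℂ).symm (X *ᵥ v)‖ ^ 2 := by
    exact_mod_cast hkey
  constructor
  · rw [hkeyR]
    have hvne : v ≠ 0 := by
      intro h0
      have : hH.eigenvectorBasis i = 0 := by
        apply (WithLp.equiv 2 (n → ℂ)).injective
        simpa [hv] using h0
      rw [this, norm_zero] at hnorm1; norm_num at hnorm1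
    have hwne : X *ᵥ v ≠ 0 := by
      intro h0
      exact hvne (hinj (by simpa [Matrix.mulVec_zero] using h0))
    have : (EuclideanSpace.equiv m ℂ).symm (X *ᵥ v) ≠ 0 := by
      intro h0
      apply hwne
      simpa using congrArg (EuclideanSpace.equiv m ℂ) h0
    have hpos : 0 < ‖(EuclideanSpace.equiv m ℂ).symm (X *ᵥ v)‖ := norm_pos_iff.mpr this
    positivity
  · rw [hkeyR]
    have hle : ‖(EuclideanSpace.equiv m ℂ).symm (X *ᵥ v)‖ ≤ ‖X‖ * ‖hH.eigenvectorBasis i‖ :=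
      Matrix.l2_opNorm_mulVec X (hH.eigenvectorBasis i)
    rw [hnorm1, mul_one] at hle
    have h0 : (0:ℝ) ≤ ‖(EuclideanSpace.equiv m ℂ).symm (X *ᵥ v)‖ := norm_nonneg _
    have hXnn : (0:ℝ) ≤ ‖X‖ := norm_nonneg _
    nlinarith

/-! ### Sandwich matrices -/

lemma diagonal_eq_sum {n : Type*} [Fintype n] [DecidableEq n] (v : n → ℂ) :
    Matrix.diagonal v = ∑ i, v i • Matrix.single i i 1 := by
  ext a b
  simp only [Matrix.sum_apply, Matrix.smul_apply, Matrix.single, Matrix.diagonal_apply,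
    smul_eq_mul, Matrix.of_apply]
  by_cases h : a = b
  · subst h
    rw [Finset.sum_eq_single a]
    · simp
    · intro b _ hba
      simp
      intro h
      exact absurd h hba
    · simp
  · rw [if_neg h, Finset.sum_eq_zero]
    intro i _
    by_cases h1 : i = a <;> by_cases h2 : i = b <;> simp_all

noncomputable def sandw {n : Type*} [Fintype n] [DecidableEq n]
    (W : Matrix n n ℂ) (v : n → ℂ) : Matrix n n ℂ :=
  W * Matrix.diagonal v * Wᴴ

section Sandw

variable {n : Type*} [Fintype n] [DecidableEq n] {W : Matrix n n ℂ}

lemma sandw_mul (hW : Wᴴ * W = 1) (u v : n → ℂ) :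
    sandw W u * sandw W v = sandw W (u * v) := by
  unfold sandw
  have h : (W * Matrix.diagonal u * Wᴴ) * (W * Matrix.diagonal v * Wᴴ)
      = W * (Matrix.diagonal u * ((Wᴴ * W) * Matrix.diagonal v)) * Wᴴ := by
    noncomm_ring
  rw [h, hW, one_mul, Matrix.diagonal_mul_diagonal]
  rfl

lemma sandw_one (hW2 : W * Wᴴ = 1) : sandw W 1 = 1 := by
  unfold sandw
  have h1 : Matrix.diagonal (1 : n → ℂ) = 1 := Matrix.diagonal_one
  rw [h1, Matrix.mul_one, hW2]

lemma sandw_star (v : n → ℂ) : (sandw W v)ᴴ = sandw W (star v) := by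
  unfold sandw
  rw [Matrix.conjTranspose_mul, Matrix.conjTranspose_mul, Matrix.conjTranspose_conjTranspose,
    Matrix.diagonal_conjTranspose, ← Matrix.mul_assoc]

lemma sandw_norm_le [Nonempty n] (hW : Wᴴ * W = 1) (v : n → ℂ) {C : ℝ} (hC : 0 ≤ C)
    (h : ∀ i, ‖v i‖ ≤ C) : ‖sandw W v‖ ≤ C := by
  have hnW : ‖W‖ = 1 := l2_opNorm_eq_one_of_isometry W hW
  have hnWH : ‖Wᴴ‖ = 1 := by rw [Matrix.l2_opNorm_conjTranspose, hnW]
  calc ‖sandw W v‖ ≤ ‖W * Matrix.diagonal v‖ * ‖Wᴴ‖ := Matrix.l2_opNorm_mul _ _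
    _ ≤ (‖W‖ * ‖Matrix.diagonal v‖) * ‖Wᴴ‖ :=
        mul_le_mul_of_nonneg_right (Matrix.l2_opNorm_mul _ _) (norm_nonneg _)
    _ = ‖Matrix.diagonal v‖ := by rw [hnW, hnWH, one_mul, mul_one]
    _ ≤ C := l2_opNorm_diagonal_le v hC h

lemma mul_sandw_sum {m : Type*} [Fintype m] (V : Matrix m n ℂ) (v : n → ℂ) :
    V * sandw W v = ∑ i, v i • (V * W * Matrix.single i i (1:ℂ) * Wᴴ) := by
  unfold sandw
  rw [diagonal_eq_sum]
  rw [Matrix.mul_sum, Matrix.sum_mul, Matrix.mul_sum]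
  refine Finset.sum_congr rfl fun i _ => ?_
  rw [Matrix.mul_smul, Matrix.smul_mul, Matrix.mul_smul, Matrix.mul_assoc, Matrix.mul_assoc,
    Matrix.mul_assoc]

end Sandw

/-! ### Key lemma: vanishing on the interior for injective matrices -/

lemma vanish_interior_of_injective
    {m n : Type*} [Fintype m] [Fintype n] [DecidableEq m] [DecidableEq n] [Nonempty n]
    {d' d : ℕ}
    (f : Matrix m n ℂ → Matrix (Fin d') (Fin d) ℂ)
    (hc : ContinuousOn f {X | ‖X‖ ≤ 1})
    (hdiff : DifferentiableOn ℂ f {X | ‖X‖ < 1})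
    (hvanish : ∀ X : Matrix m n ℂ, ‖X‖ ≤ 1 → Xᴴ * X = 1 → f X = 0)
    (X : Matrix m n ℂ) (hX : ‖X‖ < 1) (hinj : Function.Injective X.mulVec) :
    f X = 0 := by
  classical
  have hH : (Xᴴ * X).IsHermitian := Matrix.isHermitian_conjTranspose_mul_self X
  set μ : n → ℝ := hH.eigenvalues with hμdef
  have hμ : ∀ i, 0 < μ i ∧ μ i < 1 := fun i => eig_bounds X hX hinj hH i
  set s : n → ℝ := fun i => Real.sqrt (μ i) with hsdef
  have hs0 : ∀ i, 0 < s i := fun i => Real.sqrt_pos.mpr (hμ i).1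
  have hs1 : ∀ i, s i < 1 := by
    intro i
    calc s i < Real.sqrt 1 := Real.sqrt_lt_sqrt (hμ i).1.le (hμ i).2
      _ = 1 := Real.sqrt_one
  have hssq : ∀ i, s i * s i = μ i := fun i => Real.mul_self_sqrt (hμ i).1.le
  set W : Matrix n n ℂ := (Matrix.IsHermitian.eigenvectorUnitary hH : Matrix n n ℂ) with hWdef
  have hW1 : Wᴴ * W = 1 := by
    rw [← Matrix.star_eq_conjTranspose]
    exact Matrix.mem_unitaryGroup_iff'.mp (Matrix.IsHermitian.eigenvectorUnitary hH).2
  have hW2 : W * Wᴴ = 1 := by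
    rw [← Matrix.star_eq_conjTranspose]
    exact Matrix.mem_unitaryGroup_iff.mp (Matrix.IsHermitian.eigenvectorUnitary hH).2
  have hXX : Xᴴ * X = sandw W (fun i => ((μ i : ℝ) : ℂ)) := by
    have h1 := hH.spectral_theorem
    rw [Unitary.conjStarAlgAut_apply, Matrix.star_eq_conjTranspose] at h1
    exact h1
  -- the partial isometry
  set V : Matrix m n ℂ := X * sandw W (fun i => ((s i : ℝ) : ℂ)⁻¹) with hVdef
  have hVV : Vᴴ * V = 1 := by
    rw [hVdef, Matrix.conjTranspose_mul, sandw_star]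
    rw [Matrix.mul_assoc, ← Matrix.mul_assoc Xᴴ X _, hXX, sandw_mul hW1, sandw_mul hW1]
    rw [show (star (fun i => ((s i : ℝ) : ℂ)⁻¹) * ((fun i => ((μ i : ℝ) : ℂ)) *
        (fun i => ((s i : ℝ) : ℂ)⁻¹))) = 1 by
      funext i
      simp only [Pi.mul_apply, Pi.star_apply, Pi.one_apply, star_inv₀]
      rw [Complex.star_def, Complex.conj_ofReal]
      have hne : ((s i : ℝ) : ℂ) ≠ 0 := by
        exact_mod_cast Complex.ofReal_ne_zero.mpr (hs0 i).ne'
      field_simp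
      rw [← hssq i]
      push_cast
      ring]
    exact sandw_one hW2
  -- the analytic family
  set b : n → ℂ → ℂ := fun i z => blas (s i) z with hbdef
  set Y : ℂ → Matrix m n ℂ :=
    fun z => ∑ i, b i z • (V * W * Matrix.single i i (1:ℂ) * Wᴴ) with hYdef
  have hYeq : ∀ z, Y z = V * sandw W (fun i => b i z) := by
    intro z
    rw [hYdef, mul_sandw_sum]
  have hden : ∀ i (z : ℂ), ‖z‖ ≤ 1 → (1:ℂ) + (s i) * z ≠ 0 :=
    fun i z hz => blas_den_ne (s i) (hs0 i).le (hs1 i) hz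
  have hYnorm : ∀ (z : ℂ) (C : ℝ), 0 ≤ C → (∀ i, ‖b i z‖ ≤ C) → ‖Y z‖ ≤ C := by
    intro z C hC hbC
    rw [hYeq]
    have hnV : ‖V‖ = 1 := l2_opNorm_eq_one_of_isometry V hVV
    calc ‖V * sandw W (fun i => b i z)‖ ≤ ‖V‖ * ‖sandw W (fun i => b i z)‖ :=
          Matrix.l2_opNorm_mul _ _
      _ = ‖sandw W (fun i => b i z)‖ := by rw [hnV, one_mul]
      _ ≤ C := sandw_norm_le hW1 _ hC hbC
  have hYlt : ∀ z : ℂ, ‖z‖ < 1 → ‖Y z‖ < 1 := by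
    intro z hz
    obtain ⟨i₀⟩ := ‹Nonempty n›
    set C : ℝ := Finset.univ.sup' Finset.univ_nonempty (fun i => ‖b i z‖) with hCdef
    have hC1 : C < 1 := by
      rw [hCdef, Finset.sup'_lt_iff]
      exact fun i _ => blas_norm_lt (s i) (hs0 i).le (hs1 i) hz
    have hC0 : 0 ≤ C := le_trans (norm_nonneg (b i₀ z)) (Finset.le_sup' (fun i => ‖b i z‖) (Finset.mem_univ i₀))
    exact lt_of_le_of_lt (hYnorm z C hC0 fun i =>
      Finset.le_sup' (fun i => ‖b i z‖) (Finset.mem_univ i)) hC1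
  have hYle : ∀ z : ℂ, ‖z‖ ≤ 1 → ‖Y z‖ ≤ 1 := fun z hz =>
    hYnorm z 1 one_pos.le fun i => blas_norm_le (s i) (hs0 i).le (hs1 i) hz
  have hYiso : ∀ z : ℂ, ‖z‖ = 1 → (Y z)ᴴ * Y z = 1 := by
    intro z hz
    rw [hYeq, Matrix.conjTranspose_mul, sandw_star, Matrix.mul_assoc,
      ← Matrix.mul_assoc Vᴴ V _, hVV, Matrix.one_mul, sandw_mul hW1]
    rw [show (star (fun i => b i z) * (fun i => b i z)) = 1 by
      funext i
      simp only [Pi.mul_apply, Pi.star_apply, Pi.one_apply, Complex.star_def]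
      exact blas_conj_mul (s i) (hs0 i).le (hs1 i) hz]
    exact sandw_one hW2
  have hY0 : Y 0 = X := by
    rw [hYeq]
    have hb0 : (fun i => b i 0) = fun i => ((s i : ℝ) : ℂ) := by
      funext i; rw [hbdef]; exact blas_zero (s i)
    rw [hb0, hVdef, Matrix.mul_assoc, sandw_mul hW1]
    rw [show ((fun i => ((s i : ℝ) : ℂ)⁻¹) * (fun i => ((s i : ℝ) : ℂ))) = 1 by
      funext i
      simp only [Pi.mul_apply, Pi.one_apply]
      have hne : ((s i : ℝ) : ℂ) ≠ 0 := Complex.ofReal_ne_zero.mpr (hs0 i).ne'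
      field_simp]
    rw [sandw_one hW2, Matrix.mul_one]
  have hYdiffAt : ∀ z : ℂ, ‖z‖ ≤ 1 → DifferentiableAt ℂ Y z := by
    intro z hz
    rw [hYdef]
    apply DifferentiableAt.fun_sum
    intro i _
    exact (blas_diff (s i) (hden i z hz)).smul_const _
  have hopen : IsOpen {M : Matrix m n ℂ | ‖M‖ < 1} := isOpen_lt continuous_norm continuous_const
  have hFdiffAt : ∀ z : ℂ, ‖z‖ < 1 → DifferentiableAt ℂ (fun w => f (Y w)) z := by
    intro z hz
    exact (hdiff.differentiableAt (hopen.mem_nhds (hYlt z hz))).comp z (hYdiffAt z hz.le)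
  have hFcont : ContinuousOn (fun w => f (Y w)) (Metric.closedBall (0:ℂ) 1) := by
    intro z hz
    rw [Metric.mem_closedBall, dist_zero_right] at hz
    refine ContinuousWithinAt.comp (hc (Y z) (hYle z hz)) 
      ((hYdiffAt z hz).continuousAt.continuousWithinAt) ?_
    intro w hw
    rw [Metric.mem_closedBall, dist_zero_right] at hw
    exact hYle w hw
  -- entrywise maximum modulus principle
  ext i0 j0
  have hzero : ∀ i0 j0, f X i0 j0 = 0 := by
    intro i0 j0
    set eC : Matrix (Fin d') (Fin d) ℂ →L[ℂ] ℂ :=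
      LinearMap.toContinuousLinearMap (Matrix.entryLinearMap ℂ ℂ i0 j0) with heCdef
    have hDCC : DiffContOnCl ℂ (fun z => eC (f (Y z))) (Metric.ball (0:ℂ) 1) := by
      constructor
      · intro z hz
        rw [Metric.mem_ball, dist_zero_right] at hz
        exact (eC.differentiable.differentiableAt.comp z (hFdiffAt z hz)).differentiableWithinAt
      · rw [closure_ball (0:ℂ) one_ne_zero]
        exact eC.continuous.comp_continuousOn hFcont
    have hb : ∀ z ∈ frontier (Metric.ball (0:ℂ) 1), ‖eC (f (Y z))‖ ≤ 0 := by
      rw [frontier_ball (0:ℂ) one_ne_zero]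
      intro z hz
      rw [mem_sphere_zero_iff_norm] at hz
      rw [hvanish (Y z) (hYle z hz.le) (hYiso z hz)]
      simp
    have h0 := Complex.norm_le_of_forall_mem_frontier_norm_le Metric.isBounded_ball hDCC hb
      (subset_closure (Metric.mem_ball_self one_pos))
    have : eC (f (Y 0)) = 0 := norm_le_zero_iff.mp h0
    rw [hY0] at this
    simpa [heCdef, LinearMap.coe_toContinuousLinearMap'] using this
  rw [hzero i0 j0]
  simp

/-! ### Density of injective contractions -/

lemma exists_small_nonroot (p : Polynomial ℂ) (hp : p ≠ 0) (δ : ℝ) (hδ : 0 < δ) :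
    ∃ t : ℝ, 0 < t ∧ t < δ ∧ p.eval (t : ℂ) ≠ 0 := by
  by_contra h
  push_neg at h
  have hsub : (fun t : ℝ => (t : ℂ)) '' (Set.Ioo 0 δ) ⊆ {z : ℂ | p.IsRoot z} := by
    rintro z ⟨t, ⟨ht0, htδ⟩, rfl⟩
    exact h t ht0 htδ
  have hinf : ((fun t : ℝ => (t : ℂ)) '' (Set.Ioo 0 δ)).Infinite :=
    (Set.Ioo_infinite hδ).image (fun a _ b _ hab => Complex.ofReal_injective hab)
  exact (Polynomial.finite_setOf_isRoot hp).subset hsub |>.not_infinite hinf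

lemma charpoly_eval_det {n : Type*} [Fintype n] [DecidableEq n] (A : Matrix n n ℂ) (t : ℂ) :
    ((-A).charpoly).eval t = (t • (1 : Matrix n n ℂ) + A).det := by
  rw [Matrix.charpoly]
  rw [show Polynomial.eval t ((Matrix.charmatrix (-A)).det)
      = (Polynomial.evalRingHom t) ((Matrix.charmatrix (-A)).det) from rfl]
  rw [RingHom.map_det]
  congr 1
  ext i j
  simp only [Matrix.map_apply, Matrix.charmatrix_apply, Matrix.neg_apply, Matrix.add_apply,
    Matrix.smul_apply, Matrix.one_apply, Matrix.diagonal_apply, map_sub, Polynomial.eval_sub,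
    Polynomial.coe_evalRingHom, Polynomial.eval_C, smul_eq_mul]
  by_cases hij : i = j <;> simp [hij, Polynomial.eval_X]

/-! ### The main theorem -/

/-- If `g' ≥ g` and `f` is continuous on the closed unit ball of `ℂ^{Ng'×Ng}`,
holomorphic on its interior, and vanishes on all isometries in the ball, then `f`
vanishes identically on the ball. -/
theorem eq_zero_of_vanishing_on_isometries (N g' g d' d : ℕ) (hgg : g ≤ g')
    (f : Matrix (Fin (N * g')) (Fin (N * g)) ℂ → Matrix (Fin d') (Fin d) ℂ)
    (hc : ContinuousOn f {X | ‖X‖ ≤ 1})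
    (hdiff : DifferentiableOn ℂ f {X | ‖X‖ < 1})
    (hvanish : ∀ X : Matrix (Fin (N * g')) (Fin (N * g)) ℂ, ‖X‖ ≤ 1 → Xᴴ * X = 1 → f X = 0) :
    ∀ X : Matrix (Fin (N * g')) (Fin (N * g)) ℂ, ‖X‖ ≤ 1 → f X = 0 := by
  classical
  by_cases hng : N * g = 0
  · intro X hX
    apply hvanish X hX
    have : IsEmpty (Fin (N * g)) := by rw [hng]; infer_instance
    exact Subsingleton.elim _ _
  have hne : Nonempty (Fin (N * g)) := ⟨⟨0, Nat.pos_of_ne_zero hng⟩⟩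
  have hle : N * g ≤ N * g' := Nat.mul_le_mul_left N hgg
  -- Step 2 : vanishing on the open ball
  have step2 : ∀ X : Matrix (Fin (N * g')) (Fin (N * g)) ℂ, ‖X‖ < 1 → f X = 0 := by
    intro X hX
    set E : Matrix (Fin (N * g')) (Fin (N * g)) ℂ :=
      Matrix.of (fun i j => if (i : ℕ) = (j : ℕ) then 1 else 0) with hEdef
    set A : Matrix (Fin (N * g)) (Fin (N * g)) ℂ :=
      Matrix.of (fun i j => X (Fin.castLE hle i) j) with hAdef
    set D : Set (Matrix (Fin (N * g')) (Fin (N * g)) ℂ) :=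
      {M | ‖M‖ < 1 ∧ Function.Injective M.mulVec} with hDdef
    have hp : (-A).charpoly ≠ 0 := ((-A).charpoly_monic).ne_zero
    -- X is in the closure of D
    have hXclos : X ∈ closure D := by
      rw [Metric.mem_closure_iff]
      intro ε hε
      set B : ℝ := ‖E‖ + 1 with hBdef
      have hB : 0 < B := by positivity
      set δ : ℝ := min (ε / B) ((1 - ‖X‖) / B) with hδdef
      have hδ : 0 < δ := lt_min (by positivity) (by
        have : 0 < 1 - ‖X‖ := by linarith
        positivity)
      obtain ⟨t, ht0, htδ, hroot⟩ := exists_small_nonroot _ hp δ hδ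
      refine ⟨X + (t : ℂ) • E, ⟨?_, ?_⟩, ?_⟩
      · -- norm less than one
        have h1 : ‖(t : ℂ) • E‖ = t * ‖E‖ := by
          rw [norm_smul, Complex.norm_real, Real.norm_eq_abs, abs_of_pos ht0]
        have h2 : t * ‖E‖ < 1 - ‖X‖ := by
          have htlt : t < (1 - ‖X‖) / B := lt_of_lt_of_le htδ (min_le_right _ _)
          have : t * B < 1 - ‖X‖ := by
            rw [← div_mul_cancel₀ (1 - ‖X‖) hB.ne']
            exact mul_lt_mul_of_pos_right htlt hB
          nlinarith [norm_nonneg E]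
        calc ‖X + (t : ℂ) • E‖ ≤ ‖X‖ + ‖(t : ℂ) • E‖ := norm_add_le _ _
          _ < 1 := by rw [h1]; linarith
      · -- injectivity
        have hdet : ((t : ℂ) • (1 : Matrix (Fin (N * g)) (Fin (N * g)) ℂ) + A).det ≠ 0 := by
          rw [← charpoly_eval_det]; exact hroot
        intro a b hab
        have hsub : (X + (t : ℂ) • E) *ᵥ (a - b) = 0 := by
          rw [Matrix.mulVec_sub, hab, sub_self]
        have hrow : ((t : ℂ) • (1 : Matrix (Fin (N * g)) (Fin (N * g)) ℂ) + A) *ᵥ (a - b) = 0 := by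
          funext i
          have := congrFun hsub (Fin.castLE hle i)
          simp only [Matrix.mulVec, dotProduct, Matrix.add_apply, Matrix.smul_apply,
            Matrix.one_apply, Matrix.of_apply, Pi.zero_apply, smul_eq_mul, hEdef, hAdef] at this ⊢
          refine Eq.trans ?_ this
          apply Finset.sum_congr rfl
          intro j _
          have hcast : ((Fin.castLE hle i : Fin (N * g')) : ℕ) = (j : ℕ) ↔ i = j := by
            rw [Fin.coe_castLE]
            exact ⟨fun h => Fin.ext h, fun h => by rw [h]⟩
          by_cases hij : i = j
          · rw [if_pos hij, if_pos (hcast.mpr hij)]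
            ring
          · rw [if_neg hij, if_neg (fun h => hij (hcast.mp h))]
            ring
        have := Matrix.eq_zero_of_mulVec_eq_zero hdet hrow
        exact sub_eq_zero.mp this
      · -- distance small
        rw [dist_comm, dist_eq_norm, add_sub_cancel_left]
        have h1 : ‖(t : ℂ) • E‖ = t * ‖E‖ := by
          rw [norm_smul, Complex.norm_real, Real.norm_eq_abs, abs_of_pos ht0]
        have htlt : t < ε / B := lt_of_lt_of_le htδ (min_le_left _ _)
        have : t * B < ε := by
          rw [← div_mul_cancel₀ ε hB.ne']
          exact mul_lt_mul_of_pos_right htlt hB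
        rw [h1]
        nlinarith [norm_nonneg E]
    -- conclude by continuity
    have hDzero : ∀ M ∈ D, f M = 0 := fun M hM =>
      vanish_interior_of_injective f hc hdiff hvanish M hM.1 hM.2
    have hcw : ContinuousWithinAt f D X := by
      refine (hc.continuousWithinAt ?_).mono ?_
      · exact le_of_lt hX
      · intro M hM; exact le_of_lt hM.1
    have hne2 : (nhdsWithin X D).NeBot := mem_closure_iff_nhdsWithin_neBot.mp hXclos
    have h2 : Filter.Tendsto f (nhdsWithin X D) (nhds 0) := by
      refine Filter.Tendsto.congr' ?_ tendsto_const_nhds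
      filter_upwards [self_mem_nhdsWithin] with M hM
      exact (hDzero M hM).symm
    exact tendsto_nhds_unique hcw h2
  -- Step 3 : extend to the closed ball by continuity
  intro X hX
  have hXclos : X ∈ closure (Metric.ball (0 : Matrix (Fin (N * g')) (Fin (N * g)) ℂ) 1) := by
    rw [closure_ball (0 : Matrix (Fin (N * g')) (Fin (N * g)) ℂ) one_ne_zero,
      Metric.mem_closedBall, dist_zero_right]
    exact hX
  have hcw : ContinuousWithinAt f (Metric.ball 0 1) X := by
    refine (hc.continuousWithinAt hX).mono ?_
    intro M hM
    rw [Metric.mem_ball, dist_zero_right] at hM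
    exact le_of_lt hM
  have hne2 : (nhdsWithin X (Metric.ball (0 : Matrix (Fin (N * g')) (Fin (N * g)) ℂ) 1)).NeBot :=
    mem_closure_iff_nhdsWithin_neBot.mp hXclos
  have h2 : Filter.Tendsto f (nhdsWithin X (Metric.ball 0 1)) (nhds 0) := by
    refine Filter.Tendsto.congr' ?_ tendsto_const_nhds
    filter_upwards [self_mem_nhdsWithin] with M hM
    rw [Metric.mem_ball, dist_zero_right] at hM
    exact (step2 M hM).symm
  exact tendsto_nhds_unique hcw h2
end
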